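/- arXiv:1510.04740 — 7 statements merged into one kernel-verified Lean document; each statement's English description precedes it below -/
import Mathlib

section
/- Suppose consistency holds (Y = A·Y¹ + (1−A)·Y⁰ almost surely), for a = 0,1 the treatment A and the potential outcome Yᵃ are conditionally independent given σ(L), positivity holds (δ ≤ π₀(L) ≤ 1−δ almost surely for some δ > 0), and Y⁰, Y¹ are integrable. Then the average causal effect is identified by the g-computation formula: E[Y¹ − Y⁰] = E[μ₀(L,1) − μ₀(L,0)]. -/
open MeasureTheory ProbabilityTheory MeasurableSpace Set

/-- Conditional independence implies factorization of the conditional expectation of a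
product, when one factor is bounded and the other integrable. -/
lemma condexp_mul_of_condIndepFun
    {Ω : Type*} {m' : MeasurableSpace Ω} [mΩ : MeasurableSpace Ω] [StandardBorelSpace Ω]
    [Nonempty Ω]
    (μ : Measure Ω) [IsProbabilityMeasure μ] (hm' : m' ≤ mΩ)
    {A X : Ω → ℝ} (hA : Measurable A) (hX : Measurable X)
    (hXint : Integrable X μ) (hAbd : ∀ ω, ‖A ω‖ ≤ 1)
    (hindep : CondIndepFun m' hm' A X μ) :
    μ[fun ω => A ω * X ω | m'] =ᵐ[μ] fun ω => (μ[A|m']) ω * (μ[X|m']) ω := by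
  set κ := condExpKernel (mΩ := mΩ) μ m' with hκ
  have hAint : Integrable A μ :=
    (integrable_const (1 : ℝ)).mono' hA.aestronglyMeasurable (ae_of_all _ hAbd)
  have hAXint : Integrable (fun ω => A ω * X ω) μ :=
    hXint.bdd_mul hA.aestronglyMeasurable (ae_of_all _ hAbd)
  -- a.e. ω, the measure `κ ω` makes `A` and `X` independent
  have hsets : ∀ᵐ ω ∂(μ.trim hm'), ∀ q r : ℚ,
      κ ω (A ⁻¹' Iic (q : ℝ) ∩ X ⁻¹' Iic (r : ℝ))
        = κ ω (A ⁻¹' Iic (q : ℝ)) * κ ω (X ⁻¹' Iic (r : ℝ)) := by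
    rw [ae_all_iff]
    intro q
    rw [ae_all_iff]
    intro r
    exact hindep _ _ ⟨Iic (q : ℝ), measurableSet_Iic, rfl⟩
      ⟨Iic (r : ℝ), measurableSet_Iic, rfl⟩
  have hae : ∀ᵐ ω ∂μ, IndepFun A X (κ ω) := by
    filter_upwards [ae_of_ae_trim hm' hsets] with ω hω
    have hgen1 : MeasurableSpace.comap A inferInstance
        = generateFrom (preimage A '' (⋃ a : ℚ, {Iic (a : ℝ)})) := by
      conv_lhs => rw [BorelSpace.measurable_eq (α := ℝ), Real.borel_eq_generateFrom_Iic_rat]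
      exact comap_generateFrom
    have hgen2 : MeasurableSpace.comap X inferInstance
        = generateFrom (preimage X '' (⋃ a : ℚ, {Iic (a : ℝ)})) := by
      conv_lhs => rw [BorelSpace.measurable_eq (α := ℝ), Real.borel_eq_generateFrom_Iic_rat]
      exact comap_generateFrom
    have hpi : IsPiSystem (⋃ a : ℚ, {Iic (a : ℝ)}) := Real.isPiSystem_Iic_rat
    have hpi1 : IsPiSystem (preimage A '' (⋃ a : ℚ, {Iic (a : ℝ)})) := by
      have := hpi.comap A
      convert this using 1
      rfl
    have hpi2 : IsPiSystem (preimage X '' (⋃ a : ℚ, {Iic (a : ℝ)})) := by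
      have := hpi.comap X
      convert this using 1
      rfl
    have hind : IndepSets (preimage A '' (⋃ a : ℚ, {Iic (a : ℝ)}))
        (preimage X '' (⋃ a : ℚ, {Iic (a : ℝ)})) (κ ω) := by
      rintro _ _ ⟨t1, ht1, rfl⟩ ⟨t2, ht2, rfl⟩
      simp only [mem_iUnion, mem_singleton_iff] at ht1 ht2
      obtain ⟨q, rfl⟩ := ht1
      obtain ⟨r, rfl⟩ := ht2
      exact ae_of_all _ fun _ => hω q r
    exact IndepSets.indep (μ := κ ω) hA.comap_le hX.comap_le hpi1 hpi2 hgen1 hgen2 hind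
  have h1 := condExp_ae_eq_integral_condExpKernel hm' hAXint
  have h2 := condExp_ae_eq_integral_condExpKernel hm' hAint
  have h3 := condExp_ae_eq_integral_condExpKernel hm' hXint
  filter_upwards [h1, h2, h3, hae] with ω e1 e2 e3 hind
  rw [e1, e2, e3]
  exact IndepFun.integral_mul_eq_mul_integral hind hA.aestronglyMeasurable hX.aestronglyMeasurable

/-- Under consistency, conditional ignorability for `a = 0,1`, positivity and
integrability, the average causal effect is identified by the g-computation formula:
`E[Y¹ − Y⁰] = E[μ₀(L,1) − μ₀(L,0)]`. -/
theorem g_computation_formula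
    {Ω 𝓛 : Type*} [MeasurableSpace Ω] [StandardBorelSpace Ω] [Nonempty Ω]
    [MeasurableSpace 𝓛]
    (P : Measure Ω) [IsProbabilityMeasure P]
    (L : Ω → 𝓛) (A Y Y0 Y1 : Ω → ℝ)
    (hL : Measurable L) (hA : Measurable A) (hY : Measurable Y)
    (hY0 : Measurable Y0) (hY1 : Measurable Y1)
    (hA01 : ∀ ω, A ω = 0 ∨ A ω = 1)
    -- consistency: Y = A·Y¹ + (1−A)·Y⁰ a.s.
    (hcons : ∀ᵐ ω ∂P, Y ω = A ω * Y1 ω + (1 - A ω) * Y0 ω)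
    -- A and Yᵃ are conditionally independent given σ(L), for a = 0, 1
    (hindep0 : CondIndepFun (MeasurableSpace.comap L inferInstance) hL.comap_le A Y0 P)
    (hindep1 : CondIndepFun (MeasurableSpace.comap L inferInstance) hL.comap_le A Y1 P)
    -- π₀(L) is a version of P(A = 1 ∣ σ(L))
    (π₀ : 𝓛 → ℝ) (hπ₀ : Measurable π₀) (hπ₀01 : ∀ l, 0 ≤ π₀ l ∧ π₀ l ≤ 1)
    (hps : P[(fun ω => if A ω = 1 then (1 : ℝ) else 0) |
        MeasurableSpace.comap L inferInstance] =ᵐ[P] fun ω => π₀ (L ω))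
    -- positivity: δ ≤ π₀(L) ≤ 1 − δ a.s. for some δ > 0
    (δ : ℝ) (hδ : 0 < δ) (hpos : ∀ᵐ ω ∂P, δ ≤ π₀ (L ω) ∧ π₀ (L ω) ≤ 1 - δ)
    -- integrability of the potential outcomes
    (hY0int : Integrable Y0 P) (hY1int : Integrable Y1 P)
    -- outcome regression: E[Y·1{A=a} ∣ σ(L)] = μ₀(L,a)·π₀ₐ(L) a.s. for a = 0, 1
    (μ₀ : 𝓛 → ℝ → ℝ) (hμ₀ : Measurable fun p : 𝓛 × ℝ => μ₀ p.1 p.2)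
    (hreg : ∀ a ∈ ({0, 1} : Set ℝ),
      P[(fun ω => Y ω * (if A ω = a then (1 : ℝ) else 0)) |
          MeasurableSpace.comap L inferInstance]
        =ᵐ[P] fun ω => μ₀ (L ω) a * (a * π₀ (L ω) + (1 - a) * (1 - π₀ (L ω)))) :
    ∫ ω, (Y1 ω - Y0 ω) ∂P = ∫ ω, (μ₀ (L ω) 1 - μ₀ (L ω) 0) ∂P := by
  have hm' : MeasurableSpace.comap L inferInstance ≤ _ := hL.comap_le
  have hAbd : ∀ ω, ‖A ω‖ ≤ 1 := fun ω => by rcases hA01 ω with h | h <;> simp [h]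
  have hAind : (fun ω => if A ω = 1 then (1 : ℝ) else 0) = A :=
    funext fun ω => by rcases hA01 ω with h | h <;> simp [h]
  have hπL : P[A | MeasurableSpace.comap L inferInstance] =ᵐ[P] fun ω => π₀ (L ω) := by
    rw [← hAind]; exact hps
  -- the treated arm
  have hmul1 := condexp_mul_of_condIndepFun P hm' hA hY1 hY1int hAbd hindep1
  have heq1 : (fun ω => Y ω * (if A ω = 1 then (1 : ℝ) else 0))
      =ᵐ[P] fun ω => A ω * Y1 ω := by
    filter_upwards [hcons] with ω hω
    rcases hA01 ω with h | h <;> simp [h, hω]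
  have hc1 : P[fun ω => A ω * Y1 ω | MeasurableSpace.comap L inferInstance]
      =ᵐ[P] fun ω => μ₀ (L ω) 1 * π₀ (L ω) := by
    refine (condExp_congr_ae heq1).symm.trans ((hreg 1 (by simp)).trans ?_)
    filter_upwards with ω
    ring
  have hcond1 : P[Y1 | MeasurableSpace.comap L inferInstance]
      =ᵐ[P] fun ω => μ₀ (L ω) 1 := by
    filter_upwards [hmul1, hc1, hπL, hpos] with ω h1 h2 h3 h4
    have hπpos : 0 < π₀ (L ω) := lt_of_lt_of_le hδ h4.1
    have h5 := h1.symm.trans h2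
    rw [h3] at h5
    exact mul_left_cancel₀ hπpos.ne' (h5.trans (mul_comm _ _))
  -- the control arm
  have hA' : Measurable fun ω => 1 - A ω := measurable_const.sub hA
  have hA'bd : ∀ ω, ‖1 - A ω‖ ≤ 1 := fun ω => by rcases hA01 ω with h | h <;> simp [h]
  have hindep0' : CondIndepFun (MeasurableSpace.comap L inferInstance) hL.comap_le
      (fun ω => 1 - A ω) Y0 P :=
    hindep0.comp (φ := fun x : ℝ => 1 - x) (ψ := id)
      (measurable_const.sub measurable_id) measurable_id
  have hmul0 := condexp_mul_of_condIndepFun P hm' hA' hY0 hY0int hA'bd hindep0'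
  have heq0 : (fun ω => Y ω * (if A ω = 0 then (1 : ℝ) else 0))
      =ᵐ[P] fun ω => (1 - A ω) * Y0 ω := by
    filter_upwards [hcons] with ω hω
    rcases hA01 ω with h | h <;> simp [h, hω]
  have hc0 : P[fun ω => (1 - A ω) * Y0 ω | MeasurableSpace.comap L inferInstance]
      =ᵐ[P] fun ω => μ₀ (L ω) 0 * (1 - π₀ (L ω)) := by
    refine (condExp_congr_ae heq0).symm.trans ((hreg 0 (by simp)).trans ?_)
    filter_upwards with ω
    ring
  have hAint : Integrable A P :=
    (integrable_const (1 : ℝ)).mono' hA.aestronglyMeasurable (ae_of_all _ hAbd)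
  have h1A : P[fun ω => 1 - A ω | MeasurableSpace.comap L inferInstance]
      =ᵐ[P] fun ω => 1 - π₀ (L ω) := by
    have hsub := condExp_sub (μ := P) (m := MeasurableSpace.comap L inferInstance)
      (integrable_const (1 : ℝ)) hAint
    have hconst := condExp_const (μ := P) hm' (1 : ℝ)
    refine hsub.trans ?_
    filter_upwards [hπL] with ω hω
    simp only [Pi.sub_apply, hconst, hω]
  have hcond0 : P[Y0 | MeasurableSpace.comap L inferInstance]
      =ᵐ[P] fun ω => μ₀ (L ω) 0 := by
    filter_upwards [hmul0, hc0, h1A, hpos] with ω h1 h2 h3 h4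
    have hπpos : 0 < 1 - π₀ (L ω) := by linarith [h4.2]
    have h5 := h1.symm.trans h2
    rw [h3] at h5
    exact mul_left_cancel₀ hπpos.ne' (h5.trans (mul_comm _ _))
  -- conclusion
  have hi1 : Integrable (fun ω => μ₀ (L ω) 1) P := integrable_condExp.congr hcond1
  have hi0 : Integrable (fun ω => μ₀ (L ω) 0) P := integrable_condExp.congr hcond0
  have hint1 : ∫ ω, Y1 ω ∂P = ∫ ω, μ₀ (L ω) 1 ∂P := by
    rw [← integral_condExp (μ := P) (f := Y1) hm']
    exact integral_congr_ae hcond1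
  have hint0 : ∫ ω, Y0 ω ∂P = ∫ ω, μ₀ (L ω) 0 ∂P := by
    rw [← integral_condExp (μ := P) (f := Y0) hm']
    exact integral_congr_ae hcond0
  rw [integral_sub hY1int hY0int, integral_sub hi1 hi0, hint1, hint0]
end

section
/- The map ε ↦ ψ(ε) is differentiable at ε = 0 with derivative ψ'(0) = E[φ(Z)·g(Z)], where φ(Z) = m₁(Z) − m₀(Z) − ψ(0) and mₐ(Z) = 1{A=a}·(Y − μ₀(L,a))/π₀ₐ(L) + μ₀(L,a). In other words, the centered doubly robust function φ satisfies the pathwise-derivative property of the efficient influence function for the g-computation parameter along every bounded mean-zero multiplicative parametric submodel with score g. -/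
open MeasureTheory ProbabilityTheory

section Aux
variable {Ω : Type*} {m m0 : MeasurableSpace Ω} {P : Measure Ω}

lemma integrable_of_abs_le' [IsFiniteMeasure P] {f : Ω → ℝ} (hf : AEStronglyMeasurable f P)
    {c : ℝ} (h : ∀ᵐ ω ∂P, |f ω| ≤ c) : Integrable f P :=
  ⟨hf, HasFiniteIntegral.of_bounded (C := c) (by simpa [Real.norm_eq_abs] using h)⟩

lemma condexp_abs_le' [IsFiniteMeasure P] (hm : m ≤ m0) {X : Ω → ℝ} {c : ℝ}
    (hX : Integrable X P) (h : ∀ᵐ ω ∂P, |X ω| ≤ c) :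
    ∀ᵐ ω ∂P, |(P[X|m]) ω| ≤ c := by
  have h1 : X ≤ᵐ[P] fun _ => c := h.mono fun ω hω => (abs_le.mp hω).2
  have h2 : (fun _ : Ω => -c) ≤ᵐ[P] X := h.mono fun ω hω => (abs_le.mp hω).1
  have u := condExp_mono (m := m) hX (integrable_const c) h1
  have l := condExp_mono (m := m) (integrable_const (-c)) hX h2
  rw [condExp_const hm] at u l
  filter_upwards [u, l] with ω hu hl
  exact abs_le.mpr ⟨hl, hu⟩

lemma integral_mul_condexp' [IsProbabilityMeasure P] (hm : m ≤ m0) {f X : Ω → ℝ}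
    (hf : StronglyMeasurable[m] f) (hX : Integrable X P)
    (hfX : Integrable (fun ω => f ω * X ω) P) :
    ∫ ω, f ω * X ω ∂P = ∫ ω, f ω * (P[X|m]) ω ∂P := by
  have h := condExp_mul_of_stronglyMeasurable_left (μ := P) hf hfX hX
  calc ∫ ω, f ω * X ω ∂P = ∫ ω, (P[fun ω => f ω * X ω|m]) ω ∂P := (integral_condExp hm).symm
    _ = ∫ ω, f ω * (P[X|m]) ω ∂P := integral_congr_ae (h.mono fun ω hω => by exact hω)

lemma deriv_bound' {C M δ u v q r u' v' q' r' s e : ℝ}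
    (hC : 0 ≤ C) (hM : 0 < M) (hδ : 0 < δ) (hδ2 : δ ≤ 1/2)
    (hu : |u| ≤ 2*C) (hv : δ/2 ≤ v) (hv1 : v ≤ 1)
    (hq : |q| ≤ C*M) (hr : |r| ≤ M)
    (hu' : |u'| ≤ 2*C) (hv' : δ/2 ≤ v') (hv1' : v' ≤ 1)
    (hq' : |q'| ≤ C*M) (hr' : |r'| ≤ M)
    (hs : |s| ≤ M) (hes : |e*s| ≤ 1) :
    |((q*v - u*r)/v^2 - (q'*v' - u'*r')/v'^2) * (1+e*s) + (u/v - u'/v')*s|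
      ≤ 56*C*M/δ^2 := by
  have hv0 : 0 < v := lt_of_lt_of_le (by positivity) hv
  have hv0' : 0 < v' := lt_of_lt_of_le (by positivity) hv'
  have key : ∀ a b p w : ℝ, |a| ≤ C*M → |b| ≤ 2*C → |w| ≤ M → δ/2 ≤ p → p ≤ 1 → 0 < p →
      |(a*p - b*w)/p^2| ≤ 12*C*M/δ^2 := by
    intro a b p w ha hb hw hp hp1 hp0
    have hnum : |a*p - b*w| ≤ 3*C*M := by
      calc |a*p - b*w| ≤ |a*p| + |b*w| := abs_sub _ _
        _ = |a| * |p| + |b| * |w| := by rw [abs_mul, abs_mul]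
        _ ≤ (C*M)*1 + (2*C)*M := by
            have hp' : |p| ≤ 1 := abs_le.mpr ⟨by linarith, hp1⟩
            have e1 : |a| * |p| ≤ (C*M)*1 :=
              mul_le_mul ha hp' (abs_nonneg p) (mul_nonneg hC hM.le)
            have e2 : |b| * |w| ≤ (2*C)*M := mul_le_mul hb hw (abs_nonneg w) (by linarith)
            linarith
        _ = 3*C*M := by ring
    have hden : δ^2/4 ≤ p^2 := by nlinarith
    calc |(a*p - b*w)/p^2| = |a*p - b*w|/p^2 := by
          rw [abs_div, abs_of_nonneg (sq_nonneg p)]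
      _ ≤ (3*C*M)/(δ^2/4) := div_le_div₀ (by positivity) hnum (by positivity) hden
      _ = 12*C*M/δ^2 := by field_simp; ring
  have h1 := key q u v r hq hu hr hv hv1 hv0
  have h1' := key q' u' v' r' hq' hu' hr' hv' hv1' hv0'
  have h3 : |u/v| ≤ 4*C/δ := by
    rw [abs_div, abs_of_pos hv0]
    calc |u|/v ≤ (2*C)/(δ/2) := div_le_div₀ (by positivity) hu (by positivity) hv
      _ = 4*C/δ := by field_simp; ring
  have h3' : |u'/v'| ≤ 4*C/δ := by
    rw [abs_div, abs_of_pos hv0']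
    calc |u'|/v' ≤ (2*C)/(δ/2) := div_le_div₀ (by positivity) hu' (by positivity) hv'
      _ = 4*C/δ := by field_simp; ring
  have hes2 : |1 + e*s| ≤ 2 := by
    calc |1 + e*s| ≤ |(1:ℝ)| + |e*s| := abs_add_le _ _
      _ ≤ 1 + 1 := by rw [abs_one]; linarith
      _ = 2 := by ring
  calc |((q*v - u*r)/v^2 - (q'*v' - u'*r')/v'^2) * (1+e*s) + (u/v - u'/v')*s|
      ≤ |((q*v - u*r)/v^2 - (q'*v' - u'*r')/v'^2) * (1+e*s)| + |(u/v - u'/v')*s| := abs_add_le _ _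
    _ = |(q*v - u*r)/v^2 - (q'*v' - u'*r')/v'^2| * |1+e*s| + |u/v - u'/v'| * |s| := by
        rw [abs_mul, abs_mul]
    _ ≤ (12*C*M/δ^2 + 12*C*M/δ^2) * 2 + (4*C/δ + 4*C/δ) * M := by
        gcongr
        · exact (abs_sub _ _).trans (by linarith)
        · exact (abs_sub _ _).trans (by linarith)
    _ = 48*C*M/δ^2 + 8*C*M/δ := by ring
    _ ≤ 48*C*M/δ^2 + 8*C*M/δ^2 := by
        have : 8*C*M/δ ≤ 8*C*M/δ^2 := by
          rw [div_le_div_iff₀ hδ (by positivity)]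
          nlinarith [mul_nonneg (mul_nonneg hC hM.le) (mul_nonneg hδ.le (by linarith : (0:ℝ) ≤ 1 - δ))]
        linarith
    _ = 56*C*M/δ^2 := by ring


end Aux

/-- Along every bounded mean-zero multiplicative parametric submodel
`dP_ε = (1 + ε·g(Z))·dP`, the g-computation functional
`ψ(ε) = E[(μ_ε(L,1) − μ_ε(L,0))·w_ε(L)]` is differentiable at `ε = 0` with derivative
`ψ'(0) = E[φ(Z)·g(Z)]`, where `φ(Z) = m₁(Z) − m₀(Z) − ψ(0)` and
`mₐ(Z) = 1{A=a}·(Y − μ₀(L,a))/π₀ₐ(L) + μ₀(L,a)`: the centered doubly robust function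
satisfies the pathwise-derivative property of the efficient influence function. -/
theorem efficient_influence_function_pathwise_derivative
    {Ω 𝓛 : Type*} [MeasurableSpace Ω] [MeasurableSpace 𝓛]
    (P : Measure Ω) [IsProbabilityMeasure P]
    (L : Ω → 𝓛) (A Y : Ω → ℝ)
    (hL : Measurable L) (hA : Measurable A) (hY : Measurable Y)
    (hA01 : ∀ ω, A ω = 0 ∨ A ω = 1)
    -- Y is bounded: |Y| ≤ C a.s.
    (C : ℝ) (hYbdd : ∀ᵐ ω ∂P, |Y ω| ≤ C)
    -- propensity score π₀ : 𝓛 → [δ, 1−δ], a version of P(A = 1 ∣ σ(L))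
    (δ : ℝ) (hδ : 0 < δ)
    (π₀ : 𝓛 → ℝ) (hπ₀ : Measurable π₀)
    (hπ₀bdd : ∀ l, δ ≤ π₀ l ∧ π₀ l ≤ 1 - δ)
    (hps : P[(fun ω => if A ω = 1 then (1 : ℝ) else 0) |
        MeasurableSpace.comap L inferInstance] =ᵐ[P] fun ω => π₀ (L ω))
    -- outcome regression: E[Y·1{A=a} ∣ σ(L)] = μ₀(L,a)·π₀ₐ(L) a.s. for a = 0, 1
    (μ₀ : 𝓛 → ℝ → ℝ) (hμ₀ : Measurable fun p : 𝓛 × ℝ => μ₀ p.1 p.2)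
    (hreg : ∀ a ∈ ({0, 1} : Set ℝ),
      P[(fun ω => Y ω * (if A ω = a then (1 : ℝ) else 0)) |
          MeasurableSpace.comap L inferInstance]
        =ᵐ[P] fun ω => μ₀ (L ω) a * (a * π₀ (L ω) + (1 - a) * (1 - π₀ (L ω))))
    -- the score g of the submodel: bounded and mean zero
    (g : 𝓛 × ℝ × ℝ → ℝ) (hg : Measurable g)
    (M : ℝ) (hM : 0 < M) (hgbdd : ∀ x, |g x| ≤ M)
    (hgmean : ∫ ω, g (L ω, A ω, Y ω) ∂P = 0)
    -- fixed versions of the conditional expectations defining the submodel functionals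
    (w : ℝ → 𝓛 → ℝ) (D N : ℝ → ℝ → 𝓛 → ℝ)
    (hw : ∀ ε : ℝ, |ε| < 1 / M → Measurable (w ε) ∧
      P[(fun ω => 1 + ε * g (L ω, A ω, Y ω)) |
          MeasurableSpace.comap L inferInstance] =ᵐ[P] fun ω => w ε (L ω))
    (hD : ∀ ε : ℝ, |ε| < 1 / M → ∀ a ∈ ({0, 1} : Set ℝ), Measurable (D ε a) ∧
      P[(fun ω => (1 + ε * g (L ω, A ω, Y ω)) * (if A ω = a then (1 : ℝ) else 0)) |
          MeasurableSpace.comap L inferInstance] =ᵐ[P] fun ω => D ε a (L ω))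
    (hN : ∀ ε : ℝ, |ε| < 1 / M → ∀ a ∈ ({0, 1} : Set ℝ), Measurable (N ε a) ∧
      P[(fun ω => Y ω * (1 + ε * g (L ω, A ω, Y ω)) * (if A ω = a then (1 : ℝ) else 0)) |
          MeasurableSpace.comap L inferInstance] =ᵐ[P] fun ω => N ε a (L ω))
    -- the g-computation functional ψ(ε) = E[(μ_ε(L,1) − μ_ε(L,0))·w_ε(L)],
    -- with μ_ε(L,a) = N_{ε,a}(L)/D_{ε,a}(L)
    (ψ : ℝ → ℝ)
    (hψ : ∀ ε : ℝ, ψ ε =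
      ∫ ω, (N ε 1 (L ω) / D ε 1 (L ω) - N ε 0 (L ω) / D ε 0 (L ω)) * w ε (L ω) ∂P) :
    HasDerivAt ψ
      (∫ ω,
        (((if A ω = 1 then (1 : ℝ) else 0) * (Y ω - μ₀ (L ω) 1) / π₀ (L ω) + μ₀ (L ω) 1)
          - ((if A ω = 0 then (1 : ℝ) else 0) * (Y ω - μ₀ (L ω) 0) / (1 - π₀ (L ω))
              + μ₀ (L ω) 0)
          - ψ 0) * g (L ω, A ω, Y ω) ∂P)
      0 := by
  classical
  have hm : MeasurableSpace.comap L inferInstance ≤ _ := hL.comap_le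
  have hLmL : Measurable[MeasurableSpace.comap L inferInstance] L :=
    Measurable.of_comap_le le_rfl
  set G : Ω → ℝ := fun ω => g (L ω, A ω, Y ω) with hGdef
  have hGmeas : Measurable G := hg.comp (hL.prodMk (hA.prodMk hY))
  have hGbdd : ∀ ω, |G ω| ≤ M := fun ω => hgbdd _
  set I1 : Ω → ℝ := fun ω => if A ω = 1 then (1:ℝ) else 0 with hI1def
  set I0 : Ω → ℝ := fun ω => if A ω = 0 then (1:ℝ) else 0 with hI0def
  have hI1meas : Measurable I1 :=
    Measurable.ite (hA (measurableSet_singleton 1)) measurable_const measurable_const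
  have hI0meas : Measurable I0 :=
    Measurable.ite (hA (measurableSet_singleton 0)) measurable_const measurable_const
  have hI1abs : ∀ ω, |I1 ω| ≤ 1 := by
    intro ω; rw [hI1def]; dsimp only; split <;> norm_num
  have hI0abs : ∀ ω, |I0 ω| ≤ 1 := by
    intro ω; rw [hI0def]; dsimp only; split <;> norm_num
  have hI0eq : ∀ ω, I0 ω = 1 - I1 ω := by
    intro ω; rw [hI0def, hI1def]; dsimp only
    rcases hA01 ω with h | h <;> simp [h]
  -- integrability basics
  have hprob : ∀ {f : Ω → ℝ} {c : ℝ}, Measurable f → (∀ᵐ ω ∂P, |f ω| ≤ c) → Integrable f P :=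
    fun hf h => integrable_of_abs_le' hf.aestronglyMeasurable h
  have hC0ae : ∀ᵐ ω ∂P, 0 ≤ C := hYbdd.mono fun ω h => le_trans (abs_nonneg _) h
  have hGint : Integrable G P := hprob hGmeas (Filter.Eventually.of_forall hGbdd)
  have habs2 : ∀ (I : Ω → ℝ), (∀ ω, |I ω| ≤ 1) → ∀ ω, |G ω * I ω| ≤ M := by
    intro I hI ω
    rw [abs_mul]
    calc |G ω| * |I ω| ≤ M * 1 := mul_le_mul (hGbdd ω) (hI ω) (abs_nonneg _) hM.le
      _ = M := mul_one M
  have habs3 : ∀ (I : Ω → ℝ), (∀ ω, |I ω| ≤ 1) → ∀ ω, |Y ω| ≤ C → |Y ω * G ω * I ω| ≤ C * M := by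
    intro I hI ω hω
    have hC : 0 ≤ C := le_trans (abs_nonneg _) hω
    rw [abs_mul, abs_mul]
    calc |Y ω| * |G ω| * |I ω| ≤ C * M * 1 :=
          mul_le_mul (mul_le_mul hω (hGbdd ω) (abs_nonneg _) hC) (hI ω) (abs_nonneg _)
            (mul_nonneg hC hM.le)
      _ = C * M := mul_one _
  have habsY : ∀ (I : Ω → ℝ), (∀ ω, |I ω| ≤ 1) → ∀ ω, |Y ω| ≤ C → |Y ω * I ω| ≤ C := by
    intro I hI ω hω
    have hC : 0 ≤ C := le_trans (abs_nonneg _) hω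
    rw [abs_mul]
    calc |Y ω| * |I ω| ≤ C * 1 := mul_le_mul hω (hI ω) (abs_nonneg _) hC
      _ = C := mul_one _
  have hI1int : Integrable I1 P := hprob hI1meas (Filter.Eventually.of_forall hI1abs)
  have hI0int : Integrable I0 P := hprob hI0meas (Filter.Eventually.of_forall hI0abs)
  have hX2meas : Measurable (fun ω => G ω * I1 ω) := hGmeas.mul hI1meas
  have hX4meas : Measurable (fun ω => G ω * I0 ω) := hGmeas.mul hI0meas
  have hX1meas : Measurable (fun ω => Y ω * G ω * I1 ω) := (hY.mul hGmeas).mul hI1meas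
  have hX3meas : Measurable (fun ω => Y ω * G ω * I0 ω) := (hY.mul hGmeas).mul hI0meas
  have hX2int : Integrable (fun ω => G ω * I1 ω) P :=
    hprob hX2meas (Filter.Eventually.of_forall (habs2 I1 hI1abs))
  have hX4int : Integrable (fun ω => G ω * I0 ω) P :=
    hprob hX4meas (Filter.Eventually.of_forall (habs2 I0 hI0abs))
  have hX1int : Integrable (fun ω => Y ω * G ω * I1 ω) P :=
    hprob hX1meas (hYbdd.mono fun ω h => habs3 I1 hI1abs ω h)
  have hX3int : Integrable (fun ω => Y ω * G ω * I0 ω) P :=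
    hprob hX3meas (hYbdd.mono fun ω h => habs3 I0 hI0abs ω h)
  have hYI1int : Integrable (fun ω => Y ω * I1 ω) P :=
    hprob (hY.mul hI1meas) (hYbdd.mono fun ω h => habsY I1 hI1abs ω h)
  have hYI0int : Integrable (fun ω => Y ω * I0 ω) P :=
    hprob (hY.mul hI0meas) (hYbdd.mono fun ω h => habsY I0 hI0abs ω h)
  -- conditional expectations
  set s' : Ω → ℝ := P[G|MeasurableSpace.comap L inferInstance] with hs'def
  set q1 : Ω → ℝ := P[fun ω => Y ω * G ω * I1 ω|MeasurableSpace.comap L inferInstance] with hq1def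
  set q0 : Ω → ℝ := P[fun ω => Y ω * G ω * I0 ω|MeasurableSpace.comap L inferInstance] with hq0def
  set r1 : Ω → ℝ := P[fun ω => G ω * I1 ω|MeasurableSpace.comap L inferInstance] with hr1def
  set r0 : Ω → ℝ := P[fun ω => G ω * I0 ω|MeasurableSpace.comap L inferInstance] with hr0def
  have hs'meas : Measurable s' := (stronglyMeasurable_condExp.mono hm).measurable
  have hq1meas : Measurable q1 := (stronglyMeasurable_condExp.mono hm).measurable
  have hq0meas : Measurable q0 := (stronglyMeasurable_condExp.mono hm).measurable
  have hr1meas : Measurable r1 := (stronglyMeasurable_condExp.mono hm).measurable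
  have hr0meas : Measurable r0 := (stronglyMeasurable_condExp.mono hm).measurable
  -- a.e. bounds on conditional expectations
  have hs'b : ∀ᵐ ω ∂P, |s' ω| ≤ M :=
    condexp_abs_le' hm hGint (Filter.Eventually.of_forall hGbdd)
  have hr1b : ∀ᵐ ω ∂P, |r1 ω| ≤ M :=
    condexp_abs_le' hm hX2int (Filter.Eventually.of_forall (habs2 I1 hI1abs))
  have hr0b : ∀ᵐ ω ∂P, |r0 ω| ≤ M :=
    condexp_abs_le' hm hX4int (Filter.Eventually.of_forall (habs2 I0 hI0abs))
  have hq1b : ∀ᵐ ω ∂P, |q1 ω| ≤ C * M :=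
    condexp_abs_le' hm hX1int (hYbdd.mono fun ω h => habs3 I1 hI1abs ω h)
  have hq0b : ∀ᵐ ω ∂P, |q0 ω| ≤ C * M :=
    condexp_abs_le' hm hX3int (hYbdd.mono fun ω h => habs3 I0 hI0abs ω h)
  -- identification of the baseline conditional expectations
  have hps' : P[I1|MeasurableSpace.comap L inferInstance] =ᵐ[P] fun ω => π₀ (L ω) := hps
  have hD0id : P[I0|MeasurableSpace.comap L inferInstance] =ᵐ[P] fun ω => 1 - π₀ (L ω) := by
    have e : I0 = (fun _ : Ω => (1:ℝ)) - I1 := by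
      funext ω; simp [hI0eq ω]
    rw [e]
    refine (condExp_sub (integrable_const 1) hI1int _).trans ?_
    filter_upwards [hps'] with ω hω
    simp only [Pi.sub_apply, condExp_const hm, hω]
  have hn1 : P[fun ω => Y ω * I1 ω|MeasurableSpace.comap L inferInstance] =ᵐ[P] fun ω => μ₀ (L ω) 1 * π₀ (L ω) := by
    have h : P[fun ω => Y ω * I1 ω|MeasurableSpace.comap L inferInstance] =ᵐ[P]
        fun ω => μ₀ (L ω) 1 * (1 * π₀ (L ω) + (1 - 1) * (1 - π₀ (L ω))) := hreg 1 (by simp)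
    refine h.trans (Filter.EventuallyEq.of_eq (funext fun ω => by ring))
  have hn0 : P[fun ω => Y ω * I0 ω|MeasurableSpace.comap L inferInstance] =ᵐ[P] fun ω => μ₀ (L ω) 0 * (1 - π₀ (L ω)) := by
    have h : P[fun ω => Y ω * I0 ω|MeasurableSpace.comap L inferInstance] =ᵐ[P]
        fun ω => μ₀ (L ω) 0 * (0 * π₀ (L ω) + (1 - 0) * (1 - π₀ (L ω))) := hreg 0 (by simp)
    refine h.trans (Filter.EventuallyEq.of_eq (funext fun ω => by ring))
  have hn1b : ∀ᵐ ω ∂P, |μ₀ (L ω) 1 * π₀ (L ω)| ≤ C := by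
    have h := condexp_abs_le' hm hYI1int (hYbdd.mono fun ω h => habsY I1 hI1abs ω h)
    filter_upwards [h, hn1] with ω h1 h2
    rw [← h2]; exact h1
  have hn0b : ∀ᵐ ω ∂P, |μ₀ (L ω) 0 * (1 - π₀ (L ω))| ≤ C := by
    have h := condexp_abs_le' hm hYI0int (hYbdd.mono fun ω h => habsY I0 hI0abs ω h)
    filter_upwards [h, hn0] with ω h1 h2
    rw [← h2]; exact h1
  -- generic linear conditional expectation computation
  have hone : ∀ (ε : ℝ) (X b bX : Ω → ℝ), Integrable X P → Integrable b P →
      (∀ ω, bX ω = b ω + ε * X ω) →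
      P[bX|MeasurableSpace.comap L inferInstance] =ᵐ[P] fun ω => (P[b|MeasurableSpace.comap L inferInstance]) ω + ε * (P[X|MeasurableSpace.comap L inferInstance]) ω := by
    intro ε X b bX hX hb hbX
    have e : bX = b + ε • X := by funext ω; simp [hbX ω, smul_eq_mul]
    rw [e]
    filter_upwards [condExp_add (m := MeasurableSpace.comap L inferInstance) hb (hX.smul ε),
      condExp_smul (μ := P) (m := MeasurableSpace.comap L inferInstance) ε X] with ω h1 h2
    simp only [Pi.add_apply, Pi.smul_apply, smul_eq_mul] at h1 h2 ⊢
    rw [h1, h2]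
  -- the radius of the ball
  have hρ0 : (0:ℝ) < min (δ/(2*M)) (1/(2*M)) := lt_min (by positivity) (by positivity)
  have hρM : min (δ/(2*M)) (1/(2*M)) < 1/M := by
    refine lt_of_le_of_lt (min_le_right _ _) ?_
    rw [div_lt_div_iff₀ (by positivity) hM]
    nlinarith
  set F : ℝ → Ω → ℝ := fun ε ω =>
    ((μ₀ (L ω) 1 * π₀ (L ω) + ε * q1 ω) / (π₀ (L ω) + ε * r1 ω)
      - (μ₀ (L ω) 0 * (1 - π₀ (L ω)) + ε * q0 ω) / ((1 - π₀ (L ω)) + ε * r0 ω))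
      * (1 + ε * s' ω) with hFdef
  set F' : ℝ → Ω → ℝ := fun ε ω =>
    ((q1 ω * (π₀ (L ω) + ε * r1 ω) - (μ₀ (L ω) 1 * π₀ (L ω) + ε * q1 ω) * r1 ω)
        / (π₀ (L ω) + ε * r1 ω)^2
      - (q0 ω * ((1 - π₀ (L ω)) + ε * r0 ω)
          - (μ₀ (L ω) 0 * (1 - π₀ (L ω)) + ε * q0 ω) * r0 ω)
        / ((1 - π₀ (L ω)) + ε * r0 ω)^2) * (1 + ε * s' ω)
    + ((μ₀ (L ω) 1 * π₀ (L ω) + ε * q1 ω) / (π₀ (L ω) + ε * r1 ω)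
      - (μ₀ (L ω) 0 * (1 - π₀ (L ω)) + ε * q0 ω) / ((1 - π₀ (L ω)) + ε * r0 ω)) * s' ω
    with hF'def
  have hψF : ∀ ε : ℝ, |ε| < 1/M → ψ ε = ∫ ω, F ε ω ∂P := by
    intro ε hε
    have hw2 := (hw ε hε).2
    have hD1 := (hD ε hε 1 (by simp)).2
    have hD0 := (hD ε hε 0 (by simp)).2
    have hN1 := (hN ε hε 1 (by simp)).2
    have hN0 := (hN ε hε 0 (by simp)).2
    have ew : (fun ω => w ε (L ω)) =ᵐ[P] fun ω => 1 + ε * s' ω := by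
      have h := hone ε G (fun _ => (1:ℝ)) (fun ω => 1 + ε * G ω) hGint (integrable_const 1)
        (fun ω => rfl)
      refine hw2.symm.trans (h.trans ?_)
      filter_upwards with ω
      rw [condExp_const hm]
    have eD1 : (fun ω => D ε 1 (L ω)) =ᵐ[P] fun ω => π₀ (L ω) + ε * r1 ω := by
      have h := hone ε (fun ω => G ω * I1 ω) I1 (fun ω => (1 + ε * G ω) * I1 ω)
        hX2int hI1int (fun ω => by ring)
      filter_upwards [hD1, h, hps'] with ω h1 h2 h3
      rw [← h1]
      exact h2.trans (by rw [h3])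
    have eD0 : (fun ω => D ε 0 (L ω)) =ᵐ[P] fun ω => (1 - π₀ (L ω)) + ε * r0 ω := by
      have h := hone ε (fun ω => G ω * I0 ω) I0 (fun ω => (1 + ε * G ω) * I0 ω)
        hX4int hI0int (fun ω => by ring)
      filter_upwards [hD0, h, hD0id] with ω h1 h2 h3
      rw [← h1]
      exact h2.trans (by rw [h3])
    have eN1 : (fun ω => N ε 1 (L ω)) =ᵐ[P]
        fun ω => μ₀ (L ω) 1 * π₀ (L ω) + ε * q1 ω := by
      have h := hone ε (fun ω => Y ω * G ω * I1 ω) (fun ω => Y ω * I1 ω)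
        (fun ω => Y ω * (1 + ε * G ω) * I1 ω) hX1int hYI1int (fun ω => by ring)
      filter_upwards [hN1, h, hn1] with ω h1 h2 h3
      rw [← h1]
      exact h2.trans (by rw [h3])
    have eN0 : (fun ω => N ε 0 (L ω)) =ᵐ[P]
        fun ω => μ₀ (L ω) 0 * (1 - π₀ (L ω)) + ε * q0 ω := by
      have h := hone ε (fun ω => Y ω * G ω * I0 ω) (fun ω => Y ω * I0 ω)
        (fun ω => Y ω * (1 + ε * G ω) * I0 ω) hX3int hYI0int (fun ω => by ring)
      filter_upwards [hN0, h, hn0] with ω h1 h2 h3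
      rw [← h1]
      exact h2.trans (by rw [h3])
    rw [hψ ε]
    refine integral_congr_ae ?_
    filter_upwards [ew, eD1, eD0, eN1, eN0] with ω h1 h2 h3 h4 h5
    rw [h4, h2, h5, h3, h1]
  -- measurability of F and F'
  have hπ1m : Measurable fun ω => π₀ (L ω) := hπ₀.comp hL
  have hπ0m : Measurable fun ω => 1 - π₀ (L ω) := measurable_const.sub (hπ₀.comp hL)
  have hμ1m : Measurable fun ω => μ₀ (L ω) 1 := hμ₀.comp (hL.prodMk measurable_const)
  have hμ0m : Measurable fun ω => μ₀ (L ω) 0 := hμ₀.comp (hL.prodMk measurable_const)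
  have hFmeas : ∀ ε : ℝ, AEStronglyMeasurable (F ε) P := by
    intro ε
    refine Measurable.aestronglyMeasurable ?_
    exact ((((hμ1m.mul hπ1m).add (hq1meas.const_mul ε)).div
        (hπ1m.add (hr1meas.const_mul ε))).sub
      (((hμ0m.mul hπ0m).add (hq0meas.const_mul ε)).div
        (hπ0m.add (hr0meas.const_mul ε)))).mul ((hs'meas.const_mul ε).const_add 1)
  have hF'meas : AEStronglyMeasurable (F' 0) P := by
    refine Measurable.aestronglyMeasurable ?_
    have m1 : Measurable fun ω => π₀ (L ω) + 0 * r1 ω := hπ1m.add (hr1meas.const_mul 0)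
    have m0 : Measurable fun ω => (1 - π₀ (L ω)) + 0 * r0 ω := hπ0m.add (hr0meas.const_mul 0)
    have mu1 : Measurable fun ω => μ₀ (L ω) 1 * π₀ (L ω) + 0 * q1 ω :=
      (hμ1m.mul hπ1m).add (hq1meas.const_mul 0)
    have mu0 : Measurable fun ω => μ₀ (L ω) 0 * (1 - π₀ (L ω)) + 0 * q0 ω :=
      (hμ0m.mul hπ0m).add (hq0meas.const_mul 0)
    exact ((((hq1meas.mul m1).sub (mu1.mul hr1meas)).div (m1.pow_const 2)).sub
        (((hq0meas.mul m0).sub (mu0.mul hr0meas)).div (m0.pow_const 2))).mul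
        ((hs'meas.const_mul 0).const_add 1) |>.add
      (((mu1.div m1).sub (mu0.div m0)).mul hs'meas)
  -- key a.e. differentiability and bound
  have hkey : ∀ᵐ ω ∂P, ∀ ε ∈ Metric.ball (0:ℝ) (min (δ/(2*M)) (1/(2*M))),
      HasDerivAt (fun e => F e ω) (F' ε ω) ε ∧ |F' ε ω| ≤ 56*C*M/δ^2 := by
    filter_upwards [hYbdd, hs'b, hr1b, hr0b, hq1b, hq0b, hn1b, hn0b]
      with ω hYω hsω hr1ω hr0ω hq1ω hq0ω hn1ω hn0ω
    intro ε hε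
    rw [Metric.mem_ball, Real.dist_eq, sub_zero] at hε
    have hπ := hπ₀bdd (L ω)
    have hC0 : 0 ≤ C := le_trans (abs_nonneg _) hYω
    have hδ2 : δ ≤ 1/2 := by linarith [hπ.1, hπ.2]
    have hεδ : |ε| ≤ δ/(2*M) := le_trans hε.le (min_le_left _ _)
    have hεM : |ε| * M ≤ δ/2 := by
      calc |ε| * M ≤ (δ/(2*M)) * M := mul_le_mul_of_nonneg_right hεδ hM.le
        _ = δ/2 := by field_simp
    have hb1 : |ε * r1 ω| ≤ δ/2 := by
      rw [abs_mul]
      calc |ε| * |r1 ω| ≤ |ε| * M := mul_le_mul_of_nonneg_left hr1ω (abs_nonneg ε)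
        _ ≤ δ/2 := hεM
    have hb0 : |ε * r0 ω| ≤ δ/2 := by
      rw [abs_mul]
      calc |ε| * |r0 ω| ≤ |ε| * M := mul_le_mul_of_nonneg_left hr0ω (abs_nonneg ε)
        _ ≤ δ/2 := hεM
    have hes : |ε * s' ω| ≤ 1 := by
      rw [abs_mul]
      calc |ε| * |s' ω| ≤ |ε| * M := mul_le_mul_of_nonneg_left hsω (abs_nonneg ε)
        _ ≤ δ/2 := hεM
        _ ≤ 1 := by linarith
    have hεq1 : |ε * q1 ω| ≤ C := by
      rw [abs_mul]
      calc |ε| * |q1 ω| ≤ |ε| * (C*M) := mul_le_mul_of_nonneg_left hq1ω (abs_nonneg ε)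
        _ = C * (|ε| * M) := by ring
        _ ≤ C * (δ/2) := mul_le_mul_of_nonneg_left hεM hC0
        _ ≤ C * 1 := mul_le_mul_of_nonneg_left (by linarith) hC0
        _ = C := mul_one C
    have hεq0 : |ε * q0 ω| ≤ C := by
      rw [abs_mul]
      calc |ε| * |q0 ω| ≤ |ε| * (C*M) := mul_le_mul_of_nonneg_left hq0ω (abs_nonneg ε)
        _ = C * (|ε| * M) := by ring
        _ ≤ C * (δ/2) := mul_le_mul_of_nonneg_left hεM hC0
        _ ≤ C * 1 := mul_le_mul_of_nonneg_left (by linarith) hC0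
        _ = C := mul_one C
    have hu1 : |μ₀ (L ω) 1 * π₀ (L ω) + ε * q1 ω| ≤ 2*C :=
      le_trans (abs_add_le _ _) (by linarith)
    have hu0 : |μ₀ (L ω) 0 * (1 - π₀ (L ω)) + ε * q0 ω| ≤ 2*C :=
      le_trans (abs_add_le _ _) (by linarith)
    have hab1 := abs_le.mp hb1
    have hab0 := abs_le.mp hb0
    have hv1lo : δ/2 ≤ π₀ (L ω) + ε * r1 ω := by linarith [hπ.1]
    have hv1hi : π₀ (L ω) + ε * r1 ω ≤ 1 := by linarith [hπ.2]
    have hv0lo : δ/2 ≤ (1 - π₀ (L ω)) + ε * r0 ω := by linarith [hπ.2]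
    have hv0hi : (1 - π₀ (L ω)) + ε * r0 ω ≤ 1 := by linarith [hπ.1]
    have ne1 : π₀ (L ω) + ε * r1 ω ≠ 0 := ne_of_gt (lt_of_lt_of_le (by positivity) hv1lo)
    have ne0 : (1 - π₀ (L ω)) + ε * r0 ω ≠ 0 := ne_of_gt (lt_of_lt_of_le (by positivity) hv0lo)
    constructor
    · have d_u1 : HasDerivAt (fun e : ℝ => μ₀ (L ω) 1 * π₀ (L ω) + e * q1 ω) (q1 ω) ε :=
        (hasDerivAt_mul_const (q1 ω)).const_add _
      have d_v1 : HasDerivAt (fun e : ℝ => π₀ (L ω) + e * r1 ω) (r1 ω) ε :=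
        (hasDerivAt_mul_const (r1 ω)).const_add _
      have d_u0 : HasDerivAt (fun e : ℝ => μ₀ (L ω) 0 * (1 - π₀ (L ω)) + e * q0 ω) (q0 ω) ε :=
        (hasDerivAt_mul_const (q0 ω)).const_add _
      have d_v0 : HasDerivAt (fun e : ℝ => (1 - π₀ (L ω)) + e * r0 ω) (r0 ω) ε :=
        (hasDerivAt_mul_const (r0 ω)).const_add _
      have d_w : HasDerivAt (fun e : ℝ => 1 + e * s' ω) (s' ω) ε :=
        (hasDerivAt_mul_const (s' ω)).const_add _
      exact ((d_u1.div d_v1 ne1).sub (d_u0.div d_v0 ne0)).mul d_w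
    · exact deriv_bound' hC0 hM hδ hδ2 hu1 hv1lo hv1hi hq1ω hr1ω hu0 hv0lo hv0hi hq0ω hr0ω hsω hes
  -- integrability of F 0
  have hF0b : ∀ᵐ ω ∂P, |F 0 ω| ≤ C/δ + C/δ := by
    filter_upwards [hn1b, hn0b, hYbdd] with ω h1 h0 hYω
    have hC0 : 0 ≤ C := le_trans (abs_nonneg _) hYω
    have hπ := hπ₀bdd (L ω)
    have e1 : |μ₀ (L ω) 1 * π₀ (L ω) / (π₀ (L ω))| ≤ C/δ := by
      rw [abs_div]
      exact div_le_div₀ hC0 h1 hδ (le_trans hπ.1 (le_abs_self _))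
    have e0 : |μ₀ (L ω) 0 * (1 - π₀ (L ω)) / (1 - π₀ (L ω))| ≤ C/δ := by
      rw [abs_div]
      exact div_le_div₀ hC0 h0 hδ (le_trans (by linarith [hπ.2]) (le_abs_self _))
    show |(_ : ℝ)| ≤ _
    simp only [hFdef, zero_mul, add_zero, mul_one]
    exact le_trans (abs_sub _ _) (add_le_add e1 e0)
  have hFint : Integrable (F 0) P := integrable_of_abs_le' (hFmeas 0) hF0b
  have hmain := hasDerivAt_integral_of_dominated_loc_of_deriv_le (μ := P)
    (F := F) (F' := F') (x₀ := 0) (bound := fun _ => 56*C*M/δ^2) (Metric.ball_mem_nhds _ hρ0)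
    (Filter.Eventually.of_forall hFmeas) hFint hF'meas
    (hkey.mono fun ω h ε hε => (by rw [Real.norm_eq_abs]; exact (h ε hε).2))
    (integrable_const _)
    (hkey.mono fun ω h ε hε => (h ε hε).1)
  have hfinal : HasDerivAt ψ (∫ ω, F' 0 ω ∂P) 0 := by
    refine hmain.2.congr_of_eventuallyEq ?_
    have hball : Metric.ball (0:ℝ) (min (δ/(2*M)) (1/(2*M))) ∈ nhds 0 :=
      Metric.ball_mem_nhds _ hρ0
    filter_upwards [hball] with ε hε
    rw [Metric.mem_ball, Real.dist_eq, sub_zero] at hε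
    exact hψF ε (lt_trans hε hρM)
  -- Step 3: identify the derivative with the influence-function covariance
  have hGmean' : ∫ ω, G ω ∂P = 0 := hgmean
  have hμ1mL : Measurable[MeasurableSpace.comap L inferInstance] fun ω => μ₀ (L ω) 1 :=
    hμ₀.comp (hLmL.prodMk measurable_const)
  have hμ0mL : Measurable[MeasurableSpace.comap L inferInstance] fun ω => μ₀ (L ω) 0 :=
    hμ₀.comp (hLmL.prodMk measurable_const)
  have hπ1mL : Measurable[MeasurableSpace.comap L inferInstance] fun ω => π₀ (L ω) :=
    hπ₀.comp hLmL
  have hπ0mL : Measurable[MeasurableSpace.comap L inferInstance] fun ω => 1 - π₀ (L ω) :=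
    measurable_const.sub (hπ₀.comp hLmL)
  have hinv : ∀ x : ℝ, δ ≤ x → |x⁻¹| ≤ δ⁻¹ := by
    intro x hx
    rw [abs_inv]
    exact inv_anti₀ hδ (le_trans hx (le_abs_self x))
  have hμ1b : ∀ᵐ ω ∂P, |μ₀ (L ω) 1| ≤ C/δ := by
    filter_upwards [hn1b] with ω h
    have hπ := hπ₀bdd (L ω)
    rw [le_div_iff₀ hδ]
    calc |μ₀ (L ω) 1| * δ ≤ |μ₀ (L ω) 1| * |π₀ (L ω)| :=
          mul_le_mul_of_nonneg_left (le_trans hπ.1 (le_abs_self _)) (abs_nonneg _)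
      _ = |μ₀ (L ω) 1 * π₀ (L ω)| := (abs_mul _ _).symm
      _ ≤ C := h
  have hμ0b : ∀ᵐ ω ∂P, |μ₀ (L ω) 0| ≤ C/δ := by
    filter_upwards [hn0b] with ω h
    have hπ := hπ₀bdd (L ω)
    rw [le_div_iff₀ hδ]
    calc |μ₀ (L ω) 0| * δ ≤ |μ₀ (L ω) 0| * |1 - π₀ (L ω)| :=
          mul_le_mul_of_nonneg_left (le_trans (by linarith [hπ.2]) (le_abs_self _)) (abs_nonneg _)
      _ = |μ₀ (L ω) 0 * (1 - π₀ (L ω))| := (abs_mul _ _).symm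
      _ ≤ C := h
  have hf2b : ∀ᵐ ω ∂P, |μ₀ (L ω) 1 / π₀ (L ω)| ≤ (C/δ)/δ := by
    filter_upwards [hμ1b, hC0ae] with ω h hC0
    have hπ := hπ₀bdd (L ω)
    rw [abs_div]
    exact div_le_div₀ (div_nonneg hC0 hδ.le) h hδ (le_trans hπ.1 (le_abs_self _))
  have hf4b : ∀ᵐ ω ∂P, |μ₀ (L ω) 0 / (1 - π₀ (L ω))| ≤ (C/δ)/δ := by
    filter_upwards [hμ0b, hC0ae] with ω h hC0
    have hπ := hπ₀bdd (L ω)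
    rw [abs_div]
    exact div_le_div₀ (div_nonneg hC0 hδ.le) h hδ (le_trans (by linarith [hπ.2]) (le_abs_self _))
  have hf5b : ∀ᵐ ω ∂P, |μ₀ (L ω) 1 - μ₀ (L ω) 0| ≤ C/δ + C/δ := by
    filter_upwards [hμ1b, hμ0b] with ω h1 h0
    exact le_trans (abs_sub _ _) (add_le_add h1 h0)
  have hmulint : ∀ {f X : Ω → ℝ} {cf cX : ℝ}, Measurable f → Measurable X →
      (∀ᵐ ω ∂P, |f ω| ≤ cf) → (∀ᵐ ω ∂P, |X ω| ≤ cX) →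
      Integrable (fun ω => f ω * X ω) P := by
    intro f X cf cX hf hX hfb hXb
    refine integrable_of_abs_le' ((hf.mul hX).aestronglyMeasurable) (c := cf * cX) ?_
    filter_upwards [hfb, hXb] with ω h1 h2
    rw [abs_mul]
    exact mul_le_mul h1 h2 (abs_nonneg _) (le_trans (abs_nonneg _) h1)
  have hf1b : ∀ᵐ ω ∂P, |(π₀ (L ω))⁻¹| ≤ δ⁻¹ :=
    Filter.Eventually.of_forall fun ω => hinv _ (hπ₀bdd (L ω)).1
  have hf3b : ∀ᵐ ω ∂P, |(1 - π₀ (L ω))⁻¹| ≤ δ⁻¹ :=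
    Filter.Eventually.of_forall fun ω => hinv _ (by linarith [(hπ₀bdd (L ω)).2])
  have intE1 : Integrable (fun ω => (π₀ (L ω))⁻¹ * (Y ω * G ω * I1 ω)) P :=
    hmulint hπ1m.inv hX1meas hf1b (hYbdd.mono fun ω h => habs3 I1 hI1abs ω h)
  have intE2 : Integrable (fun ω => (μ₀ (L ω) 1 / π₀ (L ω)) * (G ω * I1 ω)) P :=
    hmulint (hμ1m.div hπ1m) hX2meas hf2b (Filter.Eventually.of_forall (habs2 I1 hI1abs))
  have intE3 : Integrable (fun ω => (1 - π₀ (L ω))⁻¹ * (Y ω * G ω * I0 ω)) P :=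
    hmulint hπ0m.inv hX3meas hf3b (hYbdd.mono fun ω h => habs3 I0 hI0abs ω h)
  have intE4 : Integrable (fun ω => (μ₀ (L ω) 0 / (1 - π₀ (L ω))) * (G ω * I0 ω)) P :=
    hmulint (hμ0m.div hπ0m) hX4meas hf4b (Filter.Eventually.of_forall (habs2 I0 hI0abs))
  have intE5 : Integrable (fun ω => (μ₀ (L ω) 1 - μ₀ (L ω) 0) * G ω) P :=
    hmulint (hμ1m.sub hμ0m) hGmeas hf5b (Filter.Eventually.of_forall hGbdd)
  have intE6 : Integrable (fun ω => ψ 0 * G ω) P := hGint.const_mul (ψ 0)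
  have intR1 : Integrable (fun ω => (π₀ (L ω))⁻¹ * q1 ω) P :=
    hmulint hπ1m.inv hq1meas hf1b hq1b
  have intR2 : Integrable (fun ω => (μ₀ (L ω) 1 / π₀ (L ω)) * r1 ω) P :=
    hmulint (hμ1m.div hπ1m) hr1meas hf2b hr1b
  have intR3 : Integrable (fun ω => (1 - π₀ (L ω))⁻¹ * q0 ω) P :=
    hmulint hπ0m.inv hq0meas hf3b hq0b
  have intR4 : Integrable (fun ω => (μ₀ (L ω) 0 / (1 - π₀ (L ω))) * r0 ω) P :=
    hmulint (hμ0m.div hπ0m) hr0meas hf4b hr0b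
  have intR5 : Integrable (fun ω => (μ₀ (L ω) 1 - μ₀ (L ω) 0) * s' ω) P :=
    hmulint (hμ1m.sub hμ0m) hs'meas hf5b hs'b
  have p1 : ∫ ω, (π₀ (L ω))⁻¹ * (Y ω * G ω * I1 ω) ∂P = ∫ ω, (π₀ (L ω))⁻¹ * q1 ω ∂P :=
    integral_mul_condexp' hm hπ1mL.inv.stronglyMeasurable hX1int intE1
  have p2 : ∫ ω, (μ₀ (L ω) 1 / π₀ (L ω)) * (G ω * I1 ω) ∂P
      = ∫ ω, (μ₀ (L ω) 1 / π₀ (L ω)) * r1 ω ∂P :=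
    integral_mul_condexp' hm (hμ1mL.div hπ1mL).stronglyMeasurable hX2int intE2
  have p3 : ∫ ω, (1 - π₀ (L ω))⁻¹ * (Y ω * G ω * I0 ω) ∂P
      = ∫ ω, (1 - π₀ (L ω))⁻¹ * q0 ω ∂P :=
    integral_mul_condexp' hm hπ0mL.inv.stronglyMeasurable hX3int intE3
  have p4 : ∫ ω, (μ₀ (L ω) 0 / (1 - π₀ (L ω))) * (G ω * I0 ω) ∂P
      = ∫ ω, (μ₀ (L ω) 0 / (1 - π₀ (L ω))) * r0 ω ∂P :=
    integral_mul_condexp' hm (hμ0mL.div hπ0mL).stronglyMeasurable hX4int intE4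
  have p5 : ∫ ω, (μ₀ (L ω) 1 - μ₀ (L ω) 0) * G ω ∂P
      = ∫ ω, (μ₀ (L ω) 1 - μ₀ (L ω) 0) * s' ω ∂P :=
    integral_mul_condexp' hm (hμ1mL.sub hμ0mL).stronglyMeasurable hGint intE5
  have hstep3 : (∫ ω,
        (((if A ω = 1 then (1 : ℝ) else 0) * (Y ω - μ₀ (L ω) 1) / π₀ (L ω) + μ₀ (L ω) 1)
          - ((if A ω = 0 then (1 : ℝ) else 0) * (Y ω - μ₀ (L ω) 0) / (1 - π₀ (L ω))
              + μ₀ (L ω) 0)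
          - ψ 0) * g (L ω, A ω, Y ω) ∂P) = ∫ ω, F' 0 ω ∂P := by
    have hL1 : (∫ ω,
        (((if A ω = 1 then (1 : ℝ) else 0) * (Y ω - μ₀ (L ω) 1) / π₀ (L ω) + μ₀ (L ω) 1)
          - ((if A ω = 0 then (1 : ℝ) else 0) * (Y ω - μ₀ (L ω) 0) / (1 - π₀ (L ω))
              + μ₀ (L ω) 0)
          - ψ 0) * g (L ω, A ω, Y ω) ∂P)
        = ∫ ω, ((((((π₀ (L ω))⁻¹ * (Y ω * G ω * I1 ω)
            - (μ₀ (L ω) 1 / π₀ (L ω)) * (G ω * I1 ω))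
            - (1 - π₀ (L ω))⁻¹ * (Y ω * G ω * I0 ω))
            + (μ₀ (L ω) 0 / (1 - π₀ (L ω))) * (G ω * I0 ω))
            + (μ₀ (L ω) 1 - μ₀ (L ω) 0) * G ω)
            - ψ 0 * G ω) ∂P := by
      refine integral_congr_ae (Filter.Eventually.of_forall fun ω => ?_)
      show (((I1 ω * (Y ω - μ₀ (L ω) 1) / π₀ (L ω) + μ₀ (L ω) 1)
          - (I0 ω * (Y ω - μ₀ (L ω) 0) / (1 - π₀ (L ω)) + μ₀ (L ω) 0)
          - ψ 0) * G ω) = _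
      ring
    have hR1 : (∫ ω, F' 0 ω ∂P)
        = ∫ ω, (((((π₀ (L ω))⁻¹ * q1 ω
            - (μ₀ (L ω) 1 / π₀ (L ω)) * r1 ω)
            - (1 - π₀ (L ω))⁻¹ * q0 ω)
            + (μ₀ (L ω) 0 / (1 - π₀ (L ω))) * r0 ω)
            + (μ₀ (L ω) 1 - μ₀ (L ω) 0) * s' ω) ∂P := by
      refine integral_congr_ae (Filter.Eventually.of_forall fun ω => ?_)
      have hπ := hπ₀bdd (L ω)
      have h1 : π₀ (L ω) ≠ 0 := ne_of_gt (lt_of_lt_of_le hδ hπ.1)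
      have h0 : (1 : ℝ) - π₀ (L ω) ≠ 0 := ne_of_gt (by linarith [hπ.2])
      show F' 0 ω = _
      simp only [hF'def, zero_mul, add_zero, mul_one]
      field_simp
      ring
    have intB2 : Integrable (fun ω => (π₀ (L ω))⁻¹ * (Y ω * G ω * I1 ω)
      - (μ₀ (L ω) 1 / π₀ (L ω)) * (G ω * I1 ω)) P := intE1.sub intE2
    have intB3 : Integrable (fun ω => ((π₀ (L ω))⁻¹ * (Y ω * G ω * I1 ω)
      - (μ₀ (L ω) 1 / π₀ (L ω)) * (G ω * I1 ω))
      - (1 - π₀ (L ω))⁻¹ * (Y ω * G ω * I0 ω)) P := intB2.sub intE3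
    have intB4 : Integrable (fun ω => (((π₀ (L ω))⁻¹ * (Y ω * G ω * I1 ω)
      - (μ₀ (L ω) 1 / π₀ (L ω)) * (G ω * I1 ω))
      - (1 - π₀ (L ω))⁻¹ * (Y ω * G ω * I0 ω))
      + (μ₀ (L ω) 0 / (1 - π₀ (L ω))) * (G ω * I0 ω)) P := intB3.add intE4
    have intB5 : Integrable (fun ω => ((((π₀ (L ω))⁻¹ * (Y ω * G ω * I1 ω)
      - (μ₀ (L ω) 1 / π₀ (L ω)) * (G ω * I1 ω))
      - (1 - π₀ (L ω))⁻¹ * (Y ω * G ω * I0 ω))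
      + (μ₀ (L ω) 0 / (1 - π₀ (L ω))) * (G ω * I0 ω))
      + (μ₀ (L ω) 1 - μ₀ (L ω) 0) * G ω) P := intB4.add intE5
    have intS2 : Integrable (fun ω => (π₀ (L ω))⁻¹ * q1 ω
      - (μ₀ (L ω) 1 / π₀ (L ω)) * r1 ω) P := intR1.sub intR2
    have intS3 : Integrable (fun ω => ((π₀ (L ω))⁻¹ * q1 ω
      - (μ₀ (L ω) 1 / π₀ (L ω)) * r1 ω)
      - (1 - π₀ (L ω))⁻¹ * q0 ω) P := intS2.sub intR3
    have intS4 : Integrable (fun ω => (((π₀ (L ω))⁻¹ * q1 ω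
      - (μ₀ (L ω) 1 / π₀ (L ω)) * r1 ω)
      - (1 - π₀ (L ω))⁻¹ * q0 ω)
      + (μ₀ (L ω) 0 / (1 - π₀ (L ω))) * r0 ω) P := intS3.add intR4
    rw [hL1, hR1]
    rw [integral_sub intB5 intE6, integral_add intB4 intE5,
      integral_add intB3 intE4, integral_sub intB2 intE3, integral_sub intE1 intE2]
    rw [integral_add intS4 intR5, integral_add intS3 intR4,
      integral_sub intS2 intR3, integral_sub intR1 intR2]
    have hz : ∫ ω, ψ 0 * G ω ∂P = 0 := by
      rw [integral_const_mul, hGmean', mul_zero]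
    rw [hz, p1, p2, p3, p4, p5]
    ring
  rw [hstep3]
  exact hfinal
end

section
/- Suppose consistency holds (Y = A·Y¹ + (1−A)·Y⁰ almost surely), for a = 0,1 the treatment A and the potential outcome Yᵃ are conditionally independent given σ(L), positivity holds (δ ≤ π₀(L) ≤ 1−δ almost surely for some δ > 0), and Y⁰, Y¹ are integrable. Let V = v(L) for a measurable map v : 𝓛 → 𝒱. Then the conditional average causal effect is identified: E[Y¹ − Y⁰ ∣ σ(V)] = E[μ₀(L,1) − μ₀(L,0) ∣ σ(V)] almost surely. -/
open MeasureTheory ProbabilityTheory Set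

section Aux

variable {Ω : Type*} {m' : MeasurableSpace Ω} [mΩ : MeasurableSpace Ω]
  [StandardBorelSpace Ω] [Nonempty Ω] {P : Measure Ω} [IsFiniteMeasure P]

lemma ae_indepFun_of_condIndepFun (hm' : m' ≤ mΩ) {f g : Ω → ℝ}
    (hf : Measurable f) (hg : Measurable g)
    (hfg : CondIndepFun m' hm' f g P) :
    ∀ᵐ ω ∂P, IndepFun f g (condExpKernel P m' ω) := by
  rw [condIndepFun_iff_condExp_inter_preimage_eq_mul hf hg] at hfg
  have key : ∀ᵐ ω ∂P, ∀ q r : ℚ,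
      condExpKernel P m' ω (f ⁻¹' Iic (q : ℝ) ∩ g ⁻¹' Iic (r : ℝ))
        = condExpKernel P m' ω (f ⁻¹' Iic (q : ℝ))
          * condExpKernel P m' ω (g ⁻¹' Iic (r : ℝ)) := by
    rw [ae_all_iff]
    intro q
    rw [ae_all_iff]
    intro r
    have h := hfg (Iic (q : ℝ)) (Iic (r : ℝ)) measurableSet_Iic measurableSet_Iic
    have h1 := condExpKernel_ae_eq_condExp (μ := P) hm'
      (s := f ⁻¹' Iic (q : ℝ) ∩ g ⁻¹' Iic (r : ℝ))
      ((hf (measurableSet_Iic (a := (q : ℝ)))).inter (hg (measurableSet_Iic (a := (r : ℝ)))))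
    have h2 := condExpKernel_ae_eq_condExp (μ := P) hm' (s := f ⁻¹' Iic (q : ℝ))
      (hf (measurableSet_Iic (a := (q : ℝ))))
    have h3 := condExpKernel_ae_eq_condExp (μ := P) hm' (s := g ⁻¹' Iic (r : ℝ))
      (hg (measurableSet_Iic (a := (r : ℝ))))
    filter_upwards [h, h1, h2, h3] with ω h h1 h2 h3
    have htr : (condExpKernel P m' ω (f ⁻¹' Iic (q : ℝ) ∩ g ⁻¹' Iic (r : ℝ))).toReal
        = ((condExpKernel P m' ω (f ⁻¹' Iic (q : ℝ)))
            * (condExpKernel P m' ω (g ⁻¹' Iic (r : ℝ)))).toReal := by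
      rw [ENNReal.toReal_mul]
      change (condExpKernel P m' ω).real _ = (condExpKernel P m' ω).real _ * (condExpKernel P m' ω).real _
      rw [h1, h, ← h2, ← h3]
    exact (ENNReal.toReal_eq_toReal_iff' (measure_ne_top _ _)
      (ENNReal.mul_ne_top (measure_ne_top _ _) (measure_ne_top _ _))).mp htr
  filter_upwards [key] with ω hω
  haveI : IsProbabilityMeasure (condExpKernel P m' ω) :=
    IsMarkovKernel.isProbabilityMeasure ω
  rw [IndepFun_iff_Indep]
  have hgen : (inferInstance : MeasurableSpace ℝ)
      = MeasurableSpace.generateFrom (⋃ a : ℚ, {Iic (a : ℝ)}) := by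
    rw [BorelSpace.measurable_eq (α := ℝ), Real.borel_eq_generateFrom_Iic_rat]
  have hcomap : ∀ (φ : Ω → ℝ), MeasurableSpace.comap φ (inferInstance : MeasurableSpace ℝ)
      = MeasurableSpace.generateFrom
        {s : Set Ω | ∃ t ∈ (⋃ a : ℚ, {Iic (a : ℝ)}), φ ⁻¹' t = s} := by
    intro φ
    conv_lhs => rw [hgen]
    rw [MeasurableSpace.comap_generateFrom]
    rfl
  refine IndepSets.indep hf.comap_le hg.comap_le
    (Real.isPiSystem_Iic_rat.comap f) (Real.isPiSystem_Iic_rat.comap g)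
    (hcomap f) (hcomap g) ?_
  rw [IndepSets_iff]
  rintro t1 t2 ⟨s1, hs1, rfl⟩ ⟨s2, hs2, rfl⟩
  simp only [mem_iUnion, mem_singleton_iff] at hs1 hs2
  obtain ⟨q, rfl⟩ := hs1
  obtain ⟨r, rfl⟩ := hs2
  exact hω q r

lemma condexp_mul_of_condIndepFun_s10 (hm' : m' ≤ mΩ) {f g : Ω → ℝ}
    (hf : Measurable f) (hg : Measurable g)
    (hfg : CondIndepFun m' hm' f g P) (C : ℝ) (hfC : ∀ ω, |f ω| ≤ C)
    (hgint : Integrable g P) :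
    P[fun ω => f ω * g ω | m'] =ᵐ[P] fun ω => (P[f | m']) ω * (P[g | m']) ω := by
  have hfint : Integrable f P := by
    refine Integrable.mono' (integrable_const C) hf.aestronglyMeasurable
      (Filter.Eventually.of_forall fun ω => ?_)
    simpa [Real.norm_eq_abs] using hfC ω
  have hmul : Integrable (fun ω => f ω * g ω) P := by
    refine Integrable.bdd_mul (c := C) hgint hf.aestronglyMeasurable
      (Filter.Eventually.of_forall fun ω => ?_)
    simpa [Real.norm_eq_abs] using hfC ω
  have h1 := condExp_ae_eq_integral_condExpKernel hm' hmul
  have h2 := condExp_ae_eq_integral_condExpKernel hm' hfint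
  have h3 := condExp_ae_eq_integral_condExpKernel hm' hgint
  have hind := ae_indepFun_of_condIndepFun hm' hf hg hfg
  filter_upwards [h1, h2, h3, hind] with ω h1 h2 h3 hind
  rw [h1, h2, h3]
  exact IndepFun.integral_mul_eq_mul_integral hind hf.aestronglyMeasurable hg.aestronglyMeasurable

end Aux

/-- Main auxiliary step: identification of the conditional effect, phrased with abstract
σ-algebras `mV ≤ m'`. -/
theorem condexp_effect_aux {Ω : Type*} {mV m' : MeasurableSpace Ω}
    [mΩ : MeasurableSpace Ω] [StandardBorelSpace Ω] [Nonempty Ω]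
    {P : Measure Ω} [IsProbabilityMeasure P]
    (hmv : mV ≤ m') (hm' : m' ≤ mΩ)
    (A Y Y0 Y1 p q0 q1 : Ω → ℝ)
    (hA : Measurable A) (hY0 : Measurable Y0) (hY1 : Measurable Y1)
    (hA01 : ∀ ω, A ω = 0 ∨ A ω = 1)
    (hcons : ∀ᵐ ω ∂P, Y ω = A ω * Y1 ω + (1 - A ω) * Y0 ω)
    (hindep0 : CondIndepFun m' hm' A Y0 P)
    (hindep1 : CondIndepFun m' hm' A Y1 P)
    (hY0int : Integrable Y0 P) (hY1int : Integrable Y1 P)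
    (hps : P[(fun ω => if A ω = 1 then (1 : ℝ) else 0) | m'] =ᵐ[P] p)
    (hreg1 : P[(fun ω => Y ω * (if A ω = 1 then (1 : ℝ) else 0)) | m']
        =ᵐ[P] fun ω => q1 ω * p ω)
    (hreg0 : P[(fun ω => Y ω * (if A ω = 0 then (1 : ℝ) else 0)) | m']
        =ᵐ[P] fun ω => q0 ω * (1 - p ω))
    (hppos : ∀ᵐ ω ∂P, p ω ≠ 0 ∧ 1 - p ω ≠ 0) :
    P[(fun ω => Y1 ω - Y0 ω) | mV] =ᵐ[P] P[(fun ω => q1 ω - q0 ω) | mV] := by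
  set ind1 : Ω → ℝ := fun ω => if A ω = 1 then (1 : ℝ) else 0 with hind1def
  set ind0 : Ω → ℝ := fun ω => if A ω = 0 then (1 : ℝ) else 0 with hind0def
  have hφ1 : Measurable fun x : ℝ => if x = 1 then (1 : ℝ) else 0 :=
    Measurable.ite measurableSet_eq measurable_const measurable_const
  have hφ0 : Measurable fun x : ℝ => if x = 0 then (1 : ℝ) else 0 :=
    Measurable.ite measurableSet_eq measurable_const measurable_const
  have hind1m : Measurable ind1 := hφ1.comp hA
  have hind0m : Measurable ind0 := hφ0.comp hA
  have hci1 : CondIndepFun m' hm' ind1 Y1 P := by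
    have := hindep1.comp hφ1 measurable_id
    exact this
  have hci0 : CondIndepFun m' hm' ind0 Y0 P := by
    have := hindep0.comp hφ0 measurable_id
    exact this
  have hbd1 : ∀ ω, |ind1 ω| ≤ 1 := by
    intro ω; simp only [hind1def]; split <;> norm_num
  have hbd0 : ∀ ω, |ind0 ω| ≤ 1 := by
    intro ω; simp only [hind0def]; split <;> norm_num
  have hmul1 := condexp_mul_of_condIndepFun_s10 hm' hind1m hY1 hci1 1 hbd1 hY1int
  have hmul0 := condexp_mul_of_condIndepFun_s10 hm' hind0m hY0 hci0 1 hbd0 hY0int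
  have hcons1 : (fun ω => Y ω * ind1 ω) =ᵐ[P] fun ω => ind1 ω * Y1 ω := by
    filter_upwards [hcons] with ω h
    rcases hA01 ω with h0 | h1
    · norm_num [hind1def, h0]
    · norm_num [hind1def, h1, h]
  have hcons0 : (fun ω => Y ω * ind0 ω) =ᵐ[P] fun ω => ind0 ω * Y0 ω := by
    filter_upwards [hcons] with ω h
    rcases hA01 ω with h0 | h1
    · norm_num [hind0def, h0, h]
    · norm_num [hind0def, h1]
  have hind1int : Integrable ind1 P := by
    refine Integrable.mono' (integrable_const (1 : ℝ)) hind1m.aestronglyMeasurable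
      (Filter.Eventually.of_forall fun ω => ?_)
    simpa [Real.norm_eq_abs] using hbd1 ω
  -- conditional expectation of ind0 is 1 - p
  have hps0 : P[ind0 | m'] =ᵐ[P] fun ω => 1 - p ω := by
    have heq : ind0 = (fun _ => (1 : ℝ)) - ind1 := by
      funext ω
      rcases hA01 ω with h0 | h1
      · simp only [Pi.sub_apply, hind0def, hind1def, h0]
        norm_num
      · simp only [Pi.sub_apply, hind0def, hind1def, h1]
        norm_num
    rw [heq]
    refine (condExp_sub (integrable_const (1 : ℝ)) hind1int m').trans ?_
    rw [condExp_const hm']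
    filter_upwards [hps] with ω h1
    simp only [Pi.sub_apply]
    rw [h1]
  -- identification of E[Y1 | m'] and E[Y0 | m']
  have hEY1 : P[Y1 | m'] =ᵐ[P] q1 := by
    have h1 := (condExp_congr_ae (m := m') hcons1).symm.trans hreg1
    filter_upwards [h1, hmul1, hps, hppos] with ω h1 hmul1 hps hppos
    have : p ω * (P[Y1 | m']) ω = p ω * q1 ω := by
      rw [← hps, ← hmul1, h1, hps]; ring
    exact mul_left_cancel₀ hppos.1 this
  have hEY0 : P[Y0 | m'] =ᵐ[P] q0 := by
    have h0 := (condExp_congr_ae (m := m') hcons0).symm.trans hreg0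
    filter_upwards [h0, hmul0, hps0, hppos] with ω h0 hmul0 hps0 hppos
    have : (1 - p ω) * (P[Y0 | m']) ω = (1 - p ω) * q0 ω := by
      rw [← hps0, ← hmul0, h0, hps0]; ring
    exact mul_left_cancel₀ hppos.2 this
  have hdiff : P[(fun ω => Y1 ω - Y0 ω) | m'] =ᵐ[P] fun ω => q1 ω - q0 ω := by
    refine (condExp_sub hY1int hY0int m').trans ?_
    filter_upwards [hEY1, hEY0] with ω h1 h0
    simp only [Pi.sub_apply]
    rw [h1, h0]
  have tower := condExp_condExp_of_le (μ := P) (f := fun ω => Y1 ω - Y0 ω) hmv hm'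
  exact tower.symm.trans (condExp_congr_ae hdiff)

/-- Under consistency, conditional ignorability for `a = 0,1`, positivity
and integrability, the conditional average causal effect given a coarsening `V = v(L)` of the
covariates is identified:
`E[Y¹ − Y⁰ ∣ σ(V)] = E[μ₀(L,1) − μ₀(L,0) ∣ σ(V)]` almost surely. -/
theorem conditional_effect_identification
    {Ω 𝓛 𝒱 : Type*} [MeasurableSpace Ω] [StandardBorelSpace Ω] [Nonempty Ω]
    [MeasurableSpace 𝓛] [MeasurableSpace 𝒱]
    (P : Measure Ω) [IsProbabilityMeasure P]
    (L : Ω → 𝓛) (A Y Y0 Y1 : Ω → ℝ)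
    (hL : Measurable L) (hA : Measurable A) (hY : Measurable Y)
    (hY0 : Measurable Y0) (hY1 : Measurable Y1)
    (hA01 : ∀ ω, A ω = 0 ∨ A ω = 1)
    -- consistency: Y = A·Y¹ + (1−A)·Y⁰ a.s.
    (hcons : ∀ᵐ ω ∂P, Y ω = A ω * Y1 ω + (1 - A ω) * Y0 ω)
    -- A and Yᵃ are conditionally independent given σ(L), for a = 0, 1
    (hindep0 : CondIndepFun (MeasurableSpace.comap L inferInstance) hL.comap_le A Y0 P)
    (hindep1 : CondIndepFun (MeasurableSpace.comap L inferInstance) hL.comap_le A Y1 P)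
    -- π₀(L) is a version of P(A = 1 ∣ σ(L))
    (π₀ : 𝓛 → ℝ) (hπ₀ : Measurable π₀) (hπ₀01 : ∀ l, 0 ≤ π₀ l ∧ π₀ l ≤ 1)
    (hps : P[(fun ω => if A ω = 1 then (1 : ℝ) else 0) |
        MeasurableSpace.comap L inferInstance] =ᵐ[P] fun ω => π₀ (L ω))
    -- positivity: δ ≤ π₀(L) ≤ 1 − δ a.s. for some δ > 0
    (δ : ℝ) (hδ : 0 < δ) (hpos : ∀ᵐ ω ∂P, δ ≤ π₀ (L ω) ∧ π₀ (L ω) ≤ 1 - δ)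
    -- integrability of the potential outcomes
    (hY0int : Integrable Y0 P) (hY1int : Integrable Y1 P)
    -- outcome regression: E[Y·1{A=a} ∣ σ(L)] = μ₀(L,a)·π₀ₐ(L) a.s. for a = 0, 1
    (μ₀ : 𝓛 → ℝ → ℝ) (hμ₀ : Measurable fun p : 𝓛 × ℝ => μ₀ p.1 p.2)
    (hreg : ∀ a ∈ ({0, 1} : Set ℝ),
      P[(fun ω => Y ω * (if A ω = a then (1 : ℝ) else 0)) |
          MeasurableSpace.comap L inferInstance]
        =ᵐ[P] fun ω => μ₀ (L ω) a * (a * π₀ (L ω) + (1 - a) * (1 - π₀ (L ω))))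
    -- coarsening V = v(L)
    (v : 𝓛 → 𝒱) (hv : Measurable v) :
    P[(fun ω => Y1 ω - Y0 ω) | MeasurableSpace.comap (fun ω => v (L ω)) inferInstance]
      =ᵐ[P]
    P[(fun ω => μ₀ (L ω) 1 - μ₀ (L ω) 0) |
        MeasurableSpace.comap (fun ω => v (L ω)) inferInstance] := by
  have hmv : MeasurableSpace.comap (fun ω => v (L ω)) inferInstance
      ≤ MeasurableSpace.comap L inferInstance := by
    have h : MeasurableSpace.comap (fun ω => v (L ω)) (inferInstance : MeasurableSpace 𝒱)
        = MeasurableSpace.comap L (MeasurableSpace.comap v inferInstance) :=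
      (MeasurableSpace.comap_comp (m := inferInstance) (f := v) (g := L)).symm
    rw [h]
    exact MeasurableSpace.comap_mono hv.comap_le
  have hreg1 := hreg 1 (by norm_num)
  have hreg0 := hreg 0 (by norm_num)
  refine condexp_effect_aux hmv hL.comap_le A Y Y0 Y1
    (fun ω => π₀ (L ω)) (fun ω => μ₀ (L ω) 0) (fun ω => μ₀ (L ω) 1)
    hA hY0 hY1 hA01 hcons hindep0 hindep1 hY0int hY1int hps ?_ ?_ ?_
  · refine hreg1.trans (Filter.Eventually.of_forall fun ω => ?_)
    ring
  · refine hreg0.trans (Filter.Eventually.of_forall fun ω => ?_)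
    ring
  · filter_upwards [hpos] with ω h
    constructor <;> nlinarith [h.1, h.2]
end

section
/- Suppose Y is integrable and positivity holds (δ ≤ π₀(L) ≤ 1−δ almost surely for some δ > 0). Fix a ∈ {0,1}. (i) For every measurable μ̄ : 𝓛 × {0,1} → ℝ with μ̄(L,a) integrable, E[ mₐ(Z; π₀, μ̄) ] = E[ μ₀(L,a) ]. (ii) For every measurable π̄ : 𝓛 → [0,1] with π̄ₐ(L) ≥ δ' > 0 almost surely (where π̄ₐ(L) = a·π̄(L) + (1−a)(1−π̄(L))), and with μ₀(L,a) integrable, E[ mₐ(Z; π̄, μ₀) ] = E[ μ₀(L,a) ]. That is, the doubly robust estimating function is an unbiased estimating function for E[μ₀(L,a)] if either the propensity score or the outcome regression is correctly specified. -/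
open MeasureTheory ProbabilityTheory

/-- Double robustness as an unbiased estimating function: with
`mₐ(Z; π, μ) = 1{A=a}·(Y − μ(L,a))/πₐ(L) + μ(L,a)` and `πₐ(L) = a·π(L) + (1−a)(1−π(L))`,
(i) `E[mₐ(Z; π₀, μ̄)] = E[μ₀(L,a)]` for any outcome model `μ̄`, and
(ii) `E[mₐ(Z; π̄, μ₀)] = E[μ₀(L,a)]` for any propensity model `π̄` bounded away from zero. -/
theorem doubly_robust_unbiasedness
    {Ω 𝓛 : Type*} [MeasurableSpace Ω] [MeasurableSpace 𝓛]
    (P : Measure Ω) [IsProbabilityMeasure P]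
    (L : Ω → 𝓛) (A Y : Ω → ℝ)
    (hL : Measurable L) (hA : Measurable A) (hY : Measurable Y)
    (hA01 : ∀ ω, A ω = 0 ∨ A ω = 1)
    (hYint : Integrable Y P)
    -- π₀(L) is a version of P(A = 1 ∣ σ(L))
    (π₀ : 𝓛 → ℝ) (hπ₀ : Measurable π₀) (hπ₀01 : ∀ l, 0 ≤ π₀ l ∧ π₀ l ≤ 1)
    (hps : P[(fun ω => if A ω = 1 then (1 : ℝ) else 0) |
        MeasurableSpace.comap L inferInstance] =ᵐ[P] fun ω => π₀ (L ω))
    -- positivity: δ ≤ π₀(L) ≤ 1 − δ a.s. for some δ > 0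
    (δ : ℝ) (hδ : 0 < δ) (hpos : ∀ᵐ ω ∂P, δ ≤ π₀ (L ω) ∧ π₀ (L ω) ≤ 1 - δ)
    -- outcome regression: E[Y·1{A=a} ∣ σ(L)] = μ₀(L,a)·π₀ₐ(L) a.s. for a = 0, 1
    (μ₀ : 𝓛 → ℝ → ℝ) (hμ₀ : Measurable fun p : 𝓛 × ℝ => μ₀ p.1 p.2)
    (hreg : ∀ a ∈ ({0, 1} : Set ℝ),
      P[(fun ω => Y ω * (if A ω = a then (1 : ℝ) else 0)) |
          MeasurableSpace.comap L inferInstance]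
        =ᵐ[P] fun ω => μ₀ (L ω) a * (a * π₀ (L ω) + (1 - a) * (1 - π₀ (L ω))))
    -- fix a ∈ {0,1}
    (a : ℝ) (ha : a ∈ ({0, 1} : Set ℝ)) :
    -- (i) correctly specified propensity score, arbitrary outcome model μ̄
    (∀ μbar : 𝓛 → ℝ → ℝ, (Measurable fun p : 𝓛 × ℝ => μbar p.1 p.2) →
      Integrable (fun ω => μbar (L ω) a) P →
      ∫ ω, ((if A ω = a then (1 : ℝ) else 0) * (Y ω - μbar (L ω) a)
            / (a * π₀ (L ω) + (1 - a) * (1 - π₀ (L ω))) + μbar (L ω) a) ∂P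
        = ∫ ω, μ₀ (L ω) a ∂P)
    ∧
    -- (ii) correctly specified outcome regression, arbitrary propensity model π̄
    (∀ πbar : 𝓛 → ℝ, Measurable πbar → (∀ l, 0 ≤ πbar l ∧ πbar l ≤ 1) →
      ∀ δ' : ℝ, 0 < δ' →
      (∀ᵐ ω ∂P, δ' ≤ a * πbar (L ω) + (1 - a) * (1 - πbar (L ω))) →
      Integrable (fun ω => μ₀ (L ω) a) P →
      ∫ ω, ((if A ω = a then (1 : ℝ) else 0) * (Y ω - μ₀ (L ω) a)
            / (a * πbar (L ω) + (1 - a) * (1 - πbar (L ω))) + μ₀ (L ω) a) ∂P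
        = ∫ ω, μ₀ (L ω) a ∂P) := by
  have hm : MeasurableSpace.comap L inferInstance ≤ ‹MeasurableSpace Ω› := hL.comap_le
  -- the indicator
  have hia_meas : Measurable (fun ω => if A ω = a then (1 : ℝ) else 0) :=
    Measurable.ite (hA (measurableSet_singleton a)) measurable_const measurable_const
  have hia_bd : ∀ ω, ‖(if A ω = a then (1 : ℝ) else 0)‖ ≤ 1 := by
    intro ω; split <;> simp
  -- multiplication by the indicator preserves integrability
  have hmul : ∀ g : Ω → ℝ, Integrable g P →
      Integrable (fun ω => (if A ω = a then (1 : ℝ) else 0) * g ω) P := fun g hg =>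
    hg.bdd_mul hia_meas.aestronglyMeasurable (Filter.Eventually.of_forall hia_bd)
  have hia_int : Integrable (fun ω => if A ω = a then (1 : ℝ) else 0) P := by
    simpa using hmul (fun _ => (1 : ℝ)) (integrable_const 1)
  -- conditional expectation of the indicator
  have hEind : P[(fun ω => if A ω = a then (1 : ℝ) else 0)|MeasurableSpace.comap L inferInstance] =ᵐ[P]
      fun ω => a * π₀ (L ω) + (1 - a) * (1 - π₀ (L ω)) := by
    rcases ha with ha | ha
    · -- a = 0
      subst ha
      have hi1 : Integrable (fun ω => if A ω = 1 then (1 : ℝ) else 0) P := by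
        refine (integrable_const (1 : ℝ)).mono'
          (Measurable.ite (hA (measurableSet_singleton 1)) measurable_const
            measurable_const).aestronglyMeasurable ?_
        filter_upwards with ω
        split <;> simp
      have h1 : (fun ω => if A ω = (0:ℝ) then (1 : ℝ) else 0)
          = (fun _ => (1:ℝ)) - fun ω => if A ω = 1 then (1 : ℝ) else 0 := by
        funext ω
        rcases hA01 ω with h | h <;> simp [h]
      have h2 := condExp_sub (m := MeasurableSpace.comap L inferInstance) (μ := P) (integrable_const (1:ℝ)) hi1
      rw [← h1] at h2
      refine h2.trans ?_
      have hc := condExp_const (μ := P) hm (1 : ℝ)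
      filter_upwards [hps] with ω h1'
      simp only [Pi.sub_apply, hc]
      rw [h1']
      ring
    · -- a = 1
      subst ha
      refine hps.trans ?_
      filter_upwards with ω
      ring
  have hπa_meas : Measurable (fun ω => a * π₀ (L ω) + (1 - a) * (1 - π₀ (L ω))) := by
    exact ((hπ₀.comp hL).const_mul a).add
      ((measurable_const.sub (hπ₀.comp hL)).const_mul (1 - a))
  -- a.e. lower bound on πa
  have hπa_pos : ∀ᵐ ω ∂P, δ ≤ a * π₀ (L ω) + (1 - a) * (1 - π₀ (L ω)) := by
    filter_upwards [hpos] with ω hω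
    rcases ha with h | h <;> subst h <;> ring_nf <;> linarith [hω.1, hω.2]
  -- key pull-out lemma
  have key : ∀ h : Ω → ℝ, StronglyMeasurable[MeasurableSpace.comap L inferInstance] h → AEStronglyMeasurable h P →
      ∀ C : ℝ, (∀ᵐ ω ∂P, ‖h ω‖ ≤ C) → ∀ X : Ω → ℝ, Integrable X P →
      ∫ ω, h ω * X ω ∂P = ∫ ω, h ω * (P[X|MeasurableSpace.comap L inferInstance]) ω ∂P := by
    intro h hsm hams C hbd X hXint
    have hint1 : Integrable (fun ω => h ω * X ω) P := hXint.bdd_mul hams hbd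
    have heq : P[h * X|MeasurableSpace.comap L inferInstance] =ᵐ[P] h * P[X|MeasurableSpace.comap L inferInstance] :=
      condExp_mul_of_stronglyMeasurable_left hsm hint1 hXint
    calc ∫ ω, h ω * X ω ∂P = ∫ ω, (P[h * X|MeasurableSpace.comap L inferInstance]) ω ∂P := (integral_condExp hm).symm
      _ = ∫ ω, h ω * (P[X|MeasurableSpace.comap L inferInstance]) ω ∂P := integral_congr_ae heq
  -- strong measurability w.r.t. m of functions of L
  have hsmL : ∀ g : 𝓛 → ℝ, Measurable g → StronglyMeasurable[MeasurableSpace.comap L inferInstance] (fun ω => g (L ω)) :=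
    fun g hg => (hg.comp (comap_measurable L)).stronglyMeasurable
  -- measurability of μ₀(L,a)
  have hμ₀a : Measurable (fun l => μ₀ l a) :=
    hμ₀.comp (measurable_id.prodMk measurable_const)
  have hμ₀La : Measurable (fun ω => μ₀ (L ω) a) := hμ₀a.comp hL
  have hregA : P[(fun ω => Y ω * (if A ω = a then (1 : ℝ) else 0))|MeasurableSpace.comap L inferInstance] =ᵐ[P]
      fun ω => μ₀ (L ω) a * (a * π₀ (L ω) + (1 - a) * (1 - π₀ (L ω))) := hreg a ha
  -- integrability of μ₀(L,a)
  have hμ₀int : Integrable (fun ω => μ₀ (L ω) a) P := by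
    have hg : Integrable (P[(fun ω => Y ω * (if A ω = a then (1:ℝ) else 0))|MeasurableSpace.comap L inferInstance]) P :=
      integrable_condExp
    refine Integrable.mono' (hg.norm.smul δ⁻¹) hμ₀La.aestronglyMeasurable ?_
    filter_upwards [hregA, hπa_pos] with ω h1 h2
    have hπpos : (0:ℝ) < a * π₀ (L ω) + (1 - a) * (1 - π₀ (L ω)) := by linarith
    have hkey : |μ₀ (L ω) a| * (a * π₀ (L ω) + (1 - a) * (1 - π₀ (L ω)))
        = |(P[(fun ω => Y ω * (if A ω = a then (1:ℝ) else 0))|MeasurableSpace.comap L inferInstance]) ω| := by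
      rw [h1, abs_mul, abs_of_pos hπpos]
    simp only [Pi.smul_apply, smul_eq_mul, Real.norm_eq_abs]
    rw [inv_mul_eq_div, le_div_iff₀ hδ]
    calc |μ₀ (L ω) a| * δ
        ≤ |μ₀ (L ω) a| * (a * π₀ (L ω) + (1 - a) * (1 - π₀ (L ω))) :=
          mul_le_mul_of_nonneg_left h2 (abs_nonneg _)
      _ = _ := hkey
  -- conditional expectation of ia * (Y - μf) for an m-measurable integrable μf
  have hcond : ∀ μf : Ω → ℝ, StronglyMeasurable[MeasurableSpace.comap L inferInstance] μf → Integrable μf P →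
      P[(fun ω => (if A ω = a then (1:ℝ) else 0) * (Y ω - μf ω))|MeasurableSpace.comap L inferInstance] =ᵐ[P]
        fun ω => (μ₀ (L ω) a - μf ω) * (a * π₀ (L ω) + (1 - a) * (1 - π₀ (L ω))) := by
    intro μf hμsm hμint
    have hYia : Integrable (fun ω => Y ω * (if A ω = a then (1:ℝ) else 0)) P :=
      (hmul Y hYint).congr (Filter.Eventually.of_forall fun ω => mul_comm _ _)
    have hμia : Integrable (μf * fun ω => if A ω = a then (1:ℝ) else 0) P :=
      (hmul μf hμint).congr (Filter.Eventually.of_forall fun ω => mul_comm _ _)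
    have h1 : (fun ω => (if A ω = a then (1:ℝ) else 0) * (Y ω - μf ω))
        = (fun ω => Y ω * (if A ω = a then (1:ℝ) else 0))
          - (μf * fun ω => if A ω = a then (1:ℝ) else 0) := by
      funext ω; simp only [Pi.sub_apply, Pi.mul_apply]; ring
    have h2 := condExp_sub (m := MeasurableSpace.comap L inferInstance) (μ := P) hYia hμia
    rw [← h1] at h2
    have h3 : P[(μf * fun ω => if A ω = a then (1:ℝ) else 0)|MeasurableSpace.comap L inferInstance] =ᵐ[P]
        μf * P[(fun ω => if A ω = a then (1:ℝ) else 0)|MeasurableSpace.comap L inferInstance] :=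
      condExp_mul_of_stronglyMeasurable_left hμsm hμia hia_int
    refine h2.trans ?_
    filter_upwards [hregA, h3, hEind] with ω e1 e2 e3
    simp only [Pi.sub_apply, Pi.mul_apply] at *
    rw [e1, e2, e3]
    ring
  constructor
  · -- part (i)
    intro μbar hμbarmeas hμbarint
    have hμbara : Measurable (fun l => μbar l a) :=
      hμbarmeas.comp (measurable_id.prodMk measurable_const)
    have hμbarLa : Measurable (fun ω => μbar (L ω) a) := hμbara.comp hL
    have hXint : Integrable
        (fun ω => (if A ω = a then (1:ℝ) else 0) * (Y ω - μbar (L ω) a)) P :=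
      hmul _ (hYint.sub hμbarint)
    have hinv_sm : StronglyMeasurable[MeasurableSpace.comap L inferInstance]
        (fun ω => (a * π₀ (L ω) + (1 - a) * (1 - π₀ (L ω)))⁻¹) :=
      hsmL (fun l => (a * π₀ l + (1 - a) * (1 - π₀ l))⁻¹)
        (((hπ₀.const_mul a).add ((measurable_const.sub hπ₀).const_mul (1 - a))).inv)
    have hinv_bd : ∀ᵐ ω ∂P, ‖(a * π₀ (L ω) + (1 - a) * (1 - π₀ (L ω)))⁻¹‖ ≤ δ⁻¹ := by
      filter_upwards [hπa_pos] with ω h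
      have h0 : (0:ℝ) < a * π₀ (L ω) + (1 - a) * (1 - π₀ (L ω)) := lt_of_lt_of_le hδ h
      rw [Real.norm_eq_abs, abs_of_pos (inv_pos.mpr h0)]
      exact inv_anti₀ hδ h
    have hIXint : Integrable (fun ω =>
        (a * π₀ (L ω) + (1 - a) * (1 - π₀ (L ω)))⁻¹ *
        ((if A ω = a then (1:ℝ) else 0) * (Y ω - μbar (L ω) a))) P :=
      hXint.bdd_mul hπa_meas.inv.aestronglyMeasurable hinv_bd
    have hstep1 : ∫ ω, ((if A ω = a then (1:ℝ) else 0) * (Y ω - μbar (L ω) a)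
          / (a * π₀ (L ω) + (1 - a) * (1 - π₀ (L ω))) + μbar (L ω) a) ∂P
        = (∫ ω, (a * π₀ (L ω) + (1 - a) * (1 - π₀ (L ω)))⁻¹ *
            ((if A ω = a then (1:ℝ) else 0) * (Y ω - μbar (L ω) a)) ∂P)
          + ∫ ω, μbar (L ω) a ∂P := by
      rw [← integral_add hIXint hμbarint]
      exact integral_congr_ae (Filter.Eventually.of_forall fun ω => by ring)
    have hstep2 : ∫ ω, (a * π₀ (L ω) + (1 - a) * (1 - π₀ (L ω)))⁻¹ *
          ((if A ω = a then (1:ℝ) else 0) * (Y ω - μbar (L ω) a)) ∂P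
        = ∫ ω, (a * π₀ (L ω) + (1 - a) * (1 - π₀ (L ω)))⁻¹ *
          (P[(fun ω => (if A ω = a then (1:ℝ) else 0) * (Y ω - μbar (L ω) a))|MeasurableSpace.comap L inferInstance]) ω ∂P :=
      key _ hinv_sm hπa_meas.inv.aestronglyMeasurable δ⁻¹ hinv_bd
        (fun ω => (if A ω = a then (1:ℝ) else 0) * (Y ω - μbar (L ω) a)) hXint
    have hcondX : P[(fun ω => (if A ω = a then (1:ℝ) else 0) * (Y ω - μbar (L ω) a))|MeasurableSpace.comap L inferInstance]
        =ᵐ[P] fun ω => (μ₀ (L ω) a - μbar (L ω) a) * (a * π₀ (L ω) + (1 - a) * (1 - π₀ (L ω))) :=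
      hcond (fun ω => μbar (L ω) a) (hsmL _ hμbara) hμbarint
    have hstep3 : ∫ ω, (a * π₀ (L ω) + (1 - a) * (1 - π₀ (L ω)))⁻¹ *
        (P[(fun ω => (if A ω = a then (1:ℝ) else 0) * (Y ω - μbar (L ω) a))|MeasurableSpace.comap L inferInstance]) ω ∂P
        = ∫ ω, (μ₀ (L ω) a - μbar (L ω) a) ∂P := by
      refine integral_congr_ae ?_
      filter_upwards [hcondX, hπa_pos] with ω h1 h2
      have h0 : a * π₀ (L ω) + (1 - a) * (1 - π₀ (L ω)) ≠ 0 := by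
        intro h'; rw [h'] at h2; linarith
      rw [h1]
      field_simp
    rw [hstep1, hstep2, hstep3, integral_sub hμ₀int hμbarint]
    ring
  · -- part (ii)
    intro πbar hπbar hπbar01 δ' hδ' hbd' hμ₀int'
    have hπb_meas : Measurable (fun ω => a * πbar (L ω) + (1 - a) * (1 - πbar (L ω))) :=
      ((hπbar.comp hL).const_mul a).add
        ((measurable_const.sub (hπbar.comp hL)).const_mul (1 - a))
    have hXint : Integrable
        (fun ω => (if A ω = a then (1:ℝ) else 0) * (Y ω - μ₀ (L ω) a)) P :=
      hmul _ (hYint.sub hμ₀int')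
    have hinv_sm : StronglyMeasurable[MeasurableSpace.comap L inferInstance]
        (fun ω => (a * πbar (L ω) + (1 - a) * (1 - πbar (L ω)))⁻¹) :=
      hsmL (fun l => (a * πbar l + (1 - a) * (1 - πbar l))⁻¹)
        (((hπbar.const_mul a).add ((measurable_const.sub hπbar).const_mul (1 - a))).inv)
    have hinv_bd : ∀ᵐ ω ∂P, ‖(a * πbar (L ω) + (1 - a) * (1 - πbar (L ω)))⁻¹‖ ≤ δ'⁻¹ := by
      filter_upwards [hbd'] with ω h
      have h0 : (0:ℝ) < a * πbar (L ω) + (1 - a) * (1 - πbar (L ω)) := lt_of_lt_of_le hδ' h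
      rw [Real.norm_eq_abs, abs_of_pos (inv_pos.mpr h0)]
      exact inv_anti₀ hδ' h
    have hIXint : Integrable (fun ω =>
        (a * πbar (L ω) + (1 - a) * (1 - πbar (L ω)))⁻¹ *
        ((if A ω = a then (1:ℝ) else 0) * (Y ω - μ₀ (L ω) a))) P :=
      hXint.bdd_mul hπb_meas.inv.aestronglyMeasurable hinv_bd
    have hstep1 : ∫ ω, ((if A ω = a then (1:ℝ) else 0) * (Y ω - μ₀ (L ω) a)
          / (a * πbar (L ω) + (1 - a) * (1 - πbar (L ω))) + μ₀ (L ω) a) ∂P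
        = (∫ ω, (a * πbar (L ω) + (1 - a) * (1 - πbar (L ω)))⁻¹ *
            ((if A ω = a then (1:ℝ) else 0) * (Y ω - μ₀ (L ω) a)) ∂P)
          + ∫ ω, μ₀ (L ω) a ∂P := by
      rw [← integral_add hIXint hμ₀int']
      exact integral_congr_ae (Filter.Eventually.of_forall fun ω => by ring)
    have hstep2 : ∫ ω, (a * πbar (L ω) + (1 - a) * (1 - πbar (L ω)))⁻¹ *
          ((if A ω = a then (1:ℝ) else 0) * (Y ω - μ₀ (L ω) a)) ∂P
        = ∫ ω, (a * πbar (L ω) + (1 - a) * (1 - πbar (L ω)))⁻¹ *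
          (P[(fun ω => (if A ω = a then (1:ℝ) else 0) * (Y ω - μ₀ (L ω) a))|MeasurableSpace.comap L inferInstance]) ω ∂P :=
      key _ hinv_sm hπb_meas.inv.aestronglyMeasurable δ'⁻¹ hinv_bd
        (fun ω => (if A ω = a then (1:ℝ) else 0) * (Y ω - μ₀ (L ω) a)) hXint
    have hcondX : P[(fun ω => (if A ω = a then (1:ℝ) else 0) * (Y ω - μ₀ (L ω) a))|MeasurableSpace.comap L inferInstance]
        =ᵐ[P] fun ω => (μ₀ (L ω) a - μ₀ (L ω) a) * (a * π₀ (L ω) + (1 - a) * (1 - π₀ (L ω))) :=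
      hcond (fun ω => μ₀ (L ω) a) (hsmL _ hμ₀a) hμ₀int'
    have hstep3 : ∫ ω, (a * πbar (L ω) + (1 - a) * (1 - πbar (L ω)))⁻¹ *
        (P[(fun ω => (if A ω = a then (1:ℝ) else 0) * (Y ω - μ₀ (L ω) a))|MeasurableSpace.comap L inferInstance]) ω ∂P
        = 0 := by
      have h0 : (fun ω => (a * πbar (L ω) + (1 - a) * (1 - πbar (L ω)))⁻¹ *
          (P[(fun ω => (if A ω = a then (1:ℝ) else 0) * (Y ω - μ₀ (L ω) a))|MeasurableSpace.comap L inferInstance]) ω)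
          =ᵐ[P] fun _ => (0:ℝ) := by
        filter_upwards [hcondX] with ω h1
        rw [h1]
        ring
      rw [integral_congr_ae h0, integral_zero]
    rw [hstep1, hstep2, hstep3, zero_add]
end

section
/- Suppose Y is integrable and positivity holds (δ ≤ π₀(L) ≤ 1−δ almost surely for some δ > 0). Fix a ∈ {0,1}, and let π̂ : 𝓛 → [0,1] be measurable with π̂ₐ(L) ≥ δ' > 0 almost surely, and μ̂ : 𝓛 × {0,1} → ℝ be measurable with μ₀(L,a) and μ̂(L,a) square-integrable. Then the bias of the doubly robust functional admits the exact second-order product representation: E[ mₐ(Z; π̂, μ̂) ] − E[ μ₀(L,a) ] = E[ ((π₀ₐ(L) − π̂ₐ(L)) / π̂ₐ(L)) · (μ₀(L,a) − μ̂(L,a)) ]. -/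
open MeasureTheory ProbabilityTheory

private lemma dr_aux {Ω : Type*} {m0 : MeasurableSpace Ω} (P : Measure Ω) [IsProbabilityMeasure P]
    {m : MeasurableSpace Ω} (hm : m ≤ m0)
    (Dv π0av Ind Yf μh μz : Ω → ℝ)
    (δ' : ℝ) (hδ' : 0 < δ')
    (hDpos : ∀ᵐ ω ∂P, δ' ≤ Dv ω)
    (hπ0abd : ∀ ω, |π0av ω| ≤ 1)
    (hIndbd : ∀ ω, |Ind ω| ≤ 1)
    (hGsm : StronglyMeasurable[m] (fun ω => (Dv ω)⁻¹))
    (hGμhsm : StronglyMeasurable[m] (fun ω => (Dv ω)⁻¹ * μh ω))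
    (hπ0asm : AEStronglyMeasurable[m0] π0av P)
    (hIndsm : AEStronglyMeasurable[m0] Ind P)
    (hYint : Integrable Yf P)
    (hμhInt : Integrable μh P) (hμzInt : Integrable μz P)
    (hIndInt : Integrable Ind P)
    (hcondInd : P[Ind|m] =ᵐ[P] π0av)
    (hcondY : P[(fun ω => Yf ω * Ind ω)|m] =ᵐ[P] fun ω => μz ω * π0av ω) :
    (∫ ω, (Ind ω * (Yf ω - μh ω) / Dv ω + μh ω) ∂P) - ∫ ω, μz ω ∂P
      = ∫ ω, ((π0av ω - Dv ω) / Dv ω) * (μz ω - μh ω) ∂P := by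
  have hGbd : ∀ᵐ ω ∂P, (0:ℝ) < Dv ω ∧ |(Dv ω)⁻¹| ≤ δ'⁻¹ := by
    filter_upwards [hDpos] with ω h
    have h0 : 0 < Dv ω := lt_of_lt_of_le hδ' h
    exact ⟨h0, by rw [abs_of_pos (inv_pos.2 h0)]; exact inv_anti₀ hδ' h⟩
  -- generic integrability of (Dv)⁻¹ * u * v with |v| ≤ 1
  have key : ∀ (u v : Ω → ℝ), Integrable u P → AEStronglyMeasurable[m0] v P → (∀ ω, |v ω| ≤ 1) →
      Integrable (fun ω => (Dv ω)⁻¹ * u ω * v ω) P := by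
    intro u v hu hv hvbd
    refine (hu.abs.const_mul δ'⁻¹).mono'
      (((hGsm.mono hm).aestronglyMeasurable.mul hu.1).mul hv) ?_
    filter_upwards [hGbd] with ω h
    obtain ⟨h0, h2⟩ := h
    rw [Real.norm_eq_abs, abs_mul, abs_mul]
    calc |(Dv ω)⁻¹| * |u ω| * |v ω| ≤ δ'⁻¹ * |u ω| * 1 :=
          mul_le_mul (mul_le_mul_of_nonneg_right h2 (abs_nonneg _)) (hvbd ω) (abs_nonneg _)
            (by positivity)
      _ = δ'⁻¹ * |u ω| := mul_one _
  have hint1 := key Yf Ind hYint hIndsm hIndbd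
  have hint2 := key μh Ind hμhInt hIndsm hIndbd
  have hint3 := key μz π0av hμzInt hπ0asm hπ0abd
  have hint4 := key μh π0av hμhInt hπ0asm hπ0abd
  have hint1' : Integrable (fun ω => (Dv ω)⁻¹ * (Yf ω * Ind ω)) P :=
    hint1.congr (ae_of_all _ fun ω => by ring)
  have hint3' : Integrable (fun ω => (Dv ω)⁻¹ * (μz ω * π0av ω)) P :=
    hint3.congr (ae_of_all _ fun ω => by ring)
  have hYIndInt : Integrable (fun ω => Yf ω * Ind ω) P := by
    refine hYint.abs.mono' (hYint.1.mul hIndsm) (ae_of_all _ fun ω => ?_)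
    rw [Real.norm_eq_abs, abs_mul]
    calc |Yf ω| * |Ind ω| ≤ |Yf ω| * 1 := mul_le_mul_of_nonneg_left (hIndbd ω) (abs_nonneg _)
      _ = |Yf ω| := mul_one _
  -- pull-out property, first term
  have key1 : ∫ ω, (Dv ω)⁻¹ * (Yf ω * Ind ω) ∂P = ∫ ω, (Dv ω)⁻¹ * (μz ω * π0av ω) ∂P := by
    calc ∫ ω, (Dv ω)⁻¹ * (Yf ω * Ind ω) ∂P
        = ∫ ω, (P[(fun ω => (Dv ω)⁻¹ * (Yf ω * Ind ω))|m]) ω ∂P := (integral_condExp hm).symm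
      _ = ∫ ω, (Dv ω)⁻¹ * (P[(fun ω => Yf ω * Ind ω)|m]) ω ∂P :=
          integral_congr_ae (condExp_mul_of_stronglyMeasurable_left hGsm hint1' hYIndInt)
      _ = ∫ ω, (Dv ω)⁻¹ * (μz ω * π0av ω) ∂P := by
          refine integral_congr_ae ?_
          filter_upwards [hcondY] with ω h
          rw [h]
  -- pull-out property, second term
  have key2 : ∫ ω, (Dv ω)⁻¹ * μh ω * Ind ω ∂P = ∫ ω, (Dv ω)⁻¹ * μh ω * π0av ω ∂P := by
    calc ∫ ω, (Dv ω)⁻¹ * μh ω * Ind ω ∂P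
        = ∫ ω, (P[(fun ω => (Dv ω)⁻¹ * μh ω * Ind ω)|m]) ω ∂P := (integral_condExp hm).symm
      _ = ∫ ω, (Dv ω)⁻¹ * μh ω * (P[Ind|m]) ω ∂P :=
          integral_congr_ae (condExp_mul_of_stronglyMeasurable_left hGμhsm hint2 hIndInt)
      _ = ∫ ω, (Dv ω)⁻¹ * μh ω * π0av ω ∂P := by
          refine integral_congr_ae ?_
          filter_upwards [hcondInd] with ω h
          rw [h]
  -- split the left-hand side
  have hL1 : ∫ ω, (Ind ω * (Yf ω - μh ω) / Dv ω + μh ω) ∂P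
      = (∫ ω, (Dv ω)⁻¹ * (Yf ω * Ind ω) ∂P) - (∫ ω, (Dv ω)⁻¹ * μh ω * Ind ω ∂P)
        + ∫ ω, μh ω ∂P := by
    have h1 : ∫ ω, ((Dv ω)⁻¹ * (Yf ω * Ind ω) - (Dv ω)⁻¹ * μh ω * Ind ω + μh ω) ∂P
        = (∫ ω, (Dv ω)⁻¹ * (Yf ω * Ind ω) ∂P) - (∫ ω, (Dv ω)⁻¹ * μh ω * Ind ω ∂P)
          + ∫ ω, μh ω ∂P := by
      have hsub12 : Integrable (fun ω => (Dv ω)⁻¹ * (Yf ω * Ind ω)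
          - (Dv ω)⁻¹ * μh ω * Ind ω) P := hint1'.sub hint2
      rw [integral_add hsub12 hμhInt, integral_sub hint1' hint2]
    rw [← h1]
    refine integral_congr_ae (ae_of_all _ fun ω => ?_)
    show Ind ω * (Yf ω - μh ω) / Dv ω + μh ω = _
    rw [div_eq_mul_inv]; ring
  -- split the right-hand side
  have hR : ∫ ω, ((π0av ω - Dv ω) / Dv ω) * (μz ω - μh ω) ∂P
      = (∫ ω, (Dv ω)⁻¹ * (μz ω * π0av ω) ∂P) - (∫ ω, (Dv ω)⁻¹ * μh ω * π0av ω ∂P)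
        - (∫ ω, μz ω ∂P) + ∫ ω, μh ω ∂P := by
    have h1 : ∫ ω, ((Dv ω)⁻¹ * (μz ω * π0av ω) - (Dv ω)⁻¹ * μh ω * π0av ω - μz ω + μh ω) ∂P
        = (∫ ω, (Dv ω)⁻¹ * (μz ω * π0av ω) ∂P) - (∫ ω, (Dv ω)⁻¹ * μh ω * π0av ω ∂P)
          - (∫ ω, μz ω ∂P) + ∫ ω, μh ω ∂P := by
      have hsub34 : Integrable (fun ω => (Dv ω)⁻¹ * (μz ω * π0av ω)
          - (Dv ω)⁻¹ * μh ω * π0av ω) P := hint3'.sub hint4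
      have hsub34' : Integrable (fun ω => (Dv ω)⁻¹ * (μz ω * π0av ω)
          - (Dv ω)⁻¹ * μh ω * π0av ω - μz ω) P := hsub34.sub hμzInt
      rw [integral_add hsub34' hμhInt, integral_sub hsub34 hμzInt, integral_sub hint3' hint4]
    rw [← h1]
    refine integral_congr_ae ?_
    filter_upwards [hDpos] with ω h
    have h0 : Dv ω ≠ 0 := ne_of_gt (lt_of_lt_of_le hδ' h)
    show (π0av ω - Dv ω) / Dv ω * (μz ω - μh ω) = _
    field_simp
    ring
  rw [hL1, hR, key1, key2]
  ring

/-- Exact second-order product representation of the bias of the doubly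
robust functional:
`E[mₐ(Z; π̂, μ̂)] − E[μ₀(L,a)] = E[((π₀ₐ(L) − π̂ₐ(L))/π̂ₐ(L))·(μ₀(L,a) − μ̂(L,a))]`. -/
theorem doubly_robust_second_order_bias
    {Ω 𝓛 : Type*} [MeasurableSpace Ω] [MeasurableSpace 𝓛]
    (P : Measure Ω) [IsProbabilityMeasure P]
    (L : Ω → 𝓛) (A Y : Ω → ℝ)
    (hL : Measurable L) (hA : Measurable A) (hY : Measurable Y)
    (hA01 : ∀ ω, A ω = 0 ∨ A ω = 1)
    (hYint : Integrable Y P)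
    -- π₀(L) is a version of P(A = 1 ∣ σ(L))
    (π₀ : 𝓛 → ℝ) (hπ₀ : Measurable π₀) (hπ₀01 : ∀ l, 0 ≤ π₀ l ∧ π₀ l ≤ 1)
    (hps : P[(fun ω => if A ω = 1 then (1 : ℝ) else 0) |
        MeasurableSpace.comap L inferInstance] =ᵐ[P] fun ω => π₀ (L ω))
    -- positivity: δ ≤ π₀(L) ≤ 1 − δ a.s. for some δ > 0
    (δ : ℝ) (hδ : 0 < δ) (hpos : ∀ᵐ ω ∂P, δ ≤ π₀ (L ω) ∧ π₀ (L ω) ≤ 1 - δ)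
    -- outcome regression: E[Y·1{A=a} ∣ σ(L)] = μ₀(L,a)·π₀ₐ(L) a.s. for a = 0, 1
    (μ₀ : 𝓛 → ℝ → ℝ) (hμ₀ : Measurable fun p : 𝓛 × ℝ => μ₀ p.1 p.2)
    (hreg : ∀ a ∈ ({0, 1} : Set ℝ),
      P[(fun ω => Y ω * (if A ω = a then (1 : ℝ) else 0)) |
          MeasurableSpace.comap L inferInstance]
        =ᵐ[P] fun ω => μ₀ (L ω) a * (a * π₀ (L ω) + (1 - a) * (1 - π₀ (L ω))))
    -- fix a ∈ {0,1}
    (a : ℝ) (ha : a ∈ ({0, 1} : Set ℝ))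
    -- estimated nuisance functions
    (πhat : 𝓛 → ℝ) (hπhat : Measurable πhat) (hπhat01 : ∀ l, 0 ≤ πhat l ∧ πhat l ≤ 1)
    (δ' : ℝ) (hδ' : 0 < δ')
    (hπhatpos : ∀ᵐ ω ∂P, δ' ≤ a * πhat (L ω) + (1 - a) * (1 - πhat (L ω)))
    (μhat : 𝓛 → ℝ → ℝ) (hμhat : Measurable fun p : 𝓛 × ℝ => μhat p.1 p.2)
    (hμ₀L2 : MemLp (fun ω => μ₀ (L ω) a) 2 P)
    (hμhatL2 : MemLp (fun ω => μhat (L ω) a) 2 P) :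
    (∫ ω, ((if A ω = a then (1 : ℝ) else 0) * (Y ω - μhat (L ω) a)
          / (a * πhat (L ω) + (1 - a) * (1 - πhat (L ω))) + μhat (L ω) a) ∂P)
      - ∫ ω, μ₀ (L ω) a ∂P
    = ∫ ω, (((a * π₀ (L ω) + (1 - a) * (1 - π₀ (L ω)))
            - (a * πhat (L ω) + (1 - a) * (1 - πhat (L ω))))
          / (a * πhat (L ω) + (1 - a) * (1 - πhat (L ω))))
        * (μ₀ (L ω) a - μhat (L ω) a) ∂P := by
  have ha' : a = 0 ∨ a = 1 := by
    simpa [Set.mem_insert_iff, Set.mem_singleton_iff] using ha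
  have hm : MeasurableSpace.comap L inferInstance ≤ ‹MeasurableSpace Ω› := hL.comap_le
  have hLm : Measurable[MeasurableSpace.comap L inferInstance] L :=
    measurable_iff_comap_le.mpr le_rfl
  have hgD : Measurable (fun l => (a * πhat l + (1 - a) * (1 - πhat l))⁻¹) := by fun_prop
  have hgμh : Measurable (fun l : 𝓛 => μhat l a) :=
    hμhat.comp (measurable_id.prodMk measurable_const)
  have hGsm : StronglyMeasurable[MeasurableSpace.comap L inferInstance]
      (fun ω => (a * πhat (L ω) + (1 - a) * (1 - πhat (L ω)))⁻¹) :=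
    (hgD.comp hLm).stronglyMeasurable
  have hGμhsm : StronglyMeasurable[MeasurableSpace.comap L inferInstance]
      (fun ω => (a * πhat (L ω) + (1 - a) * (1 - πhat (L ω)))⁻¹ * μhat (L ω) a) :=
    ((hgD.mul hgμh).comp hLm).stronglyMeasurable
  have hπ0abd : ∀ ω, |a * π₀ (L ω) + (1 - a) * (1 - π₀ (L ω))| ≤ 1 := by
    intro ω
    obtain ⟨h1, h2⟩ := hπ₀01 (L ω)
    rcases ha' with rfl | rfl <;> rw [abs_le] <;> constructor <;> nlinarith
  have hIndbd : ∀ ω, |(if A ω = a then (1:ℝ) else 0)| ≤ 1 := by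
    intro ω; split_ifs <;> simp
  have hIndmeas : Measurable (fun ω => if A ω = a then (1:ℝ) else 0) :=
    Measurable.ite (hA (measurableSet_singleton a)) measurable_const measurable_const
  have hIndInt : Integrable (fun ω => if A ω = a then (1:ℝ) else 0) P :=
    ⟨hIndmeas.aestronglyMeasurable,
      HasFiniteIntegral.of_bounded (C := 1)
        (ae_of_all _ fun ω => by rw [Real.norm_eq_abs]; exact hIndbd ω)⟩
  have hμhInt : Integrable (fun ω => μhat (L ω) a) P := hμhatL2.integrable one_le_two
  have hμzInt : Integrable (fun ω => μ₀ (L ω) a) P := hμ₀L2.integrable one_le_two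
  have hcondInd : P[(fun ω => if A ω = a then (1:ℝ) else 0) |
      MeasurableSpace.comap L inferInstance]
      =ᵐ[P] fun ω => a * π₀ (L ω) + (1 - a) * (1 - π₀ (L ω)) := by
    rcases ha' with rfl | rfl
    · have hI1int : Integrable (fun ω => if A ω = (1:ℝ) then (1:ℝ) else 0) P :=
        ⟨(Measurable.ite (hA (measurableSet_singleton 1)) measurable_const
            measurable_const).aestronglyMeasurable,
          HasFiniteIntegral.of_bounded (C := 1)
            (ae_of_all _ fun ω => by rw [Real.norm_eq_abs]; split_ifs <;> simp)⟩
      have hfun : (fun ω => if A ω = (0:ℝ) then (1:ℝ) else 0)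
          = (fun _ => (1:ℝ)) - (fun ω => if A ω = (1:ℝ) then (1:ℝ) else 0) := by
        funext ω
        rcases hA01 ω with h | h <;> simp [Pi.sub_apply, h]
      rw [hfun]
      refine (condExp_sub (integrable_const (1:ℝ)) hI1int _).trans ?_
      filter_upwards [hps] with ω h
      simp only [Pi.sub_apply, condExp_const hm, h]
      ring
    · refine hps.trans (ae_of_all _ fun ω => by ring)
  exact dr_aux P hm
    (fun ω => a * πhat (L ω) + (1 - a) * (1 - πhat (L ω)))
    (fun ω => a * π₀ (L ω) + (1 - a) * (1 - π₀ (L ω)))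
    (fun ω => if A ω = a then (1:ℝ) else 0) Y
    (fun ω => μhat (L ω) a) (fun ω => μ₀ (L ω) a)
    δ' hδ' hπhatpos hπ0abd hIndbd hGsm hGμhsm
    (((measurable_const.mul (hπ₀.comp hL)).add
      (measurable_const.mul (measurable_const.sub (hπ₀.comp hL)))).aestronglyMeasurable)
    hIndmeas.aestronglyMeasurable hYint hμhInt hμzInt hIndInt hcondInd (hreg a ha)
end

section
/- Suppose Y is integrable and positivity holds (δ ≤ π₀(L) ≤ 1−δ almost surely for some δ > 0). Fix a ∈ {0,1}, and let π̂ : 𝓛 → [0,1] be measurable with π̂ₐ(L) ≥ δ' > 0 almost surely, and μ̂ : 𝓛 × {0,1} → ℝ be measurable with μ₀(L,a) and μ̂(L,a) square-integrable. Then the bias of the doubly robust functional is bounded by the product of root-mean-square nuisance errors: |E[ mₐ(Z; π̂, μ̂) ] − E[ μ₀(L,a) ]| ≤ (1/δ') · ‖π̂ₐ(L) − π₀ₐ(L)‖_{L²(P)} · ‖μ̂(L,a) − μ₀(L,a)‖_{L²(P)}. -/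
open MeasureTheory ProbabilityTheory

/-- The bias of the doubly robust functional is bounded by the product of
root-mean-square nuisance errors:
`|E[mₐ(Z; π̂, μ̂)] − E[μ₀(L,a)]| ≤ (1/δ')·‖π̂ₐ(L) − π₀ₐ(L)‖_{L²}·‖μ̂(L,a) − μ₀(L,a)‖_{L²}`. -/
theorem doubly_robust_bias_bound
    {Ω 𝓛 : Type*} [MeasurableSpace Ω] [MeasurableSpace 𝓛]
    (P : Measure Ω) [IsProbabilityMeasure P]
    (L : Ω → 𝓛) (A Y : Ω → ℝ)
    (hL : Measurable L) (hA : Measurable A) (hY : Measurable Y)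
    (hA01 : ∀ ω, A ω = 0 ∨ A ω = 1)
    (hYint : Integrable Y P)
    -- π₀(L) is a version of P(A = 1 ∣ σ(L))
    (π₀ : 𝓛 → ℝ) (hπ₀ : Measurable π₀) (hπ₀01 : ∀ l, 0 ≤ π₀ l ∧ π₀ l ≤ 1)
    (hps : P[(fun ω => if A ω = 1 then (1 : ℝ) else 0) |
        MeasurableSpace.comap L inferInstance] =ᵐ[P] fun ω => π₀ (L ω))
    -- positivity: δ ≤ π₀(L) ≤ 1 − δ a.s. for some δ > 0
    (δ : ℝ) (hδ : 0 < δ) (hpos : ∀ᵐ ω ∂P, δ ≤ π₀ (L ω) ∧ π₀ (L ω) ≤ 1 - δ)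
    -- outcome regression: E[Y·1{A=a} ∣ σ(L)] = μ₀(L,a)·π₀ₐ(L) a.s. for a = 0, 1
    (μ₀ : 𝓛 → ℝ → ℝ) (hμ₀ : Measurable fun p : 𝓛 × ℝ => μ₀ p.1 p.2)
    (hreg : ∀ a ∈ ({0, 1} : Set ℝ),
      P[(fun ω => Y ω * (if A ω = a then (1 : ℝ) else 0)) |
          MeasurableSpace.comap L inferInstance]
        =ᵐ[P] fun ω => μ₀ (L ω) a * (a * π₀ (L ω) + (1 - a) * (1 - π₀ (L ω))))
    -- fix a ∈ {0,1}
    (a : ℝ) (ha : a ∈ ({0, 1} : Set ℝ))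
    -- estimated nuisance functions
    (πhat : 𝓛 → ℝ) (hπhat : Measurable πhat) (hπhat01 : ∀ l, 0 ≤ πhat l ∧ πhat l ≤ 1)
    (δ' : ℝ) (hδ' : 0 < δ')
    (hπhatpos : ∀ᵐ ω ∂P, δ' ≤ a * πhat (L ω) + (1 - a) * (1 - πhat (L ω)))
    (μhat : 𝓛 → ℝ → ℝ) (hμhat : Measurable fun p : 𝓛 × ℝ => μhat p.1 p.2)
    (hμ₀L2 : MemLp (fun ω => μ₀ (L ω) a) 2 P)
    (hμhatL2 : MemLp (fun ω => μhat (L ω) a) 2 P) :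
    |(∫ ω, ((if A ω = a then (1 : ℝ) else 0) * (Y ω - μhat (L ω) a)
          / (a * πhat (L ω) + (1 - a) * (1 - πhat (L ω))) + μhat (L ω) a) ∂P)
        - ∫ ω, μ₀ (L ω) a ∂P|
      ≤ (1 / δ')
        * Real.sqrt (∫ ω, ((a * πhat (L ω) + (1 - a) * (1 - πhat (L ω)))
            - (a * π₀ (L ω) + (1 - a) * (1 - π₀ (L ω)))) ^ 2 ∂P)
        * Real.sqrt (∫ ω, (μhat (L ω) a - μ₀ (L ω) a) ^ 2 ∂P) := by
  classical
  have ha' : a = 0 ∨ a = 1 := by simpa using ha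
  have hm : MeasurableSpace.comap L inferInstance ≤ (inferInstance : MeasurableSpace Ω) :=
    hL.comap_le
  have hLm : @Measurable Ω 𝓛 (MeasurableSpace.comap L inferInstance) _ L :=
    fun s hs => ⟨s, hs, rfl⟩
  -- abbreviations
  set phat : Ω → ℝ := fun ω => a * πhat (L ω) + (1 - a) * (1 - πhat (L ω)) with hphat_def
  set p0 : Ω → ℝ := fun ω => a * π₀ (L ω) + (1 - a) * (1 - π₀ (L ω)) with hp0_def
  set mhat : Ω → ℝ := fun ω => μhat (L ω) a with hmhat_def
  set m0 : Ω → ℝ := fun ω => μ₀ (L ω) a with hm0_def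
  set Ia : Ω → ℝ := fun ω => if A ω = a then 1 else 0 with hIa_def
  -- measurability
  have hphatL : Measurable fun l : 𝓛 => a * πhat l + (1 - a) * (1 - πhat l) := by fun_prop
  have hphat_meas : Measurable phat := hphatL.comp hL
  have hphat_m : @Measurable Ω ℝ (MeasurableSpace.comap L inferInstance) _ phat := hphatL.comp hLm
  have hp0L : Measurable fun l : 𝓛 => a * π₀ l + (1 - a) * (1 - π₀ l) := by fun_prop
  have hp0_meas : Measurable p0 := hp0L.comp hL
  have hmhatL : Measurable fun l : 𝓛 => μhat l a :=
    hμhat.comp (measurable_id.prodMk measurable_const)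
  have hmhat_meas : Measurable mhat := hmhatL.comp hL
  have hmhat_m : @Measurable Ω ℝ (MeasurableSpace.comap L inferInstance) _ mhat := hmhatL.comp hLm
  have hm0L : Measurable fun l : 𝓛 => μ₀ l a :=
    hμ₀.comp (measurable_id.prodMk measurable_const)
  have hm0_meas : Measurable m0 := hm0L.comp hL
  have hIa_meas : Measurable Ia := by
    have : MeasurableSet {ω | A ω = a} := hA (measurableSet_singleton a)
    exact Measurable.ite this measurable_const measurable_const
  have hIa_bdd : ∀ ω, ‖Ia ω‖ ≤ 1 := by
    intro ω; by_cases h : A ω = a <;> simp [hIa_def, h]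
  -- bounds on phat, p0
  have hphat01 : ∀ ω, 0 ≤ phat ω ∧ phat ω ≤ 1 := by
    intro ω
    rcases ha' with rfl | rfl <;>
      · obtain ⟨h1, h2⟩ := hπhat01 (L ω)
        constructor <;> simp [hphat_def] <;> linarith
  have hp001 : ∀ ω, 0 ≤ p0 ω ∧ p0 ω ≤ 1 := by
    intro ω
    rcases ha' with rfl | rfl <;>
      · obtain ⟨h1, h2⟩ := hπ₀01 (L ω)
        constructor <;> simp [hp0_def] <;> linarith
  have hphat_ae : ∀ᵐ ω ∂P, δ' ≤ phat ω := hπhatpos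
  -- integrability of basic pieces
  have hmhat_int : Integrable mhat P := hμhatL2.integrable one_le_two
  have hm0_int : Integrable m0 P := hμ₀L2.integrable one_le_two
  have hIa_int : Integrable Ia P :=
    (integrable_const (1 : ℝ)).bdd_mul hIa_meas.aestronglyMeasurable
      (Filter.Eventually.of_forall fun ω => hIa_bdd ω) |>.congr
      (Filter.Eventually.of_forall fun ω => by simp)
  have hYIa_int : Integrable (fun ω => Y ω * Ia ω) P := by
    have := hYint.bdd_mul (c := 1) hIa_meas.aestronglyMeasurable
      (Filter.Eventually.of_forall fun ω => hIa_bdd ω)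
    exact this.congr (Filter.Eventually.of_forall fun ω => mul_comm _ _)
  -- conditional expectation of the indicator
  have hcondIa : P[Ia|MeasurableSpace.comap L inferInstance] =ᵐ[P] p0 := by
    rcases ha' with rfl | rfl
    · -- a = 0 : Ia = 1 - I₁
      have hI1_int : Integrable (fun ω => if A ω = 1 then (1:ℝ) else 0) P := by
        have hmeas : Measurable fun ω => if A ω = 1 then (1:ℝ) else 0 := by
          have : MeasurableSet {ω | A ω = 1} := hA (measurableSet_singleton 1)
          exact Measurable.ite this measurable_const measurable_const
        refine (integrable_const (1 : ℝ)).mono' hmeas.aestronglyMeasurable ?_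
        refine Filter.Eventually.of_forall fun ω => ?_
        by_cases h : A ω = 1 <;> simp [h]
      have hIa_eq : Ia = fun ω => (1 : ℝ) - (if A ω = 1 then 1 else 0) := by
        funext ω
        rcases hA01 ω with h | h <;> simp [hIa_def, h]
      rw [hIa_eq]
      have h1 := condExp_sub (μ := P) (m := MeasurableSpace.comap L inferInstance) (integrable_const (1:ℝ)) hI1_int
      refine h1.trans ?_
      have h2 : P[(fun _ : Ω => (1:ℝ))|MeasurableSpace.comap L inferInstance] = fun _ => 1 :=
        condExp_const hm (1 : ℝ)
      filter_upwards [hps] with ω hpsω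
      simp only [Pi.sub_apply, h2, hpsω, hp0_def]
      ring
    · -- a = 1
      refine (by simpa [hIa_def] using hps : P[Ia|MeasurableSpace.comap L inferInstance] =ᵐ[P] fun ω => π₀ (L ω)).trans ?_
      refine Filter.Eventually.of_forall fun ω => ?_
      simp only [hp0_def]
      ring
  have hcondYIa : P[(fun ω => Y ω * Ia ω)|MeasurableSpace.comap L inferInstance] =ᵐ[P] fun ω => m0 ω * p0 ω := hreg a ha
  -- pull-out identity: ∫ h·f = ∫ h·E[f|m] for m-measurable h
  have key : ∀ (h f : Ω → ℝ), @Measurable Ω ℝ (MeasurableSpace.comap L inferInstance) _ h → Integrable f P →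
      Integrable (fun ω => h ω * f ω) P →
      ∫ ω, h ω * f ω ∂P = ∫ ω, h ω * (P[f|MeasurableSpace.comap L inferInstance]) ω ∂P := by
    intro h f hhm hf hint
    have hpull := condExp_mul_of_stronglyMeasurable_left (μ := P) hhm.stronglyMeasurable
      (by exact hint) hf
    calc ∫ ω, h ω * f ω ∂P
        = ∫ ω, (P[(fun ω => h ω * f ω)|MeasurableSpace.comap L inferInstance]) ω ∂P :=
          (integral_condExp hm).symm
      _ = ∫ ω, h ω * (P[f|MeasurableSpace.comap L inferInstance]) ω ∂P := integral_congr_ae (by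
          filter_upwards [hpull] with ω hω using hω)
  -- the inverse of phat, m-measurable
  set g : Ω → ℝ := fun ω => (phat ω)⁻¹ with hg_def
  have hg_m : @Measurable Ω ℝ (MeasurableSpace.comap L inferInstance) _ g := hphat_m.inv
  have hg_meas : Measurable g := hphat_meas.inv
  have hg_bdd : ∀ᵐ ω ∂P, ‖g ω‖ ≤ δ'⁻¹ := by
    filter_upwards [hphat_ae] with ω hω
    rw [Real.norm_eq_abs, abs_of_nonneg (inv_nonneg.2 (le_trans hδ'.le hω))]
    exact inv_anti₀ hδ' hω
  -- integrability of the composite terms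
  have hf1_int : Integrable (fun ω => g ω * (Y ω * Ia ω)) P := by
    refine Integrable.mono' (hYIa_int.abs.const_mul δ'⁻¹)
      (hg_meas.mul (hY.mul hIa_meas)).aestronglyMeasurable ?_
    filter_upwards [hg_bdd] with ω hω
    rw [norm_mul]
    calc ‖g ω‖ * ‖Y ω * Ia ω‖ ≤ δ'⁻¹ * ‖Y ω * Ia ω‖ :=
          mul_le_mul_of_nonneg_right hω (norm_nonneg _)
      _ = δ'⁻¹ * |Y ω * Ia ω| := by rw [Real.norm_eq_abs]
  have hmg_int : Integrable (fun ω => (mhat ω * g ω) * Ia ω) P := by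
    refine Integrable.mono' (hmhat_int.abs.const_mul δ'⁻¹)
      (((hmhat_meas.mul hg_meas).mul hIa_meas)).aestronglyMeasurable ?_
    filter_upwards [hg_bdd] with ω hω
    rw [norm_mul, norm_mul]
    calc ‖mhat ω‖ * ‖g ω‖ * ‖Ia ω‖ ≤ ‖mhat ω‖ * δ'⁻¹ * 1 := by
          apply mul_le_mul (mul_le_mul_of_nonneg_left hω (norm_nonneg _)) (hIa_bdd ω)
            (norm_nonneg _) (by positivity)
      _ = δ'⁻¹ * |mhat ω| := by rw [Real.norm_eq_abs]; ring
  -- compute the two conditional pieces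
  have hT1 : ∫ ω, g ω * (Y ω * Ia ω) ∂P = ∫ ω, g ω * (m0 ω * p0 ω) ∂P := by
    rw [key g (fun ω => Y ω * Ia ω) hg_m hYIa_int hf1_int]
    exact integral_congr_ae (by filter_upwards [hcondYIa] with ω hω; rw [hω])
  have hT2 : ∫ ω, (mhat ω * g ω) * Ia ω ∂P = ∫ ω, (mhat ω * g ω) * p0 ω ∂P := by
    rw [key (fun ω => mhat ω * g ω) Ia (hmhat_m.mul hg_m) hIa_int hmg_int]
    exact integral_congr_ae (by filter_upwards [hcondIa] with ω hω; rw [hω])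
  -- integrability of the conditional pieces
  have hgm0p0_int : Integrable (fun ω => g ω * (m0 ω * p0 ω)) P := by
    refine Integrable.mono' (hm0_int.abs.const_mul δ'⁻¹)
      ((hg_meas.mul (hm0_meas.mul hp0_meas))).aestronglyMeasurable ?_
    filter_upwards [hg_bdd] with ω hω
    rw [norm_mul, norm_mul]
    have h1 : ‖p0 ω‖ ≤ 1 := by
      rw [Real.norm_eq_abs, abs_of_nonneg (hp001 ω).1]; exact (hp001 ω).2
    calc ‖g ω‖ * (‖m0 ω‖ * ‖p0 ω‖) ≤ δ'⁻¹ * (‖m0 ω‖ * 1) := by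
          apply mul_le_mul hω (mul_le_mul_of_nonneg_left h1 (norm_nonneg _))
            (by positivity) (by positivity)
      _ = δ'⁻¹ * |m0 ω| := by rw [Real.norm_eq_abs]; ring
  have hmgp0_int : Integrable (fun ω => (mhat ω * g ω) * p0 ω) P := by
    refine Integrable.mono' (hmhat_int.abs.const_mul δ'⁻¹)
      (((hmhat_meas.mul hg_meas).mul hp0_meas)).aestronglyMeasurable ?_
    filter_upwards [hg_bdd] with ω hω
    rw [norm_mul, norm_mul]
    have h1 : ‖p0 ω‖ ≤ 1 := by
      rw [Real.norm_eq_abs, abs_of_nonneg (hp001 ω).1]; exact (hp001 ω).2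
    calc ‖mhat ω‖ * ‖g ω‖ * ‖p0 ω‖ ≤ ‖mhat ω‖ * δ'⁻¹ * 1 := by
          apply mul_le_mul (mul_le_mul_of_nonneg_left hω (norm_nonneg _)) h1
            (norm_nonneg _) (by positivity)
      _ = δ'⁻¹ * |mhat ω| := by rw [Real.norm_eq_abs]; ring
  -- rewrite the main integrand
  have hsplit : (fun ω => Ia ω * (Y ω - mhat ω) / phat ω + mhat ω)
      = fun ω => (g ω * (Y ω * Ia ω) - (mhat ω * g ω) * Ia ω) + mhat ω := by
    funext ω; simp only [hg_def, div_eq_mul_inv]; ring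
  have hmain : ∫ ω, (Ia ω * (Y ω - mhat ω) / phat ω + mhat ω) ∂P
      = ∫ ω, (g ω * (Y ω * Ia ω)) ∂P - ∫ ω, ((mhat ω * g ω) * Ia ω) ∂P
        + ∫ ω, mhat ω ∂P := by
    rw [hsplit, integral_add
        (f := fun ω => g ω * (Y ω * Ia ω) - mhat ω * g ω * Ia ω)
        (by exact hf1_int.sub hmg_int) hmhat_int,
      integral_sub hf1_int hmg_int]
  -- the bias as a single integral
  set h : Ω → ℝ := fun ω => (mhat ω - m0 ω) * (phat ω - p0 ω) * g ω with hh_def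
  have hh_meas : Measurable h :=
    ((hmhat_meas.sub hm0_meas).mul (hphat_meas.sub hp0_meas)).mul hg_meas
  set D : Ω → ℝ := fun ω => |phat ω - p0 ω| * |mhat ω - m0 ω| with hD_def
  have hD_int : Integrable D P := by
    refine Integrable.bdd_mul (c := 1) ((hmhat_int.sub hm0_int).abs)
      ((hphat_meas.sub hp0_meas)).abs.aestronglyMeasurable ?_
    refine Filter.Eventually.of_forall fun ω => ?_
    rw [Real.norm_eq_abs, abs_abs, abs_sub_comm]
    have := (hphat01 ω); have := (hp001 ω)
    rw [abs_sub_le_iff]; constructor <;> linarith [(hphat01 ω).1, (hphat01 ω).2,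
      (hp001 ω).1, (hp001 ω).2]
  have hh_bound : ∀ᵐ ω ∂P, ‖h ω‖ ≤ δ'⁻¹ * D ω := by
    filter_upwards [hg_bdd] with ω hω
    simp only [hh_def, hD_def]
    rw [Real.norm_eq_abs, abs_mul, abs_mul]
    calc |mhat ω - m0 ω| * |phat ω - p0 ω| * |g ω|
        ≤ |mhat ω - m0 ω| * |phat ω - p0 ω| * δ'⁻¹ := by
          apply mul_le_mul_of_nonneg_left _ (by positivity)
          rwa [Real.norm_eq_abs] at hω
      _ = δ'⁻¹ * (|phat ω - p0 ω| * |mhat ω - m0 ω|) := by ring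
  have hh_int : Integrable h P :=
    Integrable.mono' (hD_int.const_mul δ'⁻¹) hh_meas.aestronglyMeasurable hh_bound
  have hbias : (∫ ω, (Ia ω * (Y ω - mhat ω) / phat ω + mhat ω) ∂P)
      - ∫ ω, m0 ω ∂P = ∫ ω, h ω ∂P := by
    rw [hmain, hT1, hT2]
    rw [show ∫ ω, g ω * (m0 ω * p0 ω) ∂P - ∫ ω, mhat ω * g ω * p0 ω ∂P
          + ∫ ω, mhat ω ∂P - ∫ ω, m0 ω ∂P
        = ∫ ω, (g ω * (m0 ω * p0 ω) - mhat ω * g ω * p0 ω + (mhat ω - m0 ω)) ∂P from ?_]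
    · refine integral_congr_ae ?_
      filter_upwards [hphat_ae] with ω hω
      have hne : phat ω ≠ 0 := ne_of_gt (lt_of_lt_of_le hδ' hω)
      simp only [hh_def, hg_def]
      field_simp
      ring
    · rw [integral_add
          (f := fun ω => g ω * (m0 ω * p0 ω) - mhat ω * g ω * p0 ω)
          (g := fun ω => mhat ω - m0 ω)
          (by exact hgm0p0_int.sub hmgp0_int) (by exact hmhat_int.sub hm0_int),
        integral_sub hgm0p0_int hmgp0_int, integral_sub hmhat_int hm0_int]
      ring
  -- Cauchy–Schwarz
  have hconj : Real.HolderConjugate 2 2 := ⟨by norm_num, by norm_num, by norm_num⟩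
  have habs_p : MemLp (fun ω => |phat ω - p0 ω|) (ENNReal.ofReal 2) P := by
    rw [show ENNReal.ofReal 2 = 2 by norm_num]
    refine MemLp.of_bound ((hphat_meas.sub hp0_meas)).abs.aestronglyMeasurable 1 ?_
    refine Filter.Eventually.of_forall fun ω => ?_
    rw [Real.norm_eq_abs, abs_abs, abs_sub_le_iff]
    constructor <;> linarith [(hphat01 ω).1, (hphat01 ω).2, (hp001 ω).1, (hp001 ω).2]
  have habs_m : MemLp (fun ω => |mhat ω - m0 ω|) (ENNReal.ofReal 2) P := by
    rw [show ENNReal.ofReal 2 = 2 by norm_num]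
    have := (hμhatL2.sub hμ₀L2).norm
    simpa [Real.norm_eq_abs] using this
  have hCS := integral_mul_le_Lp_mul_Lq_of_nonneg (μ := P) hconj
    (Filter.Eventually.of_forall fun ω => abs_nonneg (phat ω - p0 ω))
    (Filter.Eventually.of_forall fun ω => abs_nonneg (mhat ω - m0 ω))
    habs_p habs_m
  have hsq : ∀ x : ℝ, |x| ^ (2 : ℝ) = x ^ 2 := fun x => by
    rw [show (2:ℝ) = ((2:ℕ):ℝ) by norm_num, Real.rpow_natCast, sq_abs]
  have hCS' : ∫ ω, D ω ∂P
      ≤ Real.sqrt (∫ ω, (phat ω - p0 ω) ^ 2 ∂P)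
        * Real.sqrt (∫ ω, (mhat ω - m0 ω) ^ 2 ∂P) := by
    have e1 : ∫ ω, |phat ω - p0 ω| ^ (2:ℝ) ∂P = ∫ ω, (phat ω - p0 ω) ^ 2 ∂P :=
      integral_congr_ae (Filter.Eventually.of_forall fun ω => hsq _)
    have e2 : ∫ ω, |mhat ω - m0 ω| ^ (2:ℝ) ∂P = ∫ ω, (mhat ω - m0 ω) ^ 2 ∂P :=
      integral_congr_ae (Filter.Eventually.of_forall fun ω => hsq _)
    calc ∫ ω, D ω ∂P = ∫ ω, |phat ω - p0 ω| * |mhat ω - m0 ω| ∂P := rfl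
      _ ≤ (∫ ω, |phat ω - p0 ω| ^ (2:ℝ) ∂P) ^ (1/(2:ℝ))
          * (∫ ω, |mhat ω - m0 ω| ^ (2:ℝ) ∂P) ^ (1/(2:ℝ)) := hCS
      _ = Real.sqrt (∫ ω, (phat ω - p0 ω) ^ 2 ∂P)
          * Real.sqrt (∫ ω, (mhat ω - m0 ω) ^ 2 ∂P) := by
            rw [e1, e2, Real.sqrt_eq_rpow, Real.sqrt_eq_rpow]
  -- conclusion
  calc |(∫ ω, (Ia ω * (Y ω - mhat ω) / phat ω + mhat ω) ∂P) - ∫ ω, m0 ω ∂P|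
      = |∫ ω, h ω ∂P| := by rw [hbias]
    _ ≤ ∫ ω, |h ω| ∂P := by
        simpa [Real.norm_eq_abs] using norm_integral_le_integral_norm (μ := P) h
    _ ≤ ∫ ω, δ'⁻¹ * D ω ∂P := by
        refine integral_mono_ae hh_int.abs (hD_int.const_mul δ'⁻¹) ?_
        filter_upwards [hh_bound] with ω hω
        rwa [Real.norm_eq_abs] at hω
    _ = δ'⁻¹ * ∫ ω, D ω ∂P := integral_const_mul δ'⁻¹ _
    _ ≤ δ'⁻¹ * (Real.sqrt (∫ ω, (phat ω - p0 ω) ^ 2 ∂P)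
          * Real.sqrt (∫ ω, (mhat ω - m0 ω) ^ 2 ∂P)) :=
        mul_le_mul_of_nonneg_left hCS' (by positivity)
    _ = (1 / δ') * Real.sqrt (∫ ω, (phat ω - p0 ω) ^ 2 ∂P)
          * Real.sqrt (∫ ω, (mhat ω - m0 ω) ^ 2 ∂P) := by
        rw [one_div]; ring
end

section
/- Suppose Y is integrable and positivity holds (δ ≤ π₀(L) ≤ 1−δ almost surely for some δ > 0). For each n let π̂ₙ : Ω × 𝓛 → [δ', 1−δ'] (with δ' > 0) and μ̂ₙ : Ω × 𝓛 × {0,1} → ℝ be jointly measurable estimated nuisance functions with μ₀(L,a) and μ̂ₙ(ω, L, a) square-integrable in L for each ω, and define the random remainder Rₙ(ω) = ∫ { m(z; π̂ₙ(ω,·), μ̂ₙ(ω,·,·)) } dP_Z(z) − E[μ₀(L,1) − μ₀(L,0)], where m = m₁ − m₀ and P_Z is the law of Z = (L,A,Y). If the random nuisance errors satisfy n^{1/4}·‖π̂ₙ(ω,·) − π₀‖_{L²(P_L)} → 0 in probability and n^{1/4}·max_{a∈{0,1}} ‖μ̂ₙ(ω,·,a) − μ₀(·,a)‖_{L²(P_L)}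 → 0 in probability, then √n·Rₙ → 0 in probability; that is, under o_p(n^{−1/4}) nuisance rates the second-order remainder of the doubly robust estimator is asymptotically negligible at the root-n scale. -/
open MeasureTheory ProbabilityTheory Filter

/-- Cauchy–Schwarz for real integrals. -/
lemma cs_aux {α : Type*} [MeasurableSpace α] (μ : Measure α) {f g : α → ℝ}
    (hf : MemLp f 2 μ) (hg : MemLp g 2 μ) :
    ∫ x, |f x * g x| ∂μ ≤
      Real.sqrt (∫ x, f x ^ 2 ∂μ) * Real.sqrt (∫ x, g x ^ 2 ∂μ) := by
  have hconj : Real.HolderConjugate 2 2 := Real.HolderConjugate.two_two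
  have hf' : MemLp f (ENNReal.ofReal 2) μ := by
    convert hf using 2; norm_num
  have hg' : MemLp g (ENNReal.ofReal 2) μ := by
    convert hg using 2; norm_num
  have h := integral_mul_norm_le_Lp_mul_Lq hconj hf' hg'
  have e1 : ∀ (h : α → ℝ), (fun x => ‖h x‖ ^ (2:ℝ)) = fun x => h x ^ 2 := by
    intro h; funext x
    rw [show (2:ℝ) = ((2:ℕ):ℝ) by norm_num, Real.rpow_natCast]
    simp [sq_abs, Real.norm_eq_abs]
  have e2 : (fun x => |f x * g x|) = fun x => ‖f x‖ * ‖g x‖ := by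
    funext x; simp [abs_mul, Real.norm_eq_abs]
  rw [e2]
  refine h.trans_eq ?_
  rw [show (∫ a, ‖f a‖ ^ (2:ℝ) ∂μ) = ∫ a, f a ^ 2 ∂μ by rw [e1],
      show (∫ a, ‖g a‖ ^ (2:ℝ) ∂μ) = ∫ a, g a ^ 2 ∂μ by rw [e1],
      Real.sqrt_eq_rpow, Real.sqrt_eq_rpow]

/-- product of two sequences tending to zero in measure, with a bound. -/
lemma tim_aux {Ω : Type*} [MeasurableSpace Ω] (P : Measure Ω)
    {W f g : ℕ → Ω → ℝ} {C : ℝ} (hC : 0 < C)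
    (hf0 : ∀ n ω, 0 ≤ f n ω) (hg0 : ∀ n ω, 0 ≤ g n ω)
    (hle : ∀ n ω, |W n ω| ≤ C * (f n ω * g n ω))
    (hf : TendstoInMeasure P f atTop (fun _ => (0:ℝ)))
    (hg : TendstoInMeasure P g atTop (fun _ => (0:ℝ))) :
    TendstoInMeasure P W atTop (fun _ => (0:ℝ)) := by
  rw [tendstoInMeasure_iff_dist] at hf hg ⊢
  intro ε hε
  set s : ℝ := Real.sqrt (ε / C) with hs
  have hspos : 0 < s := Real.sqrt_pos.2 (div_pos hε hC)
  have hsub : ∀ n, {x | ε ≤ dist (W n x) 0} ⊆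
      {x | s ≤ dist (f n x) 0} ∪ {x | s ≤ dist (g n x) 0} := by
    intro n x hx
    simp only [Set.mem_setOf_eq, Set.mem_union, Real.dist_eq, sub_zero] at hx ⊢
    by_contra hcon
    push_neg at hcon
    obtain ⟨h1, h2⟩ := hcon
    rw [abs_of_nonneg (hf0 n x)] at h1
    rw [abs_of_nonneg (hg0 n x)] at h2
    have : f n x * g n x < s * s :=
      mul_lt_mul'' h1 h2 (hf0 n x) (hg0 n x)
    have hss : s * s = ε / C := Real.mul_self_sqrt (le_of_lt (div_pos hε hC))
    have h4 : C * (f n x * g n x) < C * (s * s) := mul_lt_mul_of_pos_left this hC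
    have h5 : C * (s * s) = ε := by rw [hss]; field_simp
    exact absurd (hx.trans (hle n x)) (not_le.2 (h4.trans_eq h5))
  have hlim := (hf s hspos).add (hg s hspos)
  simp only [add_zero] at hlim
  refine tendsto_of_tendsto_of_tendsto_of_le_of_le tendsto_const_nhds hlim
    (fun n => zero_le) (fun n => ?_)
  exact (measure_mono (hsub n)).trans (measure_union_le _ _)


private abbrev comapL {Ω 𝓛 : Type*} [MeasurableSpace 𝓛] (L : Ω → 𝓛) :
    MeasurableSpace Ω := MeasurableSpace.comap L inferInstance

lemma DR_bound {Ω 𝓛 : Type*} [MeasurableSpace Ω] [MeasurableSpace 𝓛]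
    (P : Measure Ω) [IsProbabilityMeasure P]
    (L : Ω → 𝓛) (A Y : Ω → ℝ) (hL : Measurable L) (hA : Measurable A) (hY : Measurable Y)
    (hYint : Integrable Y P)
    (π₀ : 𝓛 → ℝ) (hπ₀ : Measurable π₀) (hπ₀01 : ∀ l, 0 ≤ π₀ l ∧ π₀ l ≤ 1)
    (hps : P[(fun ω => if A ω = 1 then (1 : ℝ) else 0) |
        MeasurableSpace.comap L inferInstance] =ᵐ[P] fun ω => π₀ (L ω))
    (hps0 : P[(fun ω => if A ω = 0 then (1 : ℝ) else 0) |
        MeasurableSpace.comap L inferInstance] =ᵐ[P] fun ω => 1 - π₀ (L ω))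
    (μ1 μ0v : 𝓛 → ℝ) (hμ1 : Measurable μ1) (hμ0 : Measurable μ0v)
    (hμ1L2 : MemLp μ1 2 (Measure.map L P)) (hμ0L2 : MemLp μ0v 2 (Measure.map L P))
    (hreg1 : P[(fun ω => Y ω * (if A ω = 1 then (1:ℝ) else 0)) |
        MeasurableSpace.comap L inferInstance] =ᵐ[P] fun ω => μ1 (L ω) * π₀ (L ω))
    (hreg0 : P[(fun ω => Y ω * (if A ω = 0 then (1:ℝ) else 0)) |
        MeasurableSpace.comap L inferInstance] =ᵐ[P] fun ω => μ0v (L ω) * (1 - π₀ (L ω)))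
    (δ' : ℝ) (hδ' : 0 < δ')
    (p m1 m0 : 𝓛 → ℝ) (hp : Measurable p) (hm1 : Measurable m1) (hm0 : Measurable m0)
    (hpb : ∀ l, δ' ≤ p l ∧ p l ≤ 1 - δ')
    (hm1L2 : MemLp m1 2 (Measure.map L P)) (hm0L2 : MemLp m0 2 (Measure.map L P)) :
    |(∫ z : 𝓛 × ℝ × ℝ,
        (((if z.2.1 = 1 then (1 : ℝ) else 0) * (z.2.2 - m1 z.1) / (p z.1) + m1 z.1)
          - ((if z.2.1 = 0 then (1 : ℝ) else 0) * (z.2.2 - m0 z.1) / (1 - p z.1) + m0 z.1))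
        ∂(Measure.map (fun ω' => (L ω', A ω', Y ω')) P))
      - ∫ ω', (μ1 (L ω') - μ0v (L ω')) ∂P|
    ≤ (2 / δ') * (Real.sqrt (∫ l, (p l - π₀ l) ^ 2 ∂(Measure.map L P)) *
        max (Real.sqrt (∫ l, (m1 l - μ1 l) ^ 2 ∂(Measure.map L P)))
            (Real.sqrt (∫ l, (m0 l - μ0v l) ^ 2 ∂(Measure.map L P)))) := by
  classical
  have hm : comapL L ≤ ‹MeasurableSpace Ω› := hL.comap_le
  haveI : IsProbabilityMeasure (Measure.map L P) := Measure.isProbabilityMeasure_map hL.aemeasurable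
  have hLm : Measurable[comapL L] L := Measurable.of_comap_le le_rfl
  -- basic facts about p
  have hppos : ∀ l, 0 < p l := fun l => lt_of_lt_of_le hδ' (hpb l).1
  have h1ppos : ∀ l, δ' ≤ 1 - p l := fun l => by have := (hpb l).2; linarith
  have hpub : ∀ l, p l ≤ 1 := fun l => by have := (hpb l).2; linarith
  -- integrability via composition
  have hcompInt : ∀ (φ : 𝓛 → ℝ), Measurable φ → MemLp φ 2 (Measure.map L P) →
      Integrable (fun ω' => φ (L ω')) P := by
    intro φ hφ hmem
    have h := hmem.integrable one_le_two
    exact (integrable_map_measure hφ.aestronglyMeasurable hL.aemeasurable).mp h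
  have hm1LInt : Integrable (fun ω' => m1 (L ω')) P := hcompInt m1 hm1 hm1L2
  have hm0LInt : Integrable (fun ω' => m0 (L ω')) P := hcompInt m0 hm0 hm0L2
  have hμ1LInt : Integrable (fun ω' => μ1 (L ω')) P := hcompInt μ1 hμ1 hμ1L2
  have hμ0LInt : Integrable (fun ω' => μ0v (L ω')) P := hcompInt μ0v hμ0 hμ0L2
  -- indicators
  have hIA1meas : Measurable (fun ω' => if A ω' = 1 then (1:ℝ) else 0) :=
    Measurable.ite (hA (measurableSet_singleton 1)) measurable_const measurable_const
  have hIA0meas : Measurable (fun ω' => if A ω' = 0 then (1:ℝ) else 0) :=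
    Measurable.ite (hA (measurableSet_singleton 0)) measurable_const measurable_const
  have hIA1bd : ∀ ω', ‖(if A ω' = 1 then (1:ℝ) else 0)‖ ≤ 1 := by
    intro ω'; split <;> simp
  have hIA0bd : ∀ ω', ‖(if A ω' = 0 then (1:ℝ) else 0)‖ ≤ 1 := by
    intro ω'; split <;> simp
  have hIA1int : Integrable (fun ω' => if A ω' = 1 then (1:ℝ) else 0) P :=
    (integrable_const (1:ℝ)).mono' hIA1meas.aestronglyMeasurable
      (ae_of_all _ hIA1bd)
  have hIA0int : Integrable (fun ω' => if A ω' = 0 then (1:ℝ) else 0) P :=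
    (integrable_const (1:ℝ)).mono' hIA0meas.aestronglyMeasurable
      (ae_of_all _ hIA0bd)
  -- bounds for 1/p and 1/(1-p)
  have hq1bd : ∀ ω', ‖1 / p (L ω')‖ ≤ 1 / δ' := by
    intro ω'
    rw [Real.norm_eq_abs, abs_of_pos (one_div_pos.2 (hppos (L ω')))]
    exact one_div_le_one_div_of_le hδ' (hpb (L ω')).1
  have hq0bd : ∀ ω', ‖1 / (1 - p (L ω'))‖ ≤ 1 / δ' := by
    intro ω'
    rw [Real.norm_eq_abs, abs_of_pos (one_div_pos.2 (lt_of_lt_of_le hδ' (h1ppos (L ω'))))]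
    exact one_div_le_one_div_of_le hδ' (h1ppos (L ω'))
  have hq1meas : Measurable (fun ω' => 1 / p (L ω')) :=
    measurable_const.div (hp.comp hL)
  have hq0meas : Measurable (fun ω' => 1 / (1 - p (L ω'))) :=
    measurable_const.div (measurable_const.sub (hp.comp hL))
  -- 𝔪-measurability
  have hq1m : Measurable[comapL L] (fun ω' => 1 / p (L ω')) :=
    Measurable.div measurable_const (hp.comp hLm)
  have hq0m : Measurable[comapL L] (fun ω' => 1 / (1 - p (L ω'))) :=
    Measurable.div measurable_const (Measurable.sub measurable_const (hp.comp hLm))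
  have hm1Lm : Measurable[comapL L] (fun ω' => m1 (L ω')) := hm1.comp hLm
  have hm0Lm : Measurable[comapL L] (fun ω' => m0 (L ω')) := hm0.comp hLm
  -- key pull-out property
  have key : ∀ (f g h' : Ω → ℝ), StronglyMeasurable[comapL L] f →
      Integrable (fun ω' => f ω' * g ω') P → Integrable g P → (P[g|comapL L] =ᵐ[P] h') →
      ∫ ω', f ω' * g ω' ∂P = ∫ ω', f ω' * h' ω' ∂P := by
    intro f g h' hfm hfg hg hh
    have h1 : P[f * g|comapL L] =ᵐ[P] f * P[g|comapL L] := condExp_mul_of_stronglyMeasurable_left hfm hfg hg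
    have h2 : (f * P[g|comapL L] : Ω → ℝ) =ᵐ[P] fun ω' => f ω' * h' ω' :=
      hh.mono fun ω' e => by simp only [Pi.mul_apply]; rw [e]
    calc ∫ ω', f ω' * g ω' ∂P = ∫ ω', (P[f * g|comapL L]) ω' ∂P := (integral_condExp hm).symm
      _ = ∫ ω', f ω' * h' ω' ∂P := integral_congr_ae (h1.trans h2)
  -- integrability of the six pieces
  have hYIA1 : Integrable (fun ω' => Y ω' * (if A ω' = 1 then (1:ℝ) else 0)) P :=
    (hYint.bdd_mul hIA1meas.aestronglyMeasurable (ae_of_all _ hIA1bd)).congr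
      (ae_of_all _ fun x => mul_comm _ _)
  have hYIA0 : Integrable (fun ω' => Y ω' * (if A ω' = 0 then (1:ℝ) else 0)) P :=
    (hYint.bdd_mul hIA0meas.aestronglyMeasurable (ae_of_all _ hIA0bd)).congr
      (ae_of_all _ fun x => mul_comm _ _)
  have ht1 : Integrable (fun ω' => (1 / p (L ω')) * (Y ω' * (if A ω' = 1 then (1:ℝ) else 0))) P :=
    hYIA1.bdd_mul hq1meas.aestronglyMeasurable (ae_of_all _ hq1bd)
  have ht3 : Integrable (fun ω' => (1 / (1 - p (L ω'))) * (Y ω' * (if A ω' = 0 then (1:ℝ) else 0))) P :=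
    hYIA0.bdd_mul hq0meas.aestronglyMeasurable (ae_of_all _ hq0bd)
  have hq1m1 : Integrable (fun ω' => (1 / p (L ω')) * m1 (L ω')) P :=
    hm1LInt.bdd_mul hq1meas.aestronglyMeasurable (ae_of_all _ hq1bd)
  have hq0m0 : Integrable (fun ω' => (1 / (1 - p (L ω'))) * m0 (L ω')) P :=
    hm0LInt.bdd_mul hq0meas.aestronglyMeasurable (ae_of_all _ hq0bd)
  have ht2 : Integrable (fun ω' => ((1 / p (L ω')) * m1 (L ω')) * (if A ω' = 1 then (1:ℝ) else 0)) P :=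
    (hq1m1.bdd_mul hIA1meas.aestronglyMeasurable (ae_of_all _ hIA1bd)).congr
      (ae_of_all _ fun x => by ring)
  have ht4 : Integrable (fun ω' => ((1 / (1 - p (L ω'))) * m0 (L ω')) * (if A ω' = 0 then (1:ℝ) else 0)) P :=
    (hq0m0.bdd_mul hIA0meas.aestronglyMeasurable (ae_of_all _ hIA0bd)).congr
      (ae_of_all _ fun x => by ring)
  -- four conditional-expectation evaluations
  have E1 : ∫ ω', (1 / p (L ω')) * (Y ω' * (if A ω' = 1 then (1:ℝ) else 0)) ∂P
      = ∫ ω', (1 / p (L ω')) * (μ1 (L ω') * π₀ (L ω')) ∂P :=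
    key _ _ _ hq1m.stronglyMeasurable ht1 hYIA1 hreg1
  have E2 : ∫ ω', ((1 / p (L ω')) * m1 (L ω')) * (if A ω' = 1 then (1:ℝ) else 0) ∂P
      = ∫ ω', ((1 / p (L ω')) * m1 (L ω')) * π₀ (L ω') ∂P :=
    key _ _ _ (hq1m.mul hm1Lm).stronglyMeasurable ht2 hIA1int hps
  have E3 : ∫ ω', (1 / (1 - p (L ω'))) * (Y ω' * (if A ω' = 0 then (1:ℝ) else 0)) ∂P
      = ∫ ω', (1 / (1 - p (L ω'))) * (μ0v (L ω') * (1 - π₀ (L ω'))) ∂P :=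
    key _ _ _ hq0m.stronglyMeasurable ht3 hYIA0 hreg0
  have E4 : ∫ ω', ((1 / (1 - p (L ω'))) * m0 (L ω')) * (if A ω' = 0 then (1:ℝ) else 0) ∂P
      = ∫ ω', ((1 / (1 - p (L ω'))) * m0 (L ω')) * (1 - π₀ (L ω')) ∂P :=
    key _ _ _ (hq0m.mul hm0Lm).stronglyMeasurable ht4 hIA0int hps0
  -- pull the map integral back to Ω
  have hz1 : Measurable (fun z : 𝓛 × ℝ × ℝ => z.1) := measurable_fst
  have hz21 : Measurable (fun z : 𝓛 × ℝ × ℝ => z.2.1) := measurable_fst.comp measurable_snd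
  have hz22 : Measurable (fun z : 𝓛 × ℝ × ℝ => z.2.2) := measurable_snd.comp measurable_snd
  have hi1 : Measurable (fun z : 𝓛 × ℝ × ℝ => if z.2.1 = 1 then (1:ℝ) else 0) :=
    Measurable.ite (hz21 (measurableSet_singleton 1)) measurable_const measurable_const
  have hi0 : Measurable (fun z : 𝓛 × ℝ × ℝ => if z.2.1 = 0 then (1:ℝ) else 0) :=
    Measurable.ite (hz21 (measurableSet_singleton 0)) measurable_const measurable_const
  have hTmeas : Measurable (fun z : 𝓛 × ℝ × ℝ =>
      (((if z.2.1 = 1 then (1 : ℝ) else 0) * (z.2.2 - m1 z.1) / (p z.1) + m1 z.1)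
        - ((if z.2.1 = 0 then (1 : ℝ) else 0) * (z.2.2 - m0 z.1) / (1 - p z.1) + m0 z.1))) :=
    (((hi1.mul (hz22.sub (hm1.comp hz1))).div (hp.comp hz1)).add (hm1.comp hz1)).sub
      (((hi0.mul (hz22.sub (hm0.comp hz1))).div (measurable_const.sub (hp.comp hz1))).add
        (hm0.comp hz1))
  have hmap : (∫ z : 𝓛 × ℝ × ℝ,
        (((if z.2.1 = 1 then (1 : ℝ) else 0) * (z.2.2 - m1 z.1) / (p z.1) + m1 z.1)
          - ((if z.2.1 = 0 then (1 : ℝ) else 0) * (z.2.2 - m0 z.1) / (1 - p z.1) + m0 z.1))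
        ∂(Measure.map (fun ω' => (L ω', A ω', Y ω')) P))
      = ∫ ω', (((if A ω' = 1 then (1:ℝ) else 0) * (Y ω' - m1 (L ω')) / p (L ω') + m1 (L ω'))
          - ((if A ω' = 0 then (1:ℝ) else 0) * (Y ω' - m0 (L ω')) / (1 - p (L ω'))
            + m0 (L ω'))) ∂P :=
    integral_map (hL.prodMk (hA.prodMk hY)).aemeasurable hTmeas.aestronglyMeasurable
  -- split the integral into six pieces
  have hGsplit : ∫ ω', (((if A ω' = 1 then (1:ℝ) else 0) * (Y ω' - m1 (L ω')) / p (L ω')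
            + m1 (L ω'))
          - ((if A ω' = 0 then (1:ℝ) else 0) * (Y ω' - m0 (L ω')) / (1 - p (L ω'))
            + m0 (L ω'))) ∂P
      = ((∫ ω', (1 / p (L ω')) * (Y ω' * (if A ω' = 1 then (1:ℝ) else 0)) ∂P)
          - (∫ ω', ((1 / p (L ω')) * m1 (L ω')) * (if A ω' = 1 then (1:ℝ) else 0) ∂P)
          + ∫ ω', m1 (L ω') ∂P)
        - ((∫ ω', (1 / (1 - p (L ω'))) * (Y ω' * (if A ω' = 0 then (1:ℝ) else 0)) ∂P)
          - (∫ ω', ((1 / (1 - p (L ω'))) * m0 (L ω')) * (if A ω' = 0 then (1:ℝ) else 0) ∂P)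
          + ∫ ω', m0 (L ω') ∂P) := by
    have ht12 : Integrable (fun ω' => (1 / p (L ω')) * (Y ω' * (if A ω' = 1 then (1:ℝ) else 0))
        - ((1 / p (L ω')) * m1 (L ω')) * (if A ω' = 1 then (1:ℝ) else 0)) P := ht1.sub ht2
    have ht123 : Integrable (fun ω' => (1 / p (L ω')) * (Y ω' * (if A ω' = 1 then (1:ℝ) else 0))
        - ((1 / p (L ω')) * m1 (L ω')) * (if A ω' = 1 then (1:ℝ) else 0) + m1 (L ω')) P :=
      ht12.add hm1LInt
    have ht34 : Integrable (fun ω' => (1 / (1 - p (L ω'))) * (Y ω' * (if A ω' = 0 then (1:ℝ) else 0))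
        - ((1 / (1 - p (L ω'))) * m0 (L ω')) * (if A ω' = 0 then (1:ℝ) else 0)) P := ht3.sub ht4
    have ht345 : Integrable (fun ω' => (1 / (1 - p (L ω'))) * (Y ω' * (if A ω' = 0 then (1:ℝ) else 0))
        - ((1 / (1 - p (L ω'))) * m0 (L ω')) * (if A ω' = 0 then (1:ℝ) else 0) + m0 (L ω')) P :=
      ht34.add hm0LInt
    rw [← integral_sub ht1 ht2, ← integral_add ht12 hm1LInt,
        ← integral_sub ht3 ht4, ← integral_add ht34 hm0LInt,
        ← integral_sub ht123 ht345]
    exact integral_congr_ae (ae_of_all _ fun ω' => by ring)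
  -- integrability of the conditional pieces
  have hq1π : Measurable (fun ω' => (1 / p (L ω')) * π₀ (L ω')) := hq1meas.mul (hπ₀.comp hL)
  have hq1πbd : ∀ ω', ‖(1 / p (L ω')) * π₀ (L ω')‖ ≤ 1 / δ' := by
    intro ω'; rw [norm_mul]
    have h1 : ‖π₀ (L ω')‖ ≤ 1 := by
      rw [Real.norm_eq_abs, abs_of_nonneg (hπ₀01 (L ω')).1]; exact (hπ₀01 (L ω')).2
    calc ‖1 / p (L ω')‖ * ‖π₀ (L ω')‖ ≤ (1 / δ') * 1 :=
          mul_le_mul (hq1bd ω') h1 (norm_nonneg _) (le_of_lt (one_div_pos.2 hδ'))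
      _ = 1 / δ' := mul_one _
  have hq0π : Measurable (fun ω' => (1 / (1 - p (L ω'))) * (1 - π₀ (L ω'))) :=
    hq0meas.mul (measurable_const.sub (hπ₀.comp hL))
  have hq0πbd : ∀ ω', ‖(1 / (1 - p (L ω'))) * (1 - π₀ (L ω'))‖ ≤ 1 / δ' := by
    intro ω'; rw [norm_mul]
    have h1 : ‖1 - π₀ (L ω')‖ ≤ 1 := by
      rw [Real.norm_eq_abs, abs_le]
      constructor <;> [linarith [(hπ₀01 (L ω')).2]; linarith [(hπ₀01 (L ω')).1]]
    calc ‖1 / (1 - p (L ω'))‖ * ‖1 - π₀ (L ω')‖ ≤ (1 / δ') * 1 :=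
          mul_le_mul (hq0bd ω') h1 (norm_nonneg _) (le_of_lt (one_div_pos.2 hδ'))
      _ = 1 / δ' := mul_one _
  have hB1 : Integrable (fun ω' => (1 / p (L ω')) * (μ1 (L ω') * π₀ (L ω'))) P :=
    (hμ1LInt.bdd_mul hq1π.aestronglyMeasurable (ae_of_all _ hq1πbd)).congr
      (ae_of_all _ fun x => by ring)
  have hB2 : Integrable (fun ω' => ((1 / p (L ω')) * m1 (L ω')) * π₀ (L ω')) P :=
    (hm1LInt.bdd_mul hq1π.aestronglyMeasurable (ae_of_all _ hq1πbd)).congr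
      (ae_of_all _ fun x => by ring)
  have hB3 : Integrable (fun ω' => (1 / (1 - p (L ω'))) * (μ0v (L ω') * (1 - π₀ (L ω')))) P :=
    (hμ0LInt.bdd_mul hq0π.aestronglyMeasurable (ae_of_all _ hq0πbd)).congr
      (ae_of_all _ fun x => by ring)
  have hB4 : Integrable (fun ω' => ((1 / (1 - p (L ω'))) * m0 (L ω')) * (1 - π₀ (L ω'))) P :=
    (hm0LInt.bdd_mul hq0π.aestronglyMeasurable (ae_of_all _ hq0πbd)).congr
      (ae_of_all _ fun x => by ring)
  -- regroup into the two second-order products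
  have hS1 : (∫ ω', (1 / p (L ω')) * (μ1 (L ω') * π₀ (L ω')) ∂P)
      - (∫ ω', ((1 / p (L ω')) * m1 (L ω')) * π₀ (L ω') ∂P)
      + (∫ ω', m1 (L ω') ∂P) - (∫ ω', μ1 (L ω') ∂P)
      = ∫ ω', ((π₀ (L ω') - p (L ω')) / p (L ω')) * (μ1 (L ω') - m1 (L ω')) ∂P := by
    have hB12 : Integrable (fun ω' => (1 / p (L ω')) * (μ1 (L ω') * π₀ (L ω'))
        - ((1 / p (L ω')) * m1 (L ω')) * π₀ (L ω')) P := hB1.sub hB2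
    have hB123 : Integrable (fun ω' => (1 / p (L ω')) * (μ1 (L ω') * π₀ (L ω'))
        - ((1 / p (L ω')) * m1 (L ω')) * π₀ (L ω') + m1 (L ω')) P := hB12.add hm1LInt
    rw [← integral_sub hB1 hB2, ← integral_add hB12 hm1LInt,
        ← integral_sub hB123 hμ1LInt]
    refine integral_congr_ae (ae_of_all _ fun ω' => ?_)
    have h0 : p (L ω') ≠ 0 := ne_of_gt (hppos (L ω'))
    field_simp
    ring
  have hS0 : (∫ ω', μ0v (L ω') ∂P)
      - ((∫ ω', (1 / (1 - p (L ω'))) * (μ0v (L ω') * (1 - π₀ (L ω'))) ∂P)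
        - (∫ ω', ((1 / (1 - p (L ω'))) * m0 (L ω')) * (1 - π₀ (L ω')) ∂P)
        + ∫ ω', m0 (L ω') ∂P)
      = ∫ ω', ((π₀ (L ω') - p (L ω')) / (1 - p (L ω'))) * (μ0v (L ω') - m0 (L ω')) ∂P := by
    have hB34 : Integrable (fun ω' => (1 / (1 - p (L ω'))) * (μ0v (L ω') * (1 - π₀ (L ω')))
        - ((1 / (1 - p (L ω'))) * m0 (L ω')) * (1 - π₀ (L ω'))) P := hB3.sub hB4
    have hB345 : Integrable (fun ω' => (1 / (1 - p (L ω'))) * (μ0v (L ω') * (1 - π₀ (L ω')))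
        - ((1 / (1 - p (L ω'))) * m0 (L ω')) * (1 - π₀ (L ω')) + m0 (L ω')) P := hB34.add hm0LInt
    rw [← integral_sub hB3 hB4, ← integral_add hB34 hm0LInt,
        ← integral_sub hμ0LInt hB345]
    refine integral_congr_ae (ae_of_all _ fun ω' => ?_)
    have h0 : (1:ℝ) - p (L ω') ≠ 0 := ne_of_gt (lt_of_lt_of_le hδ' (h1ppos (L ω')))
    field_simp
    ring
  -- the remainder identity
  have hRval : (∫ z : 𝓛 × ℝ × ℝ,
        (((if z.2.1 = 1 then (1 : ℝ) else 0) * (z.2.2 - m1 z.1) / (p z.1) + m1 z.1)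
          - ((if z.2.1 = 0 then (1 : ℝ) else 0) * (z.2.2 - m0 z.1) / (1 - p z.1) + m0 z.1))
        ∂(Measure.map (fun ω' => (L ω', A ω', Y ω')) P))
      - (∫ ω', (μ1 (L ω') - μ0v (L ω')) ∂P)
      = (∫ ω', ((π₀ (L ω') - p (L ω')) / p (L ω')) * (μ1 (L ω') - m1 (L ω')) ∂P)
        + ∫ ω', ((π₀ (L ω') - p (L ω')) / (1 - p (L ω'))) * (μ0v (L ω') - m0 (L ω')) ∂P := by
    rw [hmap, hGsplit, integral_sub hμ1LInt hμ0LInt, E1, E2, E3, E4, ← hS1, ← hS0]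
    ring
  -- absolute-value bounds
  have habs : ∀ (f : Ω → ℝ), |∫ ω', f ω' ∂P| ≤ ∫ ω', |f ω'| ∂P := by
    intro f
    calc |∫ ω', f ω' ∂P| = ‖∫ ω', f ω' ∂P‖ := (Real.norm_eq_abs _).symm
      _ ≤ ∫ ω', ‖f ω'‖ ∂P := norm_integral_le_integral_norm f
      _ = ∫ ω', |f ω'| ∂P := by simp [Real.norm_eq_abs]
  have hπabs : ∀ l, |π₀ l - p l| ≤ 1 := by
    intro l
    rw [abs_le]
    constructor
    · have := (hπ₀01 l).1; have := hpub l; linarith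
    · have := (hπ₀01 l).2; have := hppos l; linarith
  have hπerrbd1 : ∀ ω', ‖(π₀ (L ω') - p (L ω')) / p (L ω')‖ ≤ 1 / δ' := by
    intro ω'
    rw [Real.norm_eq_abs, abs_div]
    have h2 : δ' ≤ |p (L ω')| := by
      rw [abs_of_pos (hppos (L ω'))]; exact (hpb (L ω')).1
    exact div_le_div₀ zero_le_one (hπabs (L ω')) hδ' h2
  have hπerrbd0 : ∀ ω', ‖(π₀ (L ω') - p (L ω')) / (1 - p (L ω'))‖ ≤ 1 / δ' := by
    intro ω'
    rw [Real.norm_eq_abs, abs_div]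
    have h2 : δ' ≤ |1 - p (L ω')| := by
      rw [abs_of_pos (lt_of_lt_of_le hδ' (h1ppos (L ω')))]; exact h1ppos (L ω')
    exact div_le_div₀ zero_le_one (hπabs (L ω')) hδ' h2
  have hπerrmeas1 : Measurable (fun ω' => (π₀ (L ω') - p (L ω')) / p (L ω')) :=
    ((hπ₀.comp hL).sub (hp.comp hL)).div (hp.comp hL)
  have hπerrmeas0 : Measurable (fun ω' => (π₀ (L ω') - p (L ω')) / (1 - p (L ω'))) :=
    ((hπ₀.comp hL).sub (hp.comp hL)).div (measurable_const.sub (hp.comp hL))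
  have hS1int : Integrable
      (fun ω' => (π₀ (L ω') - p (L ω')) / p (L ω') * (μ1 (L ω') - m1 (L ω'))) P :=
    (hμ1LInt.sub hm1LInt).bdd_mul hπerrmeas1.aestronglyMeasurable (ae_of_all _ hπerrbd1)
  have hS0int : Integrable
      (fun ω' => (π₀ (L ω') - p (L ω')) / (1 - p (L ω')) * (μ0v (L ω') - m0 (L ω'))) P :=
    (hμ0LInt.sub hm0LInt).bdd_mul hπerrmeas0.aestronglyMeasurable (ae_of_all _ hπerrbd0)
  have hprod1int : Integrable
      (fun ω' => |π₀ (L ω') - p (L ω')| * |μ1 (L ω') - m1 (L ω')|) P :=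
    (hμ1LInt.sub hm1LInt).abs.bdd_mul ((hπ₀.comp hL).sub (hp.comp hL)).abs.aestronglyMeasurable
      (ae_of_all _ fun ω' => by rw [Real.norm_eq_abs, abs_abs]; exact hπabs (L ω'))
  have hprod0int : Integrable
      (fun ω' => |π₀ (L ω') - p (L ω')| * |μ0v (L ω') - m0 (L ω')|) P :=
    (hμ0LInt.sub hm0LInt).abs.bdd_mul ((hπ₀.comp hL).sub (hp.comp hL)).abs.aestronglyMeasurable
      (ae_of_all _ fun ω' => by rw [Real.norm_eq_abs, abs_abs]; exact hπabs (L ω'))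
  have hquot : ∀ (q a b : ℝ), 0 < q → δ' ≤ q → |a| ≤ 1 →
      |a / q * b| ≤ 1 / δ' * (|a| * |b|) := by
    intro q a b hq hδq ha
    rw [abs_mul, abs_div]
    have hqa : 0 < |q| := abs_pos.2 (ne_of_gt hq)
    have hδq' : δ' ≤ |q| := le_trans hδq (le_abs_self q)
    rw [div_mul_eq_mul_div, div_le_iff₀ hqa]
    have h1 : 1 / δ' * δ' = 1 := by field_simp
    have h2 : 1 / δ' * δ' ≤ 1 / δ' * |q| :=
      mul_le_mul_of_nonneg_left hδq' (le_of_lt (one_div_pos.2 hδ'))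
    nlinarith [mul_nonneg (abs_nonneg a) (abs_nonneg b), abs_nonneg a, abs_nonneg b]
  have hmono1 : ∫ ω', |(π₀ (L ω') - p (L ω')) / p (L ω') * (μ1 (L ω') - m1 (L ω'))| ∂P
      ≤ ∫ ω', (1/δ') * (|π₀ (L ω') - p (L ω')| * |μ1 (L ω') - m1 (L ω')|) ∂P := by
    refine integral_mono hS1int.abs (hprod1int.const_mul _) (fun ω' => ?_)
    exact hquot _ _ _ (hppos (L ω')) (hpb (L ω')).1 (hπabs (L ω'))
  have hmono0 : ∫ ω', |(π₀ (L ω') - p (L ω')) / (1 - p (L ω')) * (μ0v (L ω') - m0 (L ω'))| ∂P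
      ≤ ∫ ω', (1/δ') * (|π₀ (L ω') - p (L ω')| * |μ0v (L ω') - m0 (L ω')|) ∂P := by
    refine integral_mono hS0int.abs (hprod0int.const_mul _) (fun ω' => ?_)
    exact hquot _ _ _ (lt_of_lt_of_le hδ' (h1ppos (L ω'))) (h1ppos (L ω')) (hπabs (L ω'))
  -- change of variables and Cauchy–Schwarz
  have hcv1 : ∫ ω', |π₀ (L ω') - p (L ω')| * |μ1 (L ω') - m1 (L ω')| ∂P
      = ∫ l, |(π₀ l - p l) * (μ1 l - m1 l)| ∂(Measure.map L P) := by
    rw [integral_map hL.aemeasurable (f := fun l => |(π₀ l - p l) * (μ1 l - m1 l)|)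
      ((((hπ₀.sub hp).mul (hμ1.sub hm1))).abs.aestronglyMeasurable)]
    exact integral_congr_ae (ae_of_all _ fun ω' => (abs_mul _ _).symm)
  have hcv0 : ∫ ω', |π₀ (L ω') - p (L ω')| * |μ0v (L ω') - m0 (L ω')| ∂P
      = ∫ l, |(π₀ l - p l) * (μ0v l - m0 l)| ∂(Measure.map L P) := by
    rw [integral_map hL.aemeasurable (f := fun l => |(π₀ l - p l) * (μ0v l - m0 l)|)
      ((((hπ₀.sub hp).mul (hμ0.sub hm0))).abs.aestronglyMeasurable)]
    exact integral_congr_ae (ae_of_all _ fun ω' => (abs_mul _ _).symm)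
  have hπerrmem : MemLp (fun l => π₀ l - p l) 2 (Measure.map L P) :=
    MemLp.of_bound (hπ₀.sub hp).aestronglyMeasurable 1
      (ae_of_all _ fun l => by rw [Real.norm_eq_abs]; exact hπabs l)
  have hcs1 := cs_aux (Measure.map L P) hπerrmem (hμ1L2.sub hm1L2)
  have hcs0 := cs_aux (Measure.map L P) hπerrmem (hμ0L2.sub hm0L2)
  have hflipπ : (∫ l, (π₀ l - p l)^2 ∂(Measure.map L P))
      = ∫ l, (p l - π₀ l)^2 ∂(Measure.map L P) :=
    integral_congr_ae (ae_of_all _ fun l => by ring)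
  have hflip1 : (∫ l, (μ1 l - m1 l)^2 ∂(Measure.map L P))
      = ∫ l, (m1 l - μ1 l)^2 ∂(Measure.map L P) :=
    integral_congr_ae (ae_of_all _ fun l => by ring)
  have hflip0 : (∫ l, (μ0v l - m0 l)^2 ∂(Measure.map L P))
      = ∫ l, (m0 l - μ0v l)^2 ∂(Measure.map L P) :=
    integral_congr_ae (ae_of_all _ fun l => by ring)
  have hδ'' : (0:ℝ) ≤ 1/δ' := le_of_lt (one_div_pos.2 hδ')
  have hI1 : |∫ ω', (π₀ (L ω') - p (L ω')) / p (L ω') * (μ1 (L ω') - m1 (L ω')) ∂P|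
      ≤ (1/δ') * (Real.sqrt (∫ l, (p l - π₀ l)^2 ∂(Measure.map L P)) *
          Real.sqrt (∫ l, (m1 l - μ1 l)^2 ∂(Measure.map L P))) := by
    calc |∫ ω', (π₀ (L ω') - p (L ω')) / p (L ω') * (μ1 (L ω') - m1 (L ω')) ∂P|
        ≤ ∫ ω', |(π₀ (L ω') - p (L ω')) / p (L ω') * (μ1 (L ω') - m1 (L ω'))| ∂P := habs _
      _ ≤ ∫ ω', (1/δ') * (|π₀ (L ω') - p (L ω')| * |μ1 (L ω') - m1 (L ω')|) ∂P := hmono1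
      _ = (1/δ') * ∫ ω', |π₀ (L ω') - p (L ω')| * |μ1 (L ω') - m1 (L ω')| ∂P :=
          integral_const_mul _ _
      _ = (1/δ') * ∫ l, |(π₀ l - p l) * (μ1 l - m1 l)| ∂(Measure.map L P) := by rw [hcv1]
      _ ≤ (1/δ') * (Real.sqrt (∫ l, (π₀ l - p l)^2 ∂(Measure.map L P)) *
            Real.sqrt (∫ l, (μ1 l - m1 l)^2 ∂(Measure.map L P))) :=
          mul_le_mul_of_nonneg_left hcs1 hδ''
      _ = (1/δ') * (Real.sqrt (∫ l, (p l - π₀ l)^2 ∂(Measure.map L P)) *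
            Real.sqrt (∫ l, (m1 l - μ1 l)^2 ∂(Measure.map L P))) := by
          rw [hflipπ, hflip1]
  have hI0 : |∫ ω', (π₀ (L ω') - p (L ω')) / (1 - p (L ω')) * (μ0v (L ω') - m0 (L ω')) ∂P|
      ≤ (1/δ') * (Real.sqrt (∫ l, (p l - π₀ l)^2 ∂(Measure.map L P)) *
          Real.sqrt (∫ l, (m0 l - μ0v l)^2 ∂(Measure.map L P))) := by
    calc |∫ ω', (π₀ (L ω') - p (L ω')) / (1 - p (L ω')) * (μ0v (L ω') - m0 (L ω')) ∂P|
        ≤ ∫ ω', |(π₀ (L ω') - p (L ω')) / (1 - p (L ω')) * (μ0v (L ω') - m0 (L ω'))| ∂P := habs _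
      _ ≤ ∫ ω', (1/δ') * (|π₀ (L ω') - p (L ω')| * |μ0v (L ω') - m0 (L ω')|) ∂P := hmono0
      _ = (1/δ') * ∫ ω', |π₀ (L ω') - p (L ω')| * |μ0v (L ω') - m0 (L ω')| ∂P :=
          integral_const_mul _ _
      _ = (1/δ') * ∫ l, |(π₀ l - p l) * (μ0v l - m0 l)| ∂(Measure.map L P) := by rw [hcv0]
      _ ≤ (1/δ') * (Real.sqrt (∫ l, (π₀ l - p l)^2 ∂(Measure.map L P)) *
            Real.sqrt (∫ l, (μ0v l - m0 l)^2 ∂(Measure.map L P))) :=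
          mul_le_mul_of_nonneg_left hcs0 hδ''
      _ = (1/δ') * (Real.sqrt (∫ l, (p l - π₀ l)^2 ∂(Measure.map L P)) *
            Real.sqrt (∫ l, (m0 l - μ0v l)^2 ∂(Measure.map L P))) := by
          rw [hflipπ, hflip0]
  rw [hRval]
  have hSπ : 0 ≤ Real.sqrt (∫ l, (p l - π₀ l)^2 ∂(Measure.map L P)) := Real.sqrt_nonneg _
  calc |(∫ ω', (π₀ (L ω') - p (L ω')) / p (L ω') * (μ1 (L ω') - m1 (L ω')) ∂P)
        + ∫ ω', (π₀ (L ω') - p (L ω')) / (1 - p (L ω')) * (μ0v (L ω') - m0 (L ω')) ∂P|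
      ≤ |∫ ω', (π₀ (L ω') - p (L ω')) / p (L ω') * (μ1 (L ω') - m1 (L ω')) ∂P|
        + |∫ ω', (π₀ (L ω') - p (L ω')) / (1 - p (L ω')) * (μ0v (L ω') - m0 (L ω')) ∂P| :=
        abs_add_le _ _
    _ ≤ (1/δ') * (Real.sqrt (∫ l, (p l - π₀ l)^2 ∂(Measure.map L P)) *
          Real.sqrt (∫ l, (m1 l - μ1 l)^2 ∂(Measure.map L P)))
        + (1/δ') * (Real.sqrt (∫ l, (p l - π₀ l)^2 ∂(Measure.map L P)) *
          Real.sqrt (∫ l, (m0 l - μ0v l)^2 ∂(Measure.map L P))) := add_le_add hI1 hI0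
    _ ≤ (1/δ') * (Real.sqrt (∫ l, (p l - π₀ l)^2 ∂(Measure.map L P)) *
          max (Real.sqrt (∫ l, (m1 l - μ1 l)^2 ∂(Measure.map L P)))
              (Real.sqrt (∫ l, (m0 l - μ0v l)^2 ∂(Measure.map L P))))
        + (1/δ') * (Real.sqrt (∫ l, (p l - π₀ l)^2 ∂(Measure.map L P)) *
          max (Real.sqrt (∫ l, (m1 l - μ1 l)^2 ∂(Measure.map L P)))
              (Real.sqrt (∫ l, (m0 l - μ0v l)^2 ∂(Measure.map L P)))) := by
        refine add_le_add ?_ ?_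
        · exact mul_le_mul_of_nonneg_left
            (mul_le_mul_of_nonneg_left (le_max_left _ _) hSπ) hδ''
        · exact mul_le_mul_of_nonneg_left
            (mul_le_mul_of_nonneg_left (le_max_right _ _) hSπ) hδ''
    _ = (2/δ') * (Real.sqrt (∫ l, (p l - π₀ l)^2 ∂(Measure.map L P)) *
          max (Real.sqrt (∫ l, (m1 l - μ1 l)^2 ∂(Measure.map L P)))
              (Real.sqrt (∫ l, (m0 l - μ0v l)^2 ∂(Measure.map L P)))) := by ring

/-- Under `o_p(n^{−1/4})` nuisance rates, the second-order remainder of the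
doubly robust estimator is asymptotically negligible at the root-n scale: with
`Rₙ(ω) = ∫ m(z; π̂ₙ(ω,·), μ̂ₙ(ω,·,·)) dP_Z(z) − E[μ₀(L,1) − μ₀(L,0)]`, `m = m₁ − m₀`, if
`n^{1/4}·‖π̂ₙ − π₀‖_{L²(P_L)} → 0` and `n^{1/4}·maxₐ‖μ̂ₙ(·,a) − μ₀(·,a)‖_{L²(P_L)} → 0` in
probability, then `√n·Rₙ → 0` in probability. -/
theorem doubly_robust_remainder_negligible
    {Ω 𝓛 : Type*} [MeasurableSpace Ω] [MeasurableSpace 𝓛]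
    (P : Measure Ω) [IsProbabilityMeasure P]
    (L : Ω → 𝓛) (A Y : Ω → ℝ)
    (hL : Measurable L) (hA : Measurable A) (hY : Measurable Y)
    (hA01 : ∀ ω, A ω = 0 ∨ A ω = 1)
    (hYint : Integrable Y P)
    -- π₀(L) is a version of P(A = 1 ∣ σ(L))
    (π₀ : 𝓛 → ℝ) (hπ₀ : Measurable π₀) (hπ₀01 : ∀ l, 0 ≤ π₀ l ∧ π₀ l ≤ 1)
    (hps : P[(fun ω => if A ω = 1 then (1 : ℝ) else 0) |
        MeasurableSpace.comap L inferInstance] =ᵐ[P] fun ω => π₀ (L ω))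
    -- positivity: δ ≤ π₀(L) ≤ 1 − δ a.s. for some δ > 0
    (δ : ℝ) (hδ : 0 < δ) (hpos : ∀ᵐ ω ∂P, δ ≤ π₀ (L ω) ∧ π₀ (L ω) ≤ 1 - δ)
    -- outcome regression: E[Y·1{A=a} ∣ σ(L)] = μ₀(L,a)·π₀ₐ(L) a.s. for a = 0, 1
    (μ₀ : 𝓛 → ℝ → ℝ) (hμ₀ : Measurable fun p : 𝓛 × ℝ => μ₀ p.1 p.2)
    (hreg : ∀ a ∈ ({0, 1} : Set ℝ),
      P[(fun ω => Y ω * (if A ω = a then (1 : ℝ) else 0)) |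
          MeasurableSpace.comap L inferInstance]
        =ᵐ[P] fun ω => μ₀ (L ω) a * (a * π₀ (L ω) + (1 - a) * (1 - π₀ (L ω))))
    (hμ₀L2 : ∀ a ∈ ({0, 1} : Set ℝ), MemLp (fun l => μ₀ l a) 2 (Measure.map L P))
    -- estimated nuisance functions: jointly measurable, π̂ₙ ∈ [δ', 1−δ'],
    -- μ̂ₙ(ω,·,a) square-integrable in L for each ω
    (δ' : ℝ) (hδ' : 0 < δ')
    (πhat : ℕ → Ω → 𝓛 → ℝ)
    (hπhatmeas : ∀ n, Measurable fun p : Ω × 𝓛 => πhat n p.1 p.2)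
    (hπhatbdd : ∀ n ω l, δ' ≤ πhat n ω l ∧ πhat n ω l ≤ 1 - δ')
    (μhat : ℕ → Ω → 𝓛 → ℝ → ℝ)
    (hμhatmeas : ∀ n, ∀ a ∈ ({0, 1} : Set ℝ),
      Measurable fun p : Ω × 𝓛 => μhat n p.1 p.2 a)
    (hμhatL2 : ∀ n ω, ∀ a ∈ ({0, 1} : Set ℝ),
      MemLp (fun l => μhat n ω l a) 2 (Measure.map L P))
    -- the random second-order remainder Rₙ
    (R : ℕ → Ω → ℝ)
    (hR : ∀ n ω, R n ω =
      (∫ z : 𝓛 × ℝ × ℝ,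
          (((if z.2.1 = 1 then (1 : ℝ) else 0) * (z.2.2 - μhat n ω z.1 1)
              / (πhat n ω z.1) + μhat n ω z.1 1)
            - ((if z.2.1 = 0 then (1 : ℝ) else 0) * (z.2.2 - μhat n ω z.1 0)
              / (1 - πhat n ω z.1) + μhat n ω z.1 0))
          ∂(Measure.map (fun ω' => (L ω', A ω', Y ω')) P))
        - ∫ ω', (μ₀ (L ω') 1 - μ₀ (L ω') 0) ∂P)
    -- nuisance rate conditions: o_p(n^{-1/4}) errors in L²(P_L)
    (hπrate : TendstoInMeasure P
      (fun (n : ℕ) (ω : Ω) => (n : ℝ) ^ ((1 : ℝ) / 4)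
        * Real.sqrt (∫ l, (πhat n ω l - π₀ l) ^ 2 ∂(Measure.map L P)))
      atTop (fun _ => (0 : ℝ)))
    (hμrate : TendstoInMeasure P
      (fun (n : ℕ) (ω : Ω) => (n : ℝ) ^ ((1 : ℝ) / 4)
        * max (Real.sqrt (∫ l, (μhat n ω l 1 - μ₀ l 1) ^ 2 ∂(Measure.map L P)))
              (Real.sqrt (∫ l, (μhat n ω l 0 - μ₀ l 0) ^ 2 ∂(Measure.map L P))))
      atTop (fun _ => (0 : ℝ))) :
    TendstoInMeasure P (fun (n : ℕ) (ω : Ω) => Real.sqrt n * R n ω)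
      atTop (fun _ => (0 : ℝ)) := by
  classical
  have h1mem : (1:ℝ) ∈ ({0,1} : Set ℝ) := by norm_num
  have h0mem : (0:ℝ) ∈ ({0,1} : Set ℝ) := by norm_num
  have hm : MeasurableSpace.comap L inferInstance ≤ ‹MeasurableSpace Ω› := hL.comap_le
  -- simplified regression facts
  have hreg1 : P[(fun ω => Y ω * (if A ω = 1 then (1:ℝ) else 0)) |
      MeasurableSpace.comap L inferInstance] =ᵐ[P] fun ω => μ₀ (L ω) 1 * π₀ (L ω) :=
    (hreg 1 h1mem).trans (Filter.EventuallyEq.of_eq (funext fun ω => by ring))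
  have hreg0 : P[(fun ω => Y ω * (if A ω = 0 then (1:ℝ) else 0)) |
      MeasurableSpace.comap L inferInstance] =ᵐ[P] fun ω => μ₀ (L ω) 0 * (1 - π₀ (L ω)) :=
    (hreg 0 h0mem).trans (Filter.EventuallyEq.of_eq (funext fun ω => by ring))
  -- conditional expectation of the indicator of A = 0
  have hIA1meas : Measurable (fun ω' => if A ω' = 1 then (1:ℝ) else 0) :=
    Measurable.ite (hA (measurableSet_singleton 1)) measurable_const measurable_const
  have hIA1int : Integrable (fun ω' => if A ω' = 1 then (1:ℝ) else 0) P :=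
    (integrable_const (1:ℝ)).mono' hIA1meas.aestronglyMeasurable
      (ae_of_all _ fun ω' => by split <;> simp)
  have hps0 : P[(fun ω => if A ω = 0 then (1:ℝ) else 0) |
      MeasurableSpace.comap L inferInstance] =ᵐ[P] fun ω => 1 - π₀ (L ω) := by
    have heq : (fun ω => if A ω = 0 then (1:ℝ) else 0)
        = (fun _ => (1:ℝ)) - (fun ω => if A ω = 1 then (1:ℝ) else 0) := by
      funext ω
      rcases hA01 ω with h | h <;> simp [h, Pi.sub_apply]
    rw [heq]
    refine (condExp_sub (integrable_const 1) hIA1int _).trans ?_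
    rw [condExp_const hm (1:ℝ)]
    exact hps.mono fun ω e => by simp only [Pi.sub_apply, e]
  -- the pointwise bound coming from the second-order remainder identity
  have hle : ∀ (n : ℕ) (ω : Ω), |Real.sqrt n * R n ω| ≤ (2/δ') *
      (((n : ℝ) ^ ((1 : ℝ) / 4)
        * Real.sqrt (∫ l, (πhat n ω l - π₀ l) ^ 2 ∂(Measure.map L P))) *
      ((n : ℝ) ^ ((1 : ℝ) / 4)
        * max (Real.sqrt (∫ l, (μhat n ω l 1 - μ₀ l 1) ^ 2 ∂(Measure.map L P)))
              (Real.sqrt (∫ l, (μhat n ω l 0 - μ₀ l 0) ^ 2 ∂(Measure.map L P))))) := by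
    intro n ω
    have hp : Measurable (fun l => πhat n ω l) :=
      (hπhatmeas n).comp measurable_prodMk_left
    have hm1 : Measurable (fun l => μhat n ω l 1) :=
      (hμhatmeas n 1 h1mem).comp measurable_prodMk_left
    have hm0 : Measurable (fun l => μhat n ω l 0) :=
      (hμhatmeas n 0 h0mem).comp measurable_prodMk_left
    have hμ1meas : Measurable (fun l => μ₀ l 1) :=
      hμ₀.comp (measurable_id.prodMk measurable_const)
    have hμ0meas : Measurable (fun l => μ₀ l 0) :=
      hμ₀.comp (measurable_id.prodMk measurable_const)
    have hb := DR_bound P L A Y hL hA hY hYint π₀ hπ₀ hπ₀01 hps hps0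
      (fun l => μ₀ l 1) (fun l => μ₀ l 0) hμ1meas hμ0meas
      (hμ₀L2 1 h1mem) (hμ₀L2 0 h0mem) hreg1 hreg0 δ' hδ'
      (fun l => πhat n ω l) (fun l => μhat n ω l 1) (fun l => μhat n ω l 0)
      hp hm1 hm0 (hπhatbdd n ω) (hμhatL2 n ω 1 h1mem) (hμhatL2 n ω 0 h0mem)
    have hRb : |R n ω| ≤ (2/δ') *
        (Real.sqrt (∫ l, (πhat n ω l - π₀ l) ^ 2 ∂(Measure.map L P)) *
          max (Real.sqrt (∫ l, (μhat n ω l 1 - μ₀ l 1) ^ 2 ∂(Measure.map L P)))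
              (Real.sqrt (∫ l, (μhat n ω l 0 - μ₀ l 0) ^ 2 ∂(Measure.map L P)))) := by
      rw [hR n ω]; exact hb
    have hsqrt : Real.sqrt (n:ℝ) = (n:ℝ) ^ ((1:ℝ)/4) * (n:ℝ) ^ ((1:ℝ)/4) := by
      rw [← Real.rpow_add' (Nat.cast_nonneg n) (by norm_num : (1:ℝ)/4 + 1/4 ≠ 0),
        Real.sqrt_eq_rpow]
      norm_num
    calc |Real.sqrt n * R n ω| = Real.sqrt n * |R n ω| := by
          rw [abs_mul, abs_of_nonneg (Real.sqrt_nonneg _)]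
      _ ≤ Real.sqrt n * ((2/δ') *
          (Real.sqrt (∫ l, (πhat n ω l - π₀ l) ^ 2 ∂(Measure.map L P)) *
            max (Real.sqrt (∫ l, (μhat n ω l 1 - μ₀ l 1) ^ 2 ∂(Measure.map L P)))
                (Real.sqrt (∫ l, (μhat n ω l 0 - μ₀ l 0) ^ 2 ∂(Measure.map L P))))) :=
          mul_le_mul_of_nonneg_left hRb (Real.sqrt_nonneg _)
      _ = _ := by rw [hsqrt]; ring
  refine tim_aux P (div_pos two_pos hδ') (fun n ω => ?_) (fun n ω => ?_) hle hπrate hμrate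
  · exact mul_nonneg (Real.rpow_nonneg (Nat.cast_nonneg n) _) (Real.sqrt_nonneg _)
  · exact mul_nonneg (Real.rpow_nonneg (Nat.cast_nonneg n) _)
      ((Real.sqrt_nonneg _).trans (le_max_left _ _))
end
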